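/- arXiv:2506.10830 — 8 statements merged into one kernel-verified Lean document; each statement's English description precedes it below -/
import Mathlib

section
/- If x is a nonzero element of the Witt algebra W such that the adjoint action ad x is diagonalizable on W (i.e., W decomposes as a direct sum of eigenspaces of ad x), then x = ξ L_0 for some nonzero scalar ξ ∈ ℂ*. -/
private lemma wittSumLie {W : Type*} [LieRing W] {s : Finset ℤ} (f : ℤ → W) (y : W) :
    ⁅∑ i ∈ s, f i, y⁆ = ∑ i ∈ s, ⁅f i, y⁆ := by
  induction s using Finset.cons_induction with
  | empty => simp
  | cons a s ha ih => rw [Finset.sum_cons, Finset.sum_cons, add_lie, ih]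

private lemma wittLieSum {W : Type*} [LieRing W] {s : Finset ℤ} (f : ℤ → W) (y : W) :
    ⁅y, ∑ i ∈ s, f i⁆ = ∑ i ∈ s, ⁅y, f i⁆ := by
  induction s using Finset.cons_induction with
  | empty => simp
  | cons a s ha ih => rw [Finset.sum_cons, Finset.sum_cons, lie_add, ih]

private lemma wittExpand {W : Type*} [LieRing W] [LieAlgebra ℂ W] (L : Module.Basis ℤ ℂ W)
    (hW : ∀ m n : ℤ, ⁅L m, L n⁆ = ((m - n : ℤ) : ℂ) • L (m + n)) (x v : W) :
    ⁅x, v⁆ = ∑ m ∈ (L.repr x).support, ∑ n ∈ (L.repr v).support,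
      ((L.repr x) m * (L.repr v) n * ((m - n : ℤ) : ℂ)) • L (m + n) := by
  conv_lhs => rw [← L.linearCombination_repr x, ← L.linearCombination_repr v]
  rw [Finsupp.linearCombination_apply, Finsupp.linearCombination_apply, Finsupp.sum, Finsupp.sum,
    wittSumLie]
  refine Finset.sum_congr rfl fun m hm => ?_
  rw [smul_lie, wittLieSum, Finset.smul_sum]
  refine Finset.sum_congr rfl fun n hn => ?_
  rw [lie_smul, hW, smul_smul, smul_smul, mul_comm]

private lemma wittCoeff {W : Type*} [LieRing W] [LieAlgebra ℂ W] (L : Module.Basis ℤ ℂ W)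
    (hW : ∀ m n : ℤ, ⁅L m, L n⁆ = ((m - n : ℤ) : ℂ) • L (m + n)) (x v : W) (M N : ℤ)
    (h : ∀ m ∈ (L.repr x).support, ∀ n ∈ (L.repr v).support, m + n = M + N → m = M ∧ n = N) :
    L.repr ⁅x, v⁆ (M + N) = (L.repr x) M * (L.repr v) N * ((M - N : ℤ) : ℂ) := by
  rw [wittExpand L hW x v]
  simp only [map_sum, map_smul, Module.Basis.repr_self, Finsupp.coe_finset_sum, Finset.sum_apply,
    Finsupp.smul_single, smul_eq_mul, mul_one, Finsupp.single_apply]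
  by_cases hMs : M ∈ (L.repr x).support
  · rw [Finset.sum_eq_single M]
    · rw [Finset.sum_eq_single N]
      · simp
      · intro n hn hne
        rw [if_neg]
        intro he
        exact hne (h M hMs n hn he).2
      · intro hN
        rw [Finsupp.notMem_support_iff.1 hN]
        simp
    · intro m hm hne
      refine Finset.sum_eq_zero fun n hn => ?_
      rw [if_neg]
      intro he
      exact hne (h m hm n hn he).1
    · intro hM
      exact absurd hMs hM
  · rw [Finsupp.notMem_support_iff.1 hMs]
    rw [Finset.sum_eq_zero, zero_mul, zero_mul]
    intro m hm
    refine Finset.sum_eq_zero fun n hn => ?_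
    rw [if_neg]
    intro he
    exact (hMs ((h m hm n hn he).1 ▸ hm))


/-- If `x ≠ 0` in the Witt algebra and `ad x` is diagonalizable (the eigenspaces
of `ad x` span the whole algebra), then `x = ξ • L 0` for some nonzero `ξ`. -/
theorem witt_ad_diagonalizable {W : Type*} [LieRing W] [LieAlgebra ℂ W]
    (L : Module.Basis ℤ ℂ W)
    (hW : ∀ m n : ℤ, ⁅L m, L n⁆ = ((m - n : ℤ) : ℂ) • L (m + n))
    (x : W) (hx : x ≠ 0)
    (hdiag : (⨆ μ : ℂ, Module.End.eigenspace (LieAlgebra.ad ℂ W x) μ) = ⊤) :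
    ∃ ξ : ℂ, ξ ≠ 0 ∧ x = ξ • L 0 := by
  classical
  have hrx : L.repr x ≠ 0 := fun h => hx (by
    have := congrArg L.repr.symm h
    simpa using this)
  have hsupp : (L.repr x).support.Nonempty := Finsupp.support_nonempty_iff.2 hrx
  -- upper bound: no positive indices in the support
  have hub : ∀ m ∈ (L.repr x).support, m ≤ 0 := by
    by_contra hcon
    push_neg at hcon
    obtain ⟨m, hm, hm0⟩ := hcon
    set M := (L.repr x).support.max' hsupp with hMdef
    have hMmem : M ∈ (L.repr x).support := Finset.max'_mem _ _
    have hMub : ∀ k ∈ (L.repr x).support, k ≤ M := fun k hk => Finset.le_max' _ _ hk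
    have hM0 : 0 < M := lt_of_lt_of_le hm0 (hMub m hm)
    have heig : ∀ μ : ℂ, ∀ v ∈ Module.End.eigenspace (LieAlgebra.ad ℂ W x) μ,
        ∀ n, M < n → L.repr v n = 0 := by
      intro μ v hv n hn
      by_contra hvn
      have hvs : (L.repr v).support.Nonempty := ⟨n, Finsupp.mem_support_iff.2 hvn⟩
      set N := (L.repr v).support.max' hvs with hNdef
      have hNub : ∀ k ∈ (L.repr v).support, k ≤ N := fun k hk => Finset.le_max' _ _ hk
      have hNmem : N ∈ (L.repr v).support := Finset.max'_mem _ _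
      have hMN : M < N := lt_of_lt_of_le hn (hNub n (Finsupp.mem_support_iff.2 hvn))
      have hcoef := wittCoeff L hW x v M N (fun m' hm' n' hn' he => by
        have := hMub m' hm'; have := hNub n' hn'; omega)
      have hlie : ⁅x, v⁆ = μ • v := by
        have := Module.End.mem_eigenspace_iff.1 hv
        simpa [LieAlgebra.ad_apply] using this
      have h1 : L.repr v (M + N) = 0 := by
        by_contra h
        have := hNub _ (Finsupp.mem_support_iff.2 h)
        omega
      rw [hlie, map_smul] at hcoef
      simp only [Finsupp.coe_smul, Pi.smul_apply, smul_eq_mul, h1, mul_zero] at hcoef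
      have hc : (L.repr x) M ≠ 0 := Finsupp.mem_support_iff.1 hMmem
      have hd : (L.repr v) N ≠ 0 := Finsupp.mem_support_iff.1 hNmem
      have hMNne : ((M - N : ℤ) : ℂ) ≠ 0 := Int.cast_ne_zero.2 (by omega)
      exact mul_ne_zero (mul_ne_zero hc hd) hMNne hcoef.symm
    have hle : (⨆ μ : ℂ, Module.End.eigenspace (LieAlgebra.ad ℂ W x) μ)
        ≤ LinearMap.ker (L.coord (M + 1)) := by
      refine iSup_le fun μ v hv => LinearMap.mem_ker.2 ?_
      rw [Module.Basis.coord_apply]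
      exact heig μ v hv (M + 1) (by omega)
    have hL : L (M + 1) ∈ LinearMap.ker (L.coord (M + 1)) :=
      hle (hdiag ▸ Submodule.mem_top)
    rw [LinearMap.mem_ker, Module.Basis.coord_apply, Module.Basis.repr_self] at hL
    simp at hL
  -- lower bound: no negative indices in the support
  have hlb : ∀ m ∈ (L.repr x).support, 0 ≤ m := by
    by_contra hcon
    push_neg at hcon
    obtain ⟨m, hm, hm0⟩ := hcon
    set M := (L.repr x).support.min' hsupp with hMdef
    have hMmem : M ∈ (L.repr x).support := Finset.min'_mem _ _
    have hMlb : ∀ k ∈ (L.repr x).support, M ≤ k := fun k hk => Finset.min'_le _ _ hk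
    have hM0 : M < 0 := lt_of_le_of_lt (hMlb m hm) hm0
    have heig : ∀ μ : ℂ, ∀ v ∈ Module.End.eigenspace (LieAlgebra.ad ℂ W x) μ,
        ∀ n, n < M → L.repr v n = 0 := by
      intro μ v hv n hn
      by_contra hvn
      have hvs : (L.repr v).support.Nonempty := ⟨n, Finsupp.mem_support_iff.2 hvn⟩
      set N := (L.repr v).support.min' hvs with hNdef
      have hNlb : ∀ k ∈ (L.repr v).support, N ≤ k := fun k hk => Finset.min'_le _ _ hk
      have hNmem : N ∈ (L.repr v).support := Finset.min'_mem _ _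
      have hMN : N < M := lt_of_le_of_lt (hNlb n (Finsupp.mem_support_iff.2 hvn)) hn
      have hcoef := wittCoeff L hW x v M N (fun m' hm' n' hn' he => by
        have := hMlb m' hm'; have := hNlb n' hn'; omega)
      have hlie : ⁅x, v⁆ = μ • v := by
        have := Module.End.mem_eigenspace_iff.1 hv
        simpa [LieAlgebra.ad_apply] using this
      have h1 : L.repr v (M + N) = 0 := by
        by_contra h
        have := hNlb _ (Finsupp.mem_support_iff.2 h)
        omega
      rw [hlie, map_smul] at hcoef
      simp only [Finsupp.coe_smul, Pi.smul_apply, smul_eq_mul, h1, mul_zero] at hcoef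
      have hc : (L.repr x) M ≠ 0 := Finsupp.mem_support_iff.1 hMmem
      have hd : (L.repr v) N ≠ 0 := Finsupp.mem_support_iff.1 hNmem
      have hMNne : ((M - N : ℤ) : ℂ) ≠ 0 := Int.cast_ne_zero.2 (by omega)
      exact mul_ne_zero (mul_ne_zero hc hd) hMNne hcoef.symm
    have hle : (⨆ μ : ℂ, Module.End.eigenspace (LieAlgebra.ad ℂ W x) μ)
        ≤ LinearMap.ker (L.coord (M - 1)) := by
      refine iSup_le fun μ v hv => LinearMap.mem_ker.2 ?_
      rw [Module.Basis.coord_apply]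
      exact heig μ v hv (M - 1) (by omega)
    have hL : L (M - 1) ∈ LinearMap.ker (L.coord (M - 1)) :=
      hle (hdiag ▸ Submodule.mem_top)
    rw [LinearMap.mem_ker, Module.Basis.coord_apply, Module.Basis.repr_self] at hL
    simp at hL
  -- conclude
  refine ⟨L.repr x 0, ?_, ?_⟩
  · intro h0
    apply hrx
    ext n
    by_cases hn : n = 0
    · simpa [hn] using h0
    · by_contra hne
      have hmem : n ∈ (L.repr x).support := Finsupp.mem_support_iff.2 (by simpa using hne)
      exact hn (le_antisymm (hub n hmem) (hlb n hmem))
  · apply L.repr.injective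
    rw [map_smul, Module.Basis.repr_self, Finsupp.smul_single, smul_eq_mul, mul_one]
    ext n
    by_cases hn : n = 0
    · simp [hn]
    · rw [Finsupp.single_apply, if_neg (Ne.symm hn)]
      by_contra hne
      have hmem : n ∈ (L.repr x).support := Finsupp.mem_support_iff.2 hne
      exact hn (le_antisymm (hub n hmem) (hlb n hmem))
end

section
/- The center of the Lie algebra L is the two-dimensional space ℂh_0 ⊕ ℂc. -/
/-- Index type for the basis of the deformed Heisenberg–Virasoro algebra `L`:
elements `d m`, `h n` (`m n : ℤ`) and the central element `c`. -/
inductive DHVIdx : Type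
  | d : ℤ → DHVIdx
  | h : ℤ → DHVIdx
  | c : DHVIdx

/-- The center of the deformed Heisenberg–Virasoro algebra is the
two-dimensional space `ℂ h₀ ⊕ ℂ c`. -/
theorem dhv_center {g : Type*} [LieRing g] [LieAlgebra ℂ g]
    (B : Module.Basis DHVIdx ℂ g)
    (hdd : ∀ m n : ℤ, ⁅B (DHVIdx.d m), B (DHVIdx.d n)⁆ =
      ((m - n : ℤ) : ℂ) • B (DHVIdx.d (m + n)) +
      ((m - n : ℤ) : ℂ) • B (DHVIdx.h (m + n)) +
      (if m + n = 0 then ((m : ℂ) ^ 3 - (m : ℂ)) / 12 else 0) • B DHVIdx.c)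
    (hdh : ∀ m n : ℤ, ⁅B (DHVIdx.d m), B (DHVIdx.h n)⁆ =
      ((-n : ℤ) : ℂ) • B (DHVIdx.h (m + n)))
    (hhh : ∀ m n : ℤ, ⁅B (DHVIdx.h m), B (DHVIdx.h n)⁆ = 0)
    (hcen : ∀ x : g, ⁅x, B DHVIdx.c⁆ = 0) :
    {x : g | ∀ y : g, ⁅x, y⁆ = 0} =
      (Submodule.span ℂ ({B (DHVIdx.h 0), B DHVIdx.c} : Set g) : Set g) ∧
    Module.finrank ℂ
      (Submodule.span ℂ ({B (DHVIdx.h 0), B DHVIdx.c} : Set g)) = 2 := by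
  classical
  have hc' : ∀ y : g, ⁅B DHVIdx.c, y⁆ = 0 := fun y => by
    rw [← lie_skew, hcen, neg_zero]
  have hh0 : ∀ y : g, ⁅B (DHVIdx.h 0), y⁆ = 0 := by
    have had : LieAlgebra.ad ℂ g (B (DHVIdx.h 0)) = 0 := by
      apply B.ext
      intro i
      cases i with
      | d m =>
          have e : ⁅B (DHVIdx.h 0), B (DHVIdx.d m)⁆ = -⁅B (DHVIdx.d m), B (DHVIdx.h 0)⁆ :=
            (lie_skew _ _).symm
          simp [LieAlgebra.ad_apply, e, hdh]
      | h n => simp [LieAlgebra.ad_apply, hhh]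
      | c => simp [LieAlgebra.ad_apply, hcen]
    intro y
    have := LinearMap.congr_fun had y
    simpa [LieAlgebra.ad_apply] using this
  constructor
  · ext x
    simp only [Set.mem_setOf_eq, SetLike.mem_coe]
    constructor
    · intro hx
      have key1 : ∀ m : ℤ,
          (B.coord (DHVIdx.h (m + 1))) ∘ₗ (-(LieAlgebra.ad ℂ g (B (DHVIdx.h 1))))
            = -(B.coord (DHVIdx.d m)) := by
        intro m
        apply B.ext
        intro i
        cases i with
        | d k =>
            simp only [LinearMap.coe_comp, Function.comp_apply, LinearMap.neg_apply,
              LieAlgebra.ad_apply, lie_skew, hdh, Module.Basis.coord_apply, map_smul,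
              Module.Basis.repr_self, Finsupp.smul_single, smul_eq_mul, mul_one,
              Finsupp.single_apply]
            by_cases h : k = m
            · subst h; simp
            · have h1 : k + 1 ≠ m + 1 := by omega
              simp [h, h1]
        | h k =>
            simp [LinearMap.coe_comp, Function.comp_apply, LinearMap.neg_apply,
              LieAlgebra.ad_apply, lie_skew, hhh, Module.Basis.coord_apply,
              Module.Basis.repr_self, Finsupp.single_apply]
        | c =>
            simp [LinearMap.coe_comp, Function.comp_apply, LinearMap.neg_apply,
              LieAlgebra.ad_apply, lie_skew, hcen, Module.Basis.coord_apply,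
              Module.Basis.repr_self, Finsupp.single_apply]
      have hrd : ∀ m : ℤ, B.repr x (DHVIdx.d m) = 0 := by
        intro m
        have h0 := LinearMap.congr_fun (key1 m) x
        simp only [LinearMap.coe_comp, Function.comp_apply, LinearMap.neg_apply,
          LieAlgebra.ad_apply, lie_skew, hx, map_zero, Module.Basis.coord_apply,
          Finsupp.coe_zero, Pi.zero_apply] at h0
        have := h0.symm
        simpa [neg_eq_zero] using this
      have key2 : ∀ n : ℤ,
          (B.coord (DHVIdx.h n)) ∘ₗ (-(LieAlgebra.ad ℂ g (B (DHVIdx.d 0))))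
            = (n : ℂ) • B.coord (DHVIdx.h n) + (n : ℂ) • B.coord (DHVIdx.d n) := by
        intro n
        apply B.ext
        intro i
        cases i with
        | d k =>
            simp only [LinearMap.coe_comp, Function.comp_apply, LinearMap.neg_apply,
              LieAlgebra.ad_apply, lie_skew, hdd, LinearMap.add_apply,
              LinearMap.smul_apply, Module.Basis.coord_apply, map_add, map_smul,
              Module.Basis.repr_self, Finsupp.smul_single, Finsupp.coe_add, Pi.add_apply,
              Finsupp.single_apply, smul_eq_mul, mul_one, add_zero, sub_zero]
            by_cases h : k = n
            · subst h; simp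
            · have h1 : ¬ (DHVIdx.h (k + 0) = DHVIdx.h n) := by
                simp; omega
              have h2 : ¬ (DHVIdx.d (k + 0) = DHVIdx.h n) := by simp
              have h3 : ¬ (DHVIdx.c = DHVIdx.h n) := by simp
              have h4 : n ≠ k := fun hc => h hc.symm
              simp [Finsupp.single_apply, h, h4, h1, h2, h3]
        | h k =>
            have e : ⁅B (DHVIdx.h k), B (DHVIdx.d 0)⁆ = -⁅B (DHVIdx.d 0), B (DHVIdx.h k)⁆ :=
              (lie_skew _ _).symm
            simp only [LinearMap.coe_comp, Function.comp_apply, LinearMap.neg_apply,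
              LieAlgebra.ad_apply, lie_skew, e, hdh, LinearMap.add_apply,
              LinearMap.smul_apply, Module.Basis.coord_apply, map_neg, map_smul,
              Module.Basis.repr_self, Finsupp.smul_single, Finsupp.coe_neg, Pi.neg_apply,
              Finsupp.single_apply, smul_eq_mul, neg_neg, zero_add]
            by_cases h : k = n
            · subst h; simp
            · have h4 : n ≠ k := fun hc => h hc.symm
              simp [h, h4]
        | c =>
            simp [LinearMap.coe_comp, Function.comp_apply, LinearMap.neg_apply,
              LieAlgebra.ad_apply, hc', hcen, Module.Basis.coord_apply, Module.Basis.repr_self,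
              Finsupp.single_apply]
      have hrh : ∀ n : ℤ, n ≠ 0 → B.repr x (DHVIdx.h n) = 0 := by
        intro n hn
        have h0 := LinearMap.congr_fun (key2 n) x
        simp only [LinearMap.coe_comp, Function.comp_apply, LinearMap.neg_apply,
          LieAlgebra.ad_apply, lie_skew, hx, map_zero, LinearMap.add_apply,
          LinearMap.smul_apply, Module.Basis.coord_apply, smul_eq_mul, hrd, mul_zero,
          add_zero, Finsupp.coe_zero, Pi.zero_apply] at h0
        have hn' : (n : ℂ) ≠ 0 := Int.cast_ne_zero.mpr hn
        have := h0.symm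
        rcases mul_eq_zero.mp this with h | h
        · exact absurd h hn'
        · exact h
      rw [Submodule.mem_span_pair]
      refine ⟨B.repr x (DHVIdx.h 0), B.repr x DHVIdx.c, ?_⟩
      apply B.repr.injective
      ext i
      cases i with
      | d m => simp [Finsupp.single_apply, hrd]
      | h n =>
          by_cases h : n = 0
          · subst h; simp [Finsupp.single_apply]
          · have h' : ¬ ((0 : ℤ) = n) := fun hc => h hc.symm
            simp [Finsupp.single_apply, hrh n h, h, h']
      | c => simp [Finsupp.single_apply]
    · intro hx y
      rw [Submodule.mem_span_pair] at hx
      obtain ⟨p, q, rfl⟩ := hx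
      simp [add_lie, smul_lie, hh0, hc']
  · have hinj : Function.Injective (![DHVIdx.h 0, DHVIdx.c] : Fin 2 → DHVIdx) := by
      intro i j hij
      fin_cases i <;> fin_cases j <;> simp_all
    have hli : LinearIndependent ℂ
        (fun i => B ((![DHVIdx.h 0, DHVIdx.c] : Fin 2 → DHVIdx) i)) :=
      B.linearIndependent.comp _ hinj
    have hrange : Set.range (fun i => B ((![DHVIdx.h 0, DHVIdx.c] : Fin 2 → DHVIdx) i))
        = ({B (DHVIdx.h 0), B DHVIdx.c} : Set g) := by
      ext z
      simp [Fin.exists_fin_two, eq_comm]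
    rw [← hrange, finrank_span_eq_card hli]
    simp
end

section
/- The subspace I of L spanned by {h_m, c | m ∈ ℤ} is an ideal of L, and it is the unique maximal (proper) ideal of L. -/
/-- Bracket on the right with a fixed element, as a linear map. -/
def dhvRbrkt {R g : Type*} [CommRing R] [LieRing g] [LieAlgebra R g] (v : g) : g →ₗ[R] g where
  toFun y := ⁅y, v⁆
  map_add' a b := add_lie a b v
  map_smul' t a := smul_lie t a v

@[simp] lemma dhvRbrkt_apply {R g : Type*} [CommRing R] [LieRing g] [LieAlgebra R g]
    (v y : g) : dhvRbrkt (R := R) v y = ⁅y, v⁆ := rfl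

/-- The subspace `I` spanned by `{h m, c}` is an ideal of `L`, proper, and every
proper ideal of `L` is contained in `I` (so `I` is the unique maximal proper ideal). -/
theorem dhv_unique_maximal_ideal
 {g : Type*} [LieRing g] [LieAlgebra ℂ g]
    (B : Module.Basis DHVIdx ℂ g)
    (hdd : ∀ m n : ℤ, ⁅B (DHVIdx.d m), B (DHVIdx.d n)⁆ =
      ((m - n : ℤ) : ℂ) • B (DHVIdx.d (m + n)) +
      ((m - n : ℤ) : ℂ) • B (DHVIdx.h (m + n)) +
      (if m + n = 0 then ((m : ℂ) ^ 3 - (m : ℂ)) / 12 else 0) • B DHVIdx.c)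
    (hdh : ∀ m n : ℤ, ⁅B (DHVIdx.d m), B (DHVIdx.h n)⁆ =
      ((-n : ℤ) : ℂ) • B (DHVIdx.h (m + n)))
    (hhh : ∀ m n : ℤ, ⁅B (DHVIdx.h m), B (DHVIdx.h n)⁆ = 0)
    (hcen : ∀ x : g, ⁅x, B DHVIdx.c⁆ = 0)
    (I : Submodule ℂ g)
    (hI : I = Submodule.span ℂ
      ((Set.range fun n : ℤ => B (DHVIdx.h n)) ∪ {B DHVIdx.c})) :
    (∀ x ∈ I, ∀ y : g, ⁅y, x⁆ ∈ I) ∧ I ≠ ⊤ ∧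
      ∀ J : LieIdeal ℂ g, J.toSubmodule ≠ ⊤ → J.toSubmodule ≤ I := by
  have hIs : I = Submodule.span ℂ (B '' (Set.range DHVIdx.h ∪ {DHVIdx.c})) := by
    rw [hI, Set.image_union, Set.image_singleton, ← Set.range_comp]
    rfl
  have hmemI : ∀ x : g, x ∈ I ↔ ∀ m : ℤ, B.repr x (DHVIdx.d m) = 0 := by
    intro x
    rw [hIs, Module.Basis.mem_span_image]
    constructor
    · intro hsub m
      by_contra hne
      have h1 : DHVIdx.d m ∈ (B.repr x).support := Finsupp.mem_support_iff.2 hne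
      have h2 := hsub h1
      simp at h2
    · intro hz i hi
      cases i with
      | d m => exact absurd (Finsupp.mem_support_iff.1 hi) (by simp [hz m])
      | h n => exact Or.inl ⟨n, rfl⟩
      | c => exact Or.inr rfl
  -- coordinate action of ad (d 0)
  have hA : ∀ (n : ℤ) (y : g), B.repr ⁅B (DHVIdx.d 0), y⁆ (DHVIdx.d n)
      = (-(n : ℂ)) * B.repr y (DHVIdx.d n) := by
    intro n y
    have h1 : (B.coord (DHVIdx.d n)) ∘ₗ (LieAlgebra.ad ℂ g (B (DHVIdx.d 0)) : g →ₗ[ℂ] g)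
        = (-(n : ℂ)) • (B.coord (DHVIdx.d n)) := by
      apply B.ext
      intro i
      cases i with
      | d j =>
        simp only [LinearMap.comp_apply, LieAlgebra.ad_apply, LinearMap.smul_apply,
          Module.Basis.coord_apply, smul_eq_mul]
        rw [hdd 0 j]
        simp only [map_add, map_smul, Module.Basis.repr_self, Finsupp.add_apply, Finsupp.smul_apply,
          Finsupp.single_apply, smul_eq_mul, zero_add]
        by_cases hj : j = n
        · subst hj; simp
        · simp [hj, Ne.symm hj]
      | h j =>
        simp only [LinearMap.comp_apply, LieAlgebra.ad_apply, LinearMap.smul_apply,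
          Module.Basis.coord_apply, smul_eq_mul]
        rw [hdh 0 j]
        simp [Module.Basis.repr_self, Finsupp.single_apply]
      | c =>
        simp only [LinearMap.comp_apply, LieAlgebra.ad_apply, LinearMap.smul_apply,
          Module.Basis.coord_apply, smul_eq_mul]
        rw [hcen]
        simp
    have := LinearMap.congr_fun h1 y
    simpa [Module.Basis.coord_apply] using this
  have hhI : ∀ n : ℤ, B (DHVIdx.h n) ∈ I := fun n =>
    hI ▸ Submodule.subset_span (Or.inl ⟨n, rfl⟩)
  have hcI : B DHVIdx.c ∈ I := hI ▸ Submodule.subset_span (Or.inr rfl)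
  have hch : ∀ n : ℤ, ⁅B DHVIdx.c, B (DHVIdx.h n)⁆ = 0 := by
    intro n
    rw [← lie_skew, hcen (B (DHVIdx.h n)), neg_zero]
  have hlie_h : ∀ (y : g) (n : ℤ), ⁅y, B (DHVIdx.h n)⁆ ∈ I := by
    intro y n
    have hy : y ∈ Submodule.span ℂ (Set.range B) := by rw [B.span_eq]; trivial
    have hle : Submodule.span ℂ (Set.range B) ≤
        Submodule.comap (dhvRbrkt (R := ℂ) (B (DHVIdx.h n))) I := by
      rw [Submodule.span_le]
      rintro _ ⟨i, rfl⟩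
      cases i with
      | d m =>
        simp only [Set.mem_preimage, SetLike.mem_coe, Submodule.mem_comap, dhvRbrkt_apply]
        rw [hdh m n]
        exact I.smul_mem _ (hhI _)
      | h m =>
        simp only [Set.mem_preimage, SetLike.mem_coe, Submodule.mem_comap, dhvRbrkt_apply]
        rw [hhh m n]
        exact I.zero_mem
      | c =>
        simp only [Set.mem_preimage, SetLike.mem_coe, Submodule.mem_comap, dhvRbrkt_apply]
        rw [hch n]
        exact I.zero_mem
    exact hle hy
  have part1 : ∀ x ∈ I, ∀ y : g, ⁅y, x⁆ ∈ I := by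
    intro x hx y
    have hle : I ≤ Submodule.comap (LieAlgebra.ad ℂ g y : g →ₗ[ℂ] g) I := by
      nth_rewrite 1 [hI]
      rw [Submodule.span_le]
      rintro _ (⟨n, rfl⟩ | rfl)
      · simpa [LieAlgebra.ad_apply] using hlie_h y n
      · simp [LieAlgebra.ad_apply, hcen y]
    simpa [LieAlgebra.ad_apply] using hle hx
  have hIh0 : ∀ x ∈ I, ∀ n : ℤ, ⁅x, B (DHVIdx.h n)⁆ = 0 := by
    intro x hx n
    have hle : I ≤ LinearMap.ker (dhvRbrkt (R := ℂ) (B (DHVIdx.h n))) := by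
      rw [hI, Submodule.span_le]
      rintro _ (⟨m, rfl⟩ | rfl)
      · simp [LinearMap.mem_ker, hhh m n]
      · simp [LinearMap.mem_ker, hch n]
    simpa using hle hx
  have hIc : ∀ x ∈ I, ∀ M : Submodule ℂ g, (∀ n : ℤ, B (DHVIdx.h n) ∈ M) →
      x - (B.repr x DHVIdx.c) • B DHVIdx.c ∈ M := by
    intro x hx M hM
    have hmem : x - (B.repr x DHVIdx.c) • B DHVIdx.c ∈
        Submodule.span ℂ (B '' Set.range DHVIdx.h) := by
      rw [Module.Basis.mem_span_image]
      intro i hi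
      rw [Finset.mem_coe, Finsupp.mem_support_iff] at hi
      cases i with
      | d m =>
        exfalso; apply hi
        simp [map_sub, map_smul, Module.Basis.repr_self, Finsupp.single_apply, (hmemI x).1 hx m]
      | h n => exact ⟨n, rfl⟩
      | c =>
        exfalso; apply hi
        simp [map_sub, map_smul, Module.Basis.repr_self]
    refine Submodule.span_le.2 ?_ hmem
    rintro _ ⟨_, ⟨n, rfl⟩, rfl⟩
    exact hM n
  have part2 : I ≠ ⊤ := by
    intro htop
    have h1 : B (DHVIdx.d 0) ∈ I := htop ▸ Submodule.mem_top
    have h2 := (hmemI _).1 h1 0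
    simp [Module.Basis.repr_self] at h2
  -- Part 3
  have part3 : ∀ J : LieIdeal ℂ g, J.toSubmodule ≠ ⊤ → J.toSubmodule ≤ I := by
    intro J hJ
    by_contra hnle
    obtain ⟨x, hxJ', hxI⟩ := SetLike.not_le_iff_exists.1 hnle
    have hxJ : x ∈ J := hxJ'
    have key : ∀ T : Finset ℤ, ∀ x ∈ J, ∃ y ∈ J, ∀ n : ℤ,
        B.repr y (DHVIdx.d n) = (∏ m ∈ T, ((m : ℂ) - n)) * B.repr x (DHVIdx.d n) := by
      intro T
      induction T using Finset.induction_on with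
      | empty => intro x hx; exact ⟨x, hx, fun n => by simp⟩
      | @insert a T' ha ih =>
        intro x hx
        obtain ⟨y, hyJ, hy⟩ := ih x hx
        refine ⟨⁅B (DHVIdx.d 0), y⁆ + (a : ℂ) • y,
          add_mem (J.lie_mem hyJ) (J.smul_mem _ hyJ), ?_⟩
        intro n
        rw [map_add, map_smul, Finsupp.add_apply, Finsupp.smul_apply, hA n y, hy n,
          Finset.prod_insert ha, smul_eq_mul]
        ring
    have hdinj : Function.Injective DHVIdx.d := fun a b h => by cases h; rfl
    set T : Finset ℤ := (B.repr x).support.preimage DHVIdx.d hdinj.injOn with hT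
    have hmemT : ∀ n : ℤ, n ∈ T ↔ B.repr x (DHVIdx.d n) ≠ 0 := by
      intro n; rw [hT, Finset.mem_preimage, Finsupp.mem_support_iff]
    obtain ⟨k, hk⟩ : ∃ k : ℤ, B.repr x (DHVIdx.d k) ≠ 0 := by
      by_contra hc; push_neg at hc; exact hxI ((hmemI x).2 hc)
    obtain ⟨y, hyJ, hy⟩ := key (T.erase k) x hxJ
    have hPne : (∏ m ∈ T.erase k, ((m : ℂ) - (k : ℂ))) ≠ 0 := by
      apply Finset.prod_ne_zero_iff.2
      intro m hm h0
      exact (Finset.mem_erase.1 hm).1 (by exact_mod_cast sub_eq_zero.1 h0)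
    have hbne : B.repr y (DHVIdx.d k) ≠ 0 := by
      rw [hy k]; exact mul_ne_zero hPne hk
    have hyn : ∀ n : ℤ, n ≠ k → B.repr y (DHVIdx.d n) = 0 := by
      intro n hn
      rw [hy n]
      by_cases hnT : n ∈ T
      · have hzero : (∏ m ∈ T.erase k, ((m : ℂ) - (n : ℂ))) = 0 :=
          Finset.prod_eq_zero (Finset.mem_erase.2 ⟨hn, hnT⟩) (sub_self _)
        rw [hzero, zero_mul]
      · have h0 : B.repr x (DHVIdx.d n) = 0 := by
          by_contra h; exact hnT ((hmemT n).2 h)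
        rw [h0, mul_zero]
    set b : ℂ := B.repr y (DHVIdx.d k) with hbdef
    set z : g := b⁻¹ • y with hzdef
    have hzJ : z ∈ J := J.smul_mem _ hyJ
    have hzI : z - B (DHVIdx.d k) ∈ I := by
      rw [hmemI]
      intro m
      by_cases hm : m = k
      · subst hm
        simp [hzdef, Module.Basis.repr_self, Finsupp.single_apply, ← hbdef, inv_mul_cancel₀ hbne]
      · simp [hzdef, Module.Basis.repr_self, Finsupp.single_apply, hm, Ne.symm hm, hyn m hm]
    have hCp : ∀ p : ℤ, p ≠ 2 * k → ∃ u ∈ J, u - B (DHVIdx.d p) ∈ I := by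
      intro p hp
      set m : ℤ := p - k with hm
      have hmk : m ≠ k := by omega
      have hmkC : ((m : ℂ) - (k : ℂ)) ≠ 0 := by
        intro h0; exact hmk (by exact_mod_cast sub_eq_zero.1 h0)
      refine ⟨((m : ℂ) - (k : ℂ))⁻¹ • ⁅B (DHVIdx.d m), z⁆,
        J.smul_mem _ (J.lie_mem hzJ), ?_⟩
      have hsplit : ⁅B (DHVIdx.d m), z⁆ =
          ((m - k : ℤ) : ℂ) • B (DHVIdx.d (m + k)) +
          (((m - k : ℤ) : ℂ) • B (DHVIdx.h (m + k)) +
          (if m + k = 0 then ((m : ℂ) ^ 3 - (m : ℂ)) / 12 else 0) • B DHVIdx.c +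
          ⁅B (DHVIdx.d m), z - B (DHVIdx.d k)⁆) := by
        conv_lhs => rw [show z = B (DHVIdx.d k) + (z - B (DHVIdx.d k)) by abel]
        rw [lie_add, hdd m k]
        abel
      have hiI : ((m - k : ℤ) : ℂ) • B (DHVIdx.h (m + k)) +
          (if m + k = 0 then ((m : ℂ) ^ 3 - (m : ℂ)) / 12 else 0) • B DHVIdx.c +
          ⁅B (DHVIdx.d m), z - B (DHVIdx.d k)⁆ ∈ I :=
        I.add_mem (I.add_mem (I.smul_mem _ (hhI _)) (I.smul_mem _ hcI)) (part1 _ hzI _)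
      have heq : ((m : ℂ) - (k : ℂ))⁻¹ • ⁅B (DHVIdx.d m), z⁆ - B (DHVIdx.d p) =
          ((m : ℂ) - (k : ℂ))⁻¹ • (((m - k : ℤ) : ℂ) • B (DHVIdx.h (m + k)) +
          (if m + k = 0 then ((m : ℂ) ^ 3 - (m : ℂ)) / 12 else 0) • B DHVIdx.c +
          ⁅B (DHVIdx.d m), z - B (DHVIdx.d k)⁆) := by
        rw [hsplit, smul_add, smul_smul]
        have h1 : ((m : ℂ) - (k : ℂ))⁻¹ * ((m - k : ℤ) : ℂ) = 1 := by
          push_cast; exact inv_mul_cancel₀ hmkC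
        rw [h1, one_smul, show m + k = p by omega]
        abel
      rw [heq]
      exact I.smul_mem _ hiI
    have hCall : ∀ p : ℤ, p = k ∨ p ≠ 2 * k → ∃ u ∈ J, u - B (DHVIdx.d p) ∈ I := by
      rintro p (rfl | hp)
      · exact ⟨z, hzJ, hzI⟩
      · exact hCp p hp
    have hstepH : ∀ p n : ℤ, n ≠ 0 → p ≠ 2 * k → B (DHVIdx.h (p + n)) ∈ J := by
      intro p n hn hp
      obtain ⟨u, huJ, hui⟩ := hCp p hp
      have hbr : ⁅u, B (DHVIdx.h n)⁆ = ((-n : ℤ) : ℂ) • B (DHVIdx.h (p + n)) := by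
        conv_lhs => rw [show u = B (DHVIdx.d p) + (u - B (DHVIdx.d p)) by abel]
        rw [add_lie, hdh p n, hIh0 _ hui n, add_zero]
      have hJbr : ⁅u, B (DHVIdx.h n)⁆ ∈ J := by
        rw [← lie_skew]
        exact neg_mem (J.lie_mem huJ)
      have hnC : ((-n : ℤ) : ℂ) ≠ 0 := by
        exact_mod_cast neg_ne_zero.2 hn
      have h2 : B (DHVIdx.h (p + n)) = ((-n : ℤ) : ℂ)⁻¹ • ⁅u, B (DHVIdx.h n)⁆ := by
        rw [hbr, smul_smul, inv_mul_cancel₀ hnC, one_smul]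
      rw [h2]; exact J.smul_mem _ hJbr
    have hhJ : ∀ j : ℤ, B (DHVIdx.h j) ∈ J := by
      intro j
      by_cases h1 : j - 1 = 2 * k
      · have h2 := hstepH (j - 2) 2 (by norm_num) (by omega)
        rwa [show j - 2 + 2 = j by omega] at h2
      · have h2 := hstepH (j - 1) 1 one_ne_zero (by omega)
        rwa [show j - 1 + 1 = j by omega] at h2
    have hdc : ∀ p : ℤ, p = k ∨ p ≠ 2 * k →
        ∃ lam : ℂ, B (DHVIdx.d p) + lam • B DHVIdx.c ∈ J := by
      intro p hp
      obtain ⟨u, huJ, hui⟩ := hCall p hp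
      refine ⟨B.repr (u - B (DHVIdx.d p)) DHVIdx.c, ?_⟩
      have h1 : (u - B (DHVIdx.d p)) -
          (B.repr (u - B (DHVIdx.d p)) DHVIdx.c) • B DHVIdx.c ∈ J.toSubmodule :=
        hIc _ hui J.toSubmodule (fun n => hhJ n)
      have h2 : B (DHVIdx.d p) + (B.repr (u - B (DHVIdx.d p)) DHVIdx.c) • B DHVIdx.c =
          u - ((u - B (DHVIdx.d p)) -
          (B.repr (u - B (DHVIdx.d p)) DHVIdx.c) • B DHVIdx.c) := by
        abel
      rw [h2]
      exact sub_mem huJ h1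
    obtain ⟨l0, hl0⟩ := hdc 0 (by omega)
    have hstepC : ∀ m : ℤ, (-m : ℤ) ≠ 2 * k →
        ((m : ℂ) ^ 3 - (m : ℂ)) / 12 - 2 * (m : ℂ) * l0 ≠ 0 → B DHVIdx.c ∈ J := by
      intro m hm hne
      obtain ⟨l1, hl1⟩ := hdc (-m) (Or.inr hm)
      have hbr : ⁅B (DHVIdx.d m), B (DHVIdx.d (-m)) + l1 • B DHVIdx.c⁆ =
          ((2 * m : ℤ) : ℂ) • B (DHVIdx.d 0) + ((2 * m : ℤ) : ℂ) • B (DHVIdx.h 0) +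
          (((m : ℂ) ^ 3 - (m : ℂ)) / 12) • B DHVIdx.c := by
        rw [lie_add, lie_smul, hcen, smul_zero, add_zero, hdd m (-m)]
        rw [show m - -m = 2 * m by ring, show m + -m = 0 by ring, if_pos rfl]
      have hmem : ⁅B (DHVIdx.d m), B (DHVIdx.d (-m)) + l1 • B DHVIdx.c⁆ ∈ J :=
        J.lie_mem hl1
      rw [hbr] at hmem
      have h2 : (((m : ℂ) ^ 3 - (m : ℂ)) / 12 - 2 * (m : ℂ) * l0) • B DHVIdx.c =
          (((2 * m : ℤ) : ℂ) • B (DHVIdx.d 0) + ((2 * m : ℤ) : ℂ) • B (DHVIdx.h 0) +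
          (((m : ℂ) ^ 3 - (m : ℂ)) / 12) • B DHVIdx.c)
          - ((2 * m : ℤ) : ℂ) • (B (DHVIdx.d 0) + l0 • B DHVIdx.c)
          - ((2 * m : ℤ) : ℂ) • B (DHVIdx.h 0) := by
        push_cast
        module
      have h3 : (((m : ℂ) ^ 3 - (m : ℂ)) / 12 - 2 * (m : ℂ) * l0) • B DHVIdx.c ∈ J := by
        rw [h2]
        exact sub_mem (sub_mem hmem (J.smul_mem _ hl0)) (J.smul_mem _ (hhJ 0))
      have h4 := J.smul_mem (((m : ℂ) ^ 3 - (m : ℂ)) / 12 - 2 * (m : ℂ) * l0)⁻¹ h3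
      rwa [smul_smul, inv_mul_cancel₀ hne, one_smul] at h4
    have hcJ : B DHVIdx.c ∈ J := by
      by_cases h3 : ((3 : ℤ) : ℂ) ^ 3 / 12 - ((3 : ℤ) : ℂ) / 12 - 2 * ((3 : ℤ) : ℂ) * l0 ≠ 0
      · refine hstepC 3 (by omega) ?_
        intro h0
        apply h3
        rw [← h0]
        push_cast
        ring
      · push_neg at h3
        refine hstepC 5 (by omega) ?_
        have hl0v : l0 = 1 / 3 := by
          push_cast at h3
          linear_combination (-1 / 6 : ℂ) * h3
        rw [hl0v]
        push_cast
        norm_num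
    have hdJ' : ∀ p : ℤ, p = k ∨ p ≠ 2 * k → B (DHVIdx.d p) ∈ J := by
      intro p hp
      obtain ⟨lam, hlam⟩ := hdc p hp
      have h1 : B (DHVIdx.d p) =
          (B (DHVIdx.d p) + lam • B DHVIdx.c) - lam • B DHVIdx.c := by abel
      rw [h1]
      exact sub_mem hlam (J.smul_mem _ hcJ)
    have hdJ : ∀ p : ℤ, B (DHVIdx.d p) ∈ J := by
      have h2k : k ≠ 0 → B (DHVIdx.d (2 * k)) ∈ J := by
        intro hk0
        obtain ⟨j, hj0, hj1, hj2, hj3⟩ :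
            ∃ j : ℤ, j ≠ 0 ∧ (-j) ≠ 2 * k ∧ 2 * k + 2 * j ≠ 0 ∧ 2 * k + j ≠ 2 * k := by
          by_cases hk1 : k = -1
          · exact ⟨3, by omega, by omega, by omega, by omega⟩
          · exact ⟨1, by omega, by omega, by omega, by omega⟩
        have hu2 : B (DHVIdx.d (-j)) ∈ J := hdJ' _ (Or.inr hj1)
        have hbr : ⁅B (DHVIdx.d (2 * k + j)), B (DHVIdx.d (-j))⁆ ∈ J := J.lie_mem hu2
        rw [hdd (2 * k + j) (-j), show 2 * k + j + -j = 2 * k by omega,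
          if_neg (show ¬(2 * k = 0) by omega), zero_smul, add_zero] at hbr
        have hcoef : ((2 * k + j - -j : ℤ) : ℂ) ≠ 0 := by
          exact_mod_cast (show (2 * k + j - -j : ℤ) ≠ 0 by omega)
        have h5 : B (DHVIdx.d (2 * k)) = ((2 * k + j - -j : ℤ) : ℂ)⁻¹ •
            ((((2 * k + j - -j : ℤ) : ℂ) • B (DHVIdx.d (2 * k)) +
              ((2 * k + j - -j : ℤ) : ℂ) • B (DHVIdx.h (2 * k))) -
              ((2 * k + j - -j : ℤ) : ℂ) • B (DHVIdx.h (2 * k))) := by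
          rw [add_sub_cancel_right, smul_smul, inv_mul_cancel₀ hcoef, one_smul]
        rw [h5]
        exact J.smul_mem _ (sub_mem hbr (J.smul_mem _ (hhJ _)))
      intro p
      by_cases hp : p = 2 * k
      · subst hp
        by_cases hk0 : k = 0
        · exact hdJ' _ (Or.inl (by omega))
        · exact h2k hk0
      · exact hdJ' _ (Or.inr hp)
    have htop : (⊤ : Submodule ℂ g) ≤ J.toSubmodule := by
      rw [← B.span_eq, Submodule.span_le]
      rintro _ ⟨i, rfl⟩
      cases i with
      | d m => exact hdJ m
      | h n => exact hhJ n
      | c => exact hcJ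
    exact hJ (top_le_iff.1 htop)
  exact ⟨part1, part2, part3⟩
end

section
/- In the Lie algebra L, there do not exist nonzero α, β ∈ ℂ*, q ∈ ℤ*, ζ ∈ ℂ*, scalars α_i, β_j (finitely many nonzero) and μ, η ∈ ℂ such that [x, y] = ζ y, where x = α d_0 + Σ_i α_i h_i + μ c and y = β d_q + Σ_j β_j h_j + η c. -/
/-- There are no elements `x = α d₀ + Σ αᵢ hᵢ + μ c` and `y = β d_q + Σ βⱼ hⱼ + η c`
with `α, β, ζ ∈ ℂ*`, `q ∈ ℤ*`, satisfying `⁅x, y⁆ = ζ y`. -/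
theorem dhv_no_eigenvector
 {g : Type*} [LieRing g] [LieAlgebra ℂ g]
    (B : Module.Basis DHVIdx ℂ g)
    (hdd : ∀ m n : ℤ, ⁅B (DHVIdx.d m), B (DHVIdx.d n)⁆ =
      ((m - n : ℤ) : ℂ) • B (DHVIdx.d (m + n)) +
      ((m - n : ℤ) : ℂ) • B (DHVIdx.h (m + n)) +
      (if m + n = 0 then ((m : ℂ) ^ 3 - (m : ℂ)) / 12 else 0) • B DHVIdx.c)
    (hdh : ∀ m n : ℤ, ⁅B (DHVIdx.d m), B (DHVIdx.h n)⁆ =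
      ((-n : ℤ) : ℂ) • B (DHVIdx.h (m + n)))
    (hhh : ∀ m n : ℤ, ⁅B (DHVIdx.h m), B (DHVIdx.h n)⁆ = 0)
    (hcen : ∀ x : g, ⁅x, B DHVIdx.c⁆ = 0)
    (α β ζ : ℂ) (hα : α ≠ 0) (hβ : β ≠ 0) (hζ : ζ ≠ 0)
    (q : ℤ) (hq : q ≠ 0) (μ η : ℂ) (af bf : ℤ →₀ ℂ)
    (x y : g)
    (hx : x = α • B (DHVIdx.d 0) + (af.sum fun i a => a • B (DHVIdx.h i)) +
      μ • B DHVIdx.c)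
    (hy : y = β • B (DHVIdx.d q) + (bf.sum fun j b => b • B (DHVIdx.h j)) +
      η • B DHVIdx.c) :
    ⁅x, y⁆ ≠ ζ • y := by
  classical
  intro h
  -- bracket with a fixed element, as an AddMonoidHom
  have lie_sum' : ∀ (z : g) (f : ℤ →₀ ℂ) (F : ℤ → ℂ → g),
      ⁅z, f.sum F⁆ = f.sum fun i a => ⁅z, F i a⁆ := fun z f F =>
    map_finsuppSum (AddMonoidHom.mk ⟨fun w => ⁅z, w⁆, lie_zero z⟩ (lie_add z)) f F
  have sum_lie' : ∀ (z : g) (f : ℤ →₀ ℂ) (F : ℤ → ℂ → g),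
      ⁅f.sum F, z⁆ = f.sum fun i a => ⁅F i a, z⁆ := fun z f F =>
    map_finsuppSum (AddMonoidHom.mk ⟨fun w => ⁅w, z⁆, zero_lie z⟩
      (fun a b => add_lie a b z)) f F
  have hc0 : ∀ z : g, ⁅B DHVIdx.c, z⁆ = 0 := fun z => by
    rw [← lie_skew, hcen, neg_zero]
  -- compute the bracket
  have hb1 : ⁅B (DHVIdx.d 0), B (DHVIdx.d q)⁆ =
      ((-q : ℤ) : ℂ) • B (DHVIdx.d q) + ((-q : ℤ) : ℂ) • B (DHVIdx.h q) := by
    simpa [hq] using hdd 0 q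
  have hxy : ⁅x, y⁆ =
      ((α * β) • (((-q : ℤ) : ℂ) • B (DHVIdx.d q) + ((-q : ℤ) : ℂ) • B (DHVIdx.h q))
        + (bf.sum fun j b => (α * b * ((-j : ℤ) : ℂ)) • B (DHVIdx.h j))
        + (af.sum fun i a => (β * a * ((i : ℤ) : ℂ)) • B (DHVIdx.h (q + i)))) := by
    rw [hx, hy]
    rw [add_lie, add_lie, lie_add, lie_add, lie_add, lie_add, lie_add, lie_add]
    simp only [smul_lie, lie_smul, hcen, hc0, smul_zero, zero_lie, lie_zero,
      add_zero, zero_add]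
    rw [hb1]
    rw [lie_sum' (B (DHVIdx.d 0)) bf, sum_lie' (B (DHVIdx.d q)) af,
        sum_lie' _ af]
    have e1 : (bf.sum fun j b => ⁅B (DHVIdx.d 0), b • B (DHVIdx.h j)⁆)
        = bf.sum fun j b => (b * ((-j : ℤ) : ℂ)) • B (DHVIdx.h j) := by
      refine Finsupp.sum_congr fun j _ => ?_
      rw [lie_smul, hdh 0 j, smul_smul, zero_add]
    have e2 : (af.sum fun i a => ⁅a • B (DHVIdx.h i), B (DHVIdx.d q)⁆)
        = af.sum fun i a => (a * ((i : ℤ) : ℂ)) • B (DHVIdx.h (q + i)) := by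
      refine Finsupp.sum_congr fun i _ => ?_
      rw [smul_lie, ← lie_skew, hdh q i, smul_neg, ← neg_smul, smul_smul]
      push_cast
      ring_nf
    have e3 : (af.sum fun i a => ⁅a • B (DHVIdx.h i),
        bf.sum fun j b => b • B (DHVIdx.h j)⁆) = 0 := by
      refine Finset.sum_eq_zero fun i _ => ?_
      dsimp only
      rw [smul_lie, lie_sum' _ bf]
      have : (bf.sum fun j b => ⁅B (DHVIdx.h i), b • B (DHVIdx.h j)⁆) = 0 :=
        Finset.sum_eq_zero fun j _ => by dsimp only; rw [lie_smul, hhh, smul_zero]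
      rw [this, smul_zero]
    rw [e1, e2, e3, add_zero]
    rw [Finsupp.smul_sum, Finsupp.smul_sum]
    have e4 : (bf.sum fun j b => α • (b * ((-j : ℤ) : ℂ)) • B (DHVIdx.h j))
        = bf.sum fun j b => (α * b * ((-j : ℤ) : ℂ)) • B (DHVIdx.h j) :=
      Finsupp.sum_congr fun j _ => by rw [smul_smul]; ring_nf
    have e5 : (af.sum fun i a => β • (a * ((i : ℤ) : ℂ)) • B (DHVIdx.h (q + i)))
        = af.sum fun i a => (β * a * ((i : ℤ) : ℂ)) • B (DHVIdx.h (q + i)) :=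
      Finsupp.sum_congr fun i _ => by rw [smul_smul]; ring_nf
    rw [e4, e5, smul_smul, mul_comm β α]
  -- coordinate equations
  have hd : B.repr ⁅x, y⁆ (DHVIdx.d q) = B.repr (ζ • y) (DHVIdx.d q) := by rw [h]
  have hh : B.repr ⁅x, y⁆ (DHVIdx.h q) = B.repr (ζ • y) (DHVIdx.h q) := by rw [h]
  rw [hxy, hy] at hd hh
  simp only [map_add, map_smul, map_finsuppSum, Module.Basis.repr_self,
    Finsupp.coe_add, Finsupp.coe_smul, Pi.add_apply, Pi.smul_apply,
    Finsupp.sum_apply, Finsupp.single_apply, smul_eq_mul] at hd hh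
  -- simplify the sums
  have sums_d_b : (bf.sum fun j b =>
      α * b * ((-j : ℤ) : ℂ) * if DHVIdx.h j = DHVIdx.d q then 1 else 0) = 0 :=
    Finset.sum_eq_zero fun j _ => by simp
  have sums_d_a : (af.sum fun i a =>
      β * a * ((i : ℤ) : ℂ) * if DHVIdx.h (q + i) = DHVIdx.d q then 1 else 0) = 0 :=
    Finset.sum_eq_zero fun i _ => by simp
  have sums_h_a : (af.sum fun i a =>
      β * a * ((i : ℤ) : ℂ) * if DHVIdx.h (q + i) = DHVIdx.h q then 1 else 0) = 0 := by
    refine Finset.sum_eq_zero fun i _ => ?_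
    by_cases hi : i = 0
    · simp [hi]
    · have : q + i ≠ q := by omega
      simp [this]
  have sums_h_b : (bf.sum fun j b =>
      α * b * ((-j : ℤ) : ℂ) * if DHVIdx.h j = DHVIdx.h q then 1 else 0)
      = α * bf q * ((-q : ℤ) : ℂ) := by
    have : (bf.sum fun j b =>
        α * b * ((-j : ℤ) : ℂ) * if DHVIdx.h j = DHVIdx.h q then 1 else 0)
        = bf.sum fun j b => if j = q then α * b * ((-j : ℤ) : ℂ) else 0 := by
      refine Finsupp.sum_congr fun j _ => ?_
      by_cases hj : j = q <;> simp [hj]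
    rw [this, Finsupp.sum_ite_eq']
    split_ifs with hs
    · ring
    · have : bf q = 0 := Finsupp.notMem_support_iff.mp hs
      rw [this]; ring
  have sums_h_y : (bf.sum fun j b =>
      b * if DHVIdx.h j = DHVIdx.h q then 1 else 0) = bf q := by
    have : (bf.sum fun j b =>
        b * if DHVIdx.h j = DHVIdx.h q then 1 else 0)
        = bf.sum fun j b => if j = q then b else 0 := by
      refine Finsupp.sum_congr fun j _ => ?_
      by_cases hj : j = q <;> simp [hj]
    rw [this, Finsupp.sum_ite_eq']
    split_ifs with hs
    · rfl
    · exact (Finsupp.notMem_support_iff.mp hs).symm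
  simp only [sums_d_b, sums_d_a, sums_h_a, sums_h_b, sums_h_y, Finsupp.sum_zero_index] at hd hh
  simp only [reduceCtorEq, if_true, if_false, if_neg, mul_one, mul_zero,
    Finsupp.sum, Finset.sum_const_zero, add_zero, zero_add] at hd hh
  -- now hd : α*β*(-q) = ζ*β (roughly), hh : α*β*(-q) + α*(bf q)*(-q) = ζ*(bf q)
  have hqC : ((q : ℤ) : ℂ) ≠ 0 := Int.cast_ne_zero.mpr hq
  -- derive contradiction
  push_cast at hd hh
  -- hd : α * β * -q = ζ * β ;  hh : α*β*(-q) + α*(bf q)*(-q) = ζ * bf q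
  have hz : ζ = -(q : ℂ) * α := by
    apply mul_right_cancel₀ hβ
    linear_combination -hd
  rw [hz] at hh
  have : α * β * (q : ℂ) = 0 := by linear_combination -hh
  rcases mul_eq_zero.mp this with h' | h'
  · rcases mul_eq_zero.mp h' with h'' | h''
    · exact hα h''
    · exact hβ h''
  · exact hqC h'
end

section
/- The Lie algebra L does not admit a triangular decomposition of Moody–Pianzola type: there is no decomposition L = L_− ⊕ H ⊕ L_+ with H abelian satisfying the axioms (TD1)–(TD3). -/
/-- The `α`-weight space of a subalgebra `H` acting on `g` by the adjoint
action: `{v | ⁅h, v⁆ = α h • v for all h ∈ H}`. -/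
def wtSpace {g : Type*} [LieRing g] [LieAlgebra ℂ g] (H : LieSubalgebra ℂ g)
    (α : Module.Dual ℂ H) : Submodule ℂ g where
  carrier := {v | ∀ h : H, ⁅(h : g), v⁆ = α h • v}
  add_mem' := fun ha hb h => by rw [lie_add, ha h, hb h, smul_add]
  zero_mem' := fun h => by simp
  smul_mem' := fun t v hv h => by rw [lie_smul, hv h, smul_comm]

deriving instance DecidableEq for DHVIdx

namespace DHVNoTD

open Module

variable {g : Type*} [LieRing g] [LieAlgebra ℂ g] (B : Basis DHVIdx ℂ g)

/-- Extract the `d`-index of a basis element. -/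
def dIdx : DHVIdx → Option ℤ
  | .d m => some m
  | _ => none

lemma dIdx_inj : ∀ (a a' : DHVIdx) (b : ℤ), b ∈ dIdx a → b ∈ dIdx a' → a = a' := by
  rintro (m | m | _) (m' | m' | _) b hb hb' <;> simp [dIdx] at hb hb' <;> subst hb <;>
    subst hb' <;> rfl

/-- The finset of `d`-indices appearing in `w`. -/
noncomputable def dsupp (w : g) : Finset ℤ := (B.repr w).support.filterMap dIdx dIdx_inj

lemma mem_dsupp {w : g} {m : ℤ} : m ∈ dsupp B w ↔ B.repr w (.d m) ≠ 0 := by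
  constructor
  · intro hm
    obtain ⟨a, ha, ha'⟩ := (Finset.mem_filterMap _).mp hm
    cases a <;> simp [dIdx] at ha'
    subst ha'
    exact Finsupp.mem_support_iff.mp ha
  · intro hm
    exact (Finset.mem_filterMap _).mpr ⟨.d m, Finsupp.mem_support_iff.mpr hm, rfl⟩

lemma repr_basis (i k : DHVIdx) : B.repr (B i) k = if i = k then 1 else 0 := by
  rw [B.repr_self]; exact Finsupp.single_apply

lemma lie_expand_left (x v : g) : ⁅x, v⁆ = (B.repr x).sum fun i c => c • ⁅B i, v⁆ := by
  have key : ∀ (s : Finset DHVIdx) (f : DHVIdx → ℂ),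
      ⁅∑ i ∈ s, f i • B i, v⁆ = ∑ i ∈ s, f i • ⁅B i, v⁆ := by
    intro s f
    induction s using Finset.cons_induction with
    | empty => simp
    | cons a s ha ih => rw [Finset.sum_cons, add_lie, smul_lie, ih, Finset.sum_cons]
  conv_lhs => rw [← B.linearCombination_repr x, Finsupp.linearCombination_apply, Finsupp.sum]
  rw [key, Finsupp.sum]

lemma lie_expand_right (x v : g) : ⁅x, v⁆ = (B.repr v).sum fun j c => c • ⁅x, B j⁆ := by
  have key : ∀ (s : Finset DHVIdx) (f : DHVIdx → ℂ),
      ⁅x, ∑ j ∈ s, f j • B j⁆ = ∑ j ∈ s, f j • ⁅x, B j⁆ := by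
    intro s f
    induction s using Finset.cons_induction with
    | empty => simp
    | cons a s ha ih => rw [Finset.sum_cons, lie_add, lie_smul, ih, Finset.sum_cons]
  conv_lhs => rw [← B.linearCombination_repr v, Finsupp.linearCombination_apply, Finsupp.sum]
  rw [key, Finsupp.sum]

lemma repr_lie_left (x v : g) (k : DHVIdx) :
    B.repr ⁅x, v⁆ k = ∑ i ∈ (B.repr x).support, B.repr x i * B.repr ⁅B i, v⁆ k := by
  rw [lie_expand_left B x v, Finsupp.sum, map_sum, Finset.sum_apply']
  exact Finset.sum_congr rfl fun i _ => by rw [map_smul, Finsupp.smul_apply, smul_eq_mul]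

lemma repr_lie_right (x v : g) (k : DHVIdx) :
    B.repr ⁅x, v⁆ k = ∑ j ∈ (B.repr v).support, B.repr v j * B.repr ⁅x, B j⁆ k := by
  rw [lie_expand_right B x v, Finsupp.sum, map_sum, Finset.sum_apply']
  exact Finset.sum_congr rfl fun i _ => by rw [map_smul, Finsupp.smul_apply, smul_eq_mul]

section Brackets

variable (hdd : ∀ m n : ℤ, ⁅B (DHVIdx.d m), B (DHVIdx.d n)⁆ =
      ((m - n : ℤ) : ℂ) • B (DHVIdx.d (m + n)) +
      ((m - n : ℤ) : ℂ) • B (DHVIdx.h (m + n)) +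
      (if m + n = 0 then ((m : ℂ) ^ 3 - (m : ℂ)) / 12 else 0) • B DHVIdx.c)
    (hdh : ∀ m n : ℤ, ⁅B (DHVIdx.d m), B (DHVIdx.h n)⁆ =
      ((-n : ℤ) : ℂ) • B (DHVIdx.h (m + n)))
    (hhh : ∀ m n : ℤ, ⁅B (DHVIdx.h m), B (DHVIdx.h n)⁆ = 0)
    (hcen : ∀ x : g, ⁅x, B DHVIdx.c⁆ = 0)

include hcen in
lemma c_lie (y : g) : ⁅B DHVIdx.c, y⁆ = 0 := by
  rw [← lie_skew, hcen, neg_zero]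

include hdh in
lemma hd_lie (n m : ℤ) : ⁅B (DHVIdx.h n), B (DHVIdx.d m)⁆ = (n : ℂ) • B (DHVIdx.h (m + n)) := by
  rw [← lie_skew, hdh]
  push_cast
  rw [neg_smul, neg_neg]

include hdd in
lemma repr_dd_d (m n k : ℤ) :
    B.repr ⁅B (.d m), B (.d n)⁆ (.d k) = if m + n = k then ((m : ℂ) - n) else 0 := by
  rw [hdd]
  simp only [map_add, map_smul, Finsupp.add_apply, Finsupp.smul_apply, repr_basis,
    smul_eq_mul]
  simp only [DHVIdx.d.injEq, reduceCtorEq, if_false, mul_zero, add_zero, mul_ite, mul_one]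
  push_cast
  rfl

include hdh hhh hcen in
lemma repr_not_dd (i j : DHVIdx) (k : ℤ) (hij : ∀ m n : ℤ, ¬(i = .d m ∧ j = .d n)) :
    B.repr ⁅B i, B j⁆ (.d k) = 0 := by
  cases i with
  | d m =>
    cases j with
    | d n => exact absurd ⟨rfl, rfl⟩ (hij m n)
    | h n => rw [hdh]; simp [repr_basis]
    | c => rw [hcen]; simp
  | h m =>
    cases j with
    | d n => rw [hd_lie B hdh]; simp [repr_basis]
    | h n => rw [hhh]; simp
    | c => rw [hcen]; simp
  | c => rw [c_lie B hcen]; simp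

end Brackets

section Main

variable (hdd : ∀ m n : ℤ, ⁅B (DHVIdx.d m), B (DHVIdx.d n)⁆ =
      ((m - n : ℤ) : ℂ) • B (DHVIdx.d (m + n)) +
      ((m - n : ℤ) : ℂ) • B (DHVIdx.h (m + n)) +
      (if m + n = 0 then ((m : ℂ) ^ 3 - (m : ℂ)) / 12 else 0) • B DHVIdx.c)
    (hdh : ∀ m n : ℤ, ⁅B (DHVIdx.d m), B (DHVIdx.h n)⁆ =
      ((-n : ℤ) : ℂ) • B (DHVIdx.h (m + n)))
    (hhh : ∀ m n : ℤ, ⁅B (DHVIdx.h m), B (DHVIdx.h n)⁆ = 0)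
    (hcen : ∀ x : g, ⁅x, B DHVIdx.c⁆ = 0)

include hdd hdh hhh hcen in
/-- If `x` has a `d`-coefficient at an index `N` which is extremal (w.r.t. the
orientation `s = ±1`) with `s * N > 0`, then every `ad x`-eigenvector has vanishing
`d`-coefficients beyond `N`. -/
lemma eigen_bound (x : g) (s : ℤ) (hs : s = 1 ∨ s = -1)
    (N : ℤ) (hN : B.repr x (.d N) ≠ 0)
    (hNmax : ∀ m : ℤ, B.repr x (.d m) ≠ 0 → s * m ≤ s * N) (hNpos : 0 < s * N)
    (lam : ℂ) (v : g) (hv : ⁅x, v⁆ = lam • v)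
    (j : ℤ) (hj : s * N < s * j) : B.repr v (.d j) = 0 := by
  have hsinj : ∀ p q : ℤ, s * p = s * q → p = q := by
    rcases hs with rfl | rfl <;> omega
  by_contra hvj
  -- pick the extremal `d`-index `q` of `v`
  have hTne : ((dsupp B v).image (s * ·)).Nonempty :=
    ⟨s * j, Finset.mem_image_of_mem _ (mem_dsupp B |>.mpr hvj)⟩
  obtain ⟨q, hqmem, hqM⟩ := Finset.mem_image.mp (((dsupp B v).image (s * ·)).max'_mem hTne)
  have hq0 : B.repr v (.d q) ≠ 0 := (mem_dsupp B).mp hqmem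
  have hqmax : ∀ n : ℤ, B.repr v (.d n) ≠ 0 → s * n ≤ s * q := by
    intro n hn
    rw [hqM]
    exact Finset.le_max' _ _ (Finset.mem_image_of_mem _ ((mem_dsupp B).mpr hn))
  have hjq : s * N < s * q := lt_of_lt_of_le hj (hqmax j hvj)
  have hNq : B.repr v (.d (N + q)) = 0 := by
    by_contra hcon
    have := hqmax _ hcon
    rw [mul_add] at this
    omega
  have key : B.repr ⁅x, v⁆ (.d (N + q)) =
      B.repr x (.d N) * (B.repr v (.d q) * ((N : ℂ) - q)) := by
    rw [repr_lie_left B x v (.d (N + q))]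
    rw [Finset.sum_eq_single_of_mem (DHVIdx.d N) (Finsupp.mem_support_iff.mpr hN)]
    · congr 1
      rw [repr_lie_right B (B (.d N)) v (.d (N + q))]
      rw [Finset.sum_eq_single_of_mem (DHVIdx.d q) (Finsupp.mem_support_iff.mpr hq0)]
      · rw [repr_dd_d B hdd, if_pos rfl]
      · intro b hb hbq
        cases b with
        | d n =>
          rw [repr_dd_d B hdd, if_neg (fun hc => hbq (by rw [show n = q by omega])), mul_zero]
        | h n =>
          rw [repr_not_dd B hdh hhh hcen _ _ _ (by rintro m' n' ⟨-, ⟨⟩⟩), mul_zero]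
        | c =>
          rw [repr_not_dd B hdh hhh hcen _ _ _ (by rintro m' n' ⟨-, ⟨⟩⟩), mul_zero]
    · intro i hi hiN
      cases i with
      | d m =>
        have hm : s * m ≤ s * N := hNmax m (Finsupp.mem_support_iff.mp hi)
        have hmlt : s * m < s * N :=
          lt_of_le_of_ne hm (fun hc => hiN (by rw [hsinj _ _ hc]))
        have hinner : B.repr ⁅B (.d m), v⁆ (.d (N + q)) = 0 := by
          rw [repr_lie_right B (B (.d m)) v (.d (N + q))]
          apply Finset.sum_eq_zero
          intro b hb
          cases b with
          | d n =>
            rw [repr_dd_d B hdd]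
            rcases eq_or_ne (m + n) (N + q) with he | he
            · exfalso
              have hn : s * n ≤ s * q := hqmax n (Finsupp.mem_support_iff.mp hb)
              have : s * (m + n) = s * (N + q) := by rw [he]
              rw [mul_add, mul_add] at this
              omega
            · rw [if_neg he, mul_zero]
          | h n =>
            rw [repr_not_dd B hdh hhh hcen _ _ _ (by rintro m' n' ⟨-, ⟨⟩⟩), mul_zero]
          | c =>
            rw [repr_not_dd B hdh hhh hcen _ _ _ (by rintro m' n' ⟨-, ⟨⟩⟩), mul_zero]
        rw [hinner, mul_zero]
      | h n =>
        have hinner : B.repr ⁅B (.h n), v⁆ (.d (N + q)) = 0 := by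
          rw [repr_lie_right B (B (.h n)) v (.d (N + q))]
          apply Finset.sum_eq_zero
          intro b hb
          rw [repr_not_dd B hdh hhh hcen _ _ _ (by rintro m' n' ⟨⟨⟩, -⟩), mul_zero]
        rw [hinner, mul_zero]
      | c =>
        have hinner : B.repr ⁅B DHVIdx.c, v⁆ (.d (N + q)) = 0 := by
          rw [repr_lie_right B (B DHVIdx.c) v (.d (N + q))]
          apply Finset.sum_eq_zero
          intro b hb
          rw [repr_not_dd B hdh hhh hcen _ _ _ (by rintro m' n' ⟨⟨⟩, -⟩), mul_zero]
        rw [hinner, mul_zero]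
  rw [hv, map_smul, Finsupp.smul_apply, smul_eq_mul, hNq, mul_zero] at key
  have hNq' : N ≠ q := fun hc => lt_irrefl _ (hc ▸ hjq)
  have hNqne : (N : ℂ) - q ≠ 0 := by
    rw [sub_ne_zero]
    exact fun hc => hNq' (by exact_mod_cast hc)
  exact mul_ne_zero hN (mul_ne_zero hq0 hNqne) key.symm

include hdd hdh hhh hcen in
/-- An `ad`-diagonalizable element has no `d_m`-component for `m ≠ 0`. -/
lemma coeff_d_eq_zero_of_ne (x : g)
    (hx : (⨆ lam : ℂ, Module.End.eigenspace (LieAlgebra.ad ℂ g x) lam) = ⊤) :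
    ∀ m : ℤ, m ≠ 0 → B.repr x (.d m) = 0 := by
  by_contra hcon
  push_neg at hcon
  obtain ⟨m0, hm0, hm0'⟩ := hcon
  have hSne : (dsupp B x).Nonempty := ⟨m0, (mem_dsupp B).mpr hm0'⟩
  obtain ⟨s, N, hs, hN, hNmax, hNpos⟩ :
      ∃ (s N : ℤ), (s = 1 ∨ s = -1) ∧ B.repr x (.d N) ≠ 0 ∧
        (∀ m, B.repr x (.d m) ≠ 0 → s * m ≤ s * N) ∧ 0 < s * N := by
    rcases lt_or_ge 0 ((dsupp B x).max' hSne) with hpos | hnonpos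
    · refine ⟨1, (dsupp B x).max' hSne, Or.inl rfl,
        (mem_dsupp B).mp ((dsupp B x).max'_mem hSne), fun m hm => ?_, by omega⟩
      simpa using (dsupp B x).le_max' m ((mem_dsupp B).mpr hm)
    · refine ⟨-1, (dsupp B x).min' hSne, Or.inr rfl,
        (mem_dsupp B).mp ((dsupp B x).min'_mem hSne), fun m hm => ?_, ?_⟩
      · have := (dsupp B x).min'_le m ((mem_dsupp B).mpr hm)
        omega
      · have h1 := (dsupp B x).min'_le m0 ((mem_dsupp B).mpr hm0')
        have h2 := (dsupp B x).le_max' m0 ((mem_dsupp B).mpr hm0')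
        omega
  have hj : s * N < s * (N + s) := by rcases hs with rfl | rfl <;> omega
  have hall : ∀ w : g, B.repr w (.d (N + s)) = 0 := by
    intro w
    have hw : w ∈ (⊤ : Submodule ℂ g) := Submodule.mem_top
    rw [← hx] at hw
    refine Submodule.iSup_induction _ (motive := fun w => B.repr w (.d (N + s)) = 0) hw
      (fun lam w hw => ?_) (by simp)
      (fun y z hy hz => by
        simp only [map_add, Finsupp.add_apply]
        rw [show (B.repr y) (DHVIdx.d (N + s)) = 0 from hy,
          show (B.repr z) (DHVIdx.d (N + s)) = 0 from hz, add_zero])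
    have hw' : ⁅x, w⁆ = lam • w := Module.End.mem_eigenspace_iff.mp hw
    exact eigen_bound B hdd hdh hhh hcen x s hs N hN hNmax hNpos lam w hw' (N + s) hj
  have := hall (B (.d (N + s)))
  rw [repr_basis, if_pos rfl] at this
  exact one_ne_zero this


include hdd hdh hhh hcen in
/-- An `ad`-diagonalizable element has no `d₀`-component: this is where the
deformation term `(m - n) h_{m+n}` in `⁅d_m, d_n⁆` is used (Jordan block). -/
lemma coeff_d0_eq_zero (x : g)
    (hz : ∀ m : ℤ, m ≠ 0 → B.repr x (.d m) = 0)
    (hx : (⨆ lam : ℂ, Module.End.eigenspace (LieAlgebra.ad ℂ g x) lam) = ⊤) :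
    B.repr x (.d 0) = 0 := by
  by_contra ha
  set a : ℂ := B.repr x (.d 0) with ha_def
  set T : Module.End ℂ g := LieAlgebra.ad ℂ g x with hT
  -- each `h_j` is an eigenvector with eigenvalue `-(a * j)`
  have hEh : ∀ j : ℤ, ⁅x, B (.h j)⁆ = (-(a * j)) • B (.h j) := by
    intro j
    rw [lie_expand_left B x (B (.h j)), Finsupp.sum,
      Finset.sum_eq_single_of_mem (DHVIdx.d 0) (Finsupp.mem_support_iff.mpr ha)]
    · rw [hdh, smul_smul, zero_add]
      congr 1
      push_cast
      ring
    · intro b hb hb0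
      cases b with
      | d m =>
        exact absurd (hz m (fun hc => hb0 (by rw [hc]))) (Finsupp.mem_support_iff.mp hb)
      | h k => rw [hhh, smul_zero]
      | c => rw [c_lie B hcen, smul_zero]
  have hEhmem : ∀ j : ℤ, B (.h j) ∈ Module.End.eigenspace T (-(a * j)) := fun j =>
    Module.End.mem_eigenspace_iff.mpr (by rw [hT, LieAlgebra.ad_apply]; exact hEh j)
  set Sup' : Submodule ℂ g :=
    ⨆ (lam : ℂ) (_ : lam ≠ -a), Module.End.eigenspace T lam with hSup'
  -- step A : `(ad x + a) w ∈ Sup'` for every `w`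
  have hmem1 : ∀ w : g, ⁅x, w⁆ + a • w ∈ Sup' := by
    intro w
    have hw : w ∈ (⊤ : Submodule ℂ g) := Submodule.mem_top
    rw [← hx] at hw
    refine Submodule.iSup_induction _ (motive := fun w => ⁅x, w⁆ + a • w ∈ Sup') hw
      (fun lam w hw => ?_) (by simp) (fun y z hy hz => ?_)
    · show ⁅x, w⁆ + a • w ∈ Sup'
      have hw' : ⁅x, w⁆ = lam • w := Module.End.mem_eigenspace_iff.mp hw
      rw [hw', ← add_smul]
      rcases eq_or_ne lam (-a) with rfl | hne
      · simp
      · exact Submodule.mem_iSup_of_mem lam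
          (Submodule.mem_iSup_of_mem hne (Submodule.smul_mem _ _ hw))
    · show ⁅x, y + z⁆ + a • (y + z) ∈ Sup'
      have heq : ⁅x, y + z⁆ + a • (y + z) = (⁅x, y⁆ + a • y) + (⁅x, z⁆ + a • z) := by
        rw [lie_add, smul_add]; abel
      rw [heq]
      exact Submodule.add_mem _ hy hz
  -- step B : the `y`-part of `x` (no `d`-components) moves `d₁` into `Sup'`
  set y : g := x - a • B (.d 0) with hy_def
  have hyd : ∀ m : ℤ, B.repr y (.d m) = 0 := by
    intro m
    have heq : B.repr y (.d m) = B.repr x (.d m) - a * B.repr (B (.d 0)) (.d m) := by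
      rw [hy_def, map_sub, map_smul, Finsupp.sub_apply, Finsupp.smul_apply, smul_eq_mul]
    rcases eq_or_ne m 0 with rfl | hm
    · rw [heq, repr_basis, if_pos rfl, mul_one, ha_def, sub_self]
    · rw [heq, repr_basis, if_neg (by simp [hm.symm]), mul_zero, hz m hm, sub_zero]
  have hy1 : ⁅y, B (.d 1)⁆ ∈ Sup' := by
    rw [lie_expand_left B y (B (.d 1))]
    apply Submodule.finsuppSum_mem
    intro i hi
    cases i with
    | d m => exact absurd (hyd m) hi
    | h k =>
      rw [hd_lie B hdh]
      rcases eq_or_ne k 0 with rfl | hk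
      · simp
      · refine Submodule.smul_mem _ _ (Submodule.smul_mem _ _ ?_)
        refine Submodule.mem_iSup_of_mem (-(a * ((1 : ℤ) + k : ℤ))) ?_
        refine Submodule.mem_iSup_of_mem ?_ (hEhmem (1 + k))
        intro hc
        rw [neg_inj] at hc
        have h1 : ((1 + k : ℤ) : ℂ) = 1 := mul_left_cancel₀ ha (hc.trans (mul_one a).symm)
        have h2 : (1 : ℂ) + (k : ℂ) = 1 := by exact_mod_cast h1
        exact hk (by exact_mod_cast (by linear_combination h2 : (k : ℂ) = 0))
    | c => rw [c_lie B hcen, smul_zero]; exact zero_mem _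
  -- combine : `a • h₁ ∈ Sup'`
  have hd01 : ⁅B (.d 0), B (.d 1)⁆ = -B (.d 1) - B (.h 1) := by
    rw [hdd]
    norm_num
    abel
  have hxd1 : ⁅x, B (.d 1)⁆ = a • ⁅B (.d 0), B (.d 1)⁆ + ⁅y, B (.d 1)⁆ := by
    have hxy : x = a • B (.d 0) + y := by rw [hy_def]; abel
    conv_lhs => rw [hxy]
    rw [add_lie, smul_lie]
  have hkey : a • B (.h 1) ∈ Sup' := by
    have h2 : a • B (.h 1) = ⁅y, B (.d 1)⁆ - (⁅x, B (.d 1)⁆ + a • B (.d 1)) := by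
      rw [hxd1, hd01]
      rw [smul_sub, smul_neg]
      abel
    rw [h2]
    exact Submodule.sub_mem _ hy1 (hmem1 (B (.d 1)))
  have hmemE : a • B (.h 1) ∈ Module.End.eigenspace T (-a) := by
    have h1 : (-(a * ((1 : ℤ) : ℂ))) = -a := by push_cast; ring
    exact Submodule.smul_mem _ _ (h1 ▸ hEhmem 1)
  have hdisj := Module.End.eigenspaces_iSupIndep T (-a)
  have hzero : a • B (.h 1) = 0 := by
    have := hdisj.le_bot (Submodule.mem_inf.mpr ⟨hmemE, hkey⟩)
    simpa using this
  rcases smul_eq_zero.mp hzero with h | h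
  · exact ha h
  · exact B.ne_zero _ h

include hhh hcen in
lemma bracket_eq_zero_of_d_free (x w : g) (hx : ∀ m : ℤ, B.repr x (.d m) = 0)
    (hw : ∀ m : ℤ, B.repr w (.d m) = 0) : ⁅x, w⁆ = 0 := by
  rw [lie_expand_left B x w, Finsupp.sum]
  apply Finset.sum_eq_zero
  intro i hi
  cases i with
  | d m => exact absurd (hx m) (Finsupp.mem_support_iff.mp hi)
  | h n =>
    have : ⁅B (.h n), w⁆ = 0 := by
      rw [lie_expand_right B (B (.h n)) w, Finsupp.sum]
      apply Finset.sum_eq_zero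
      intro j hj
      cases j with
      | d m => exact absurd (hw m) (Finsupp.mem_support_iff.mp hj)
      | h k => rw [hhh, smul_zero]
      | c => rw [hcen, smul_zero]
    rw [this, smul_zero]
  | c => rw [c_lie B hcen, smul_zero]

include hdh hhh hcen in
lemma d_coeff_bracket_zero (x v : g) (hx : ∀ m : ℤ, B.repr x (.d m) = 0) (k : ℤ) :
    B.repr ⁅x, v⁆ (.d k) = 0 := by
  rw [repr_lie_left B x v (.d k)]
  apply Finset.sum_eq_zero
  intro i hi
  cases i with
  | d m => exact absurd (hx m) (Finsupp.mem_support_iff.mp hi)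
  | h n =>
    have hinner : B.repr ⁅B (.h n), v⁆ (.d k) = 0 := by
      rw [repr_lie_right B (B (.h n)) v (.d k)]
      apply Finset.sum_eq_zero
      intro b hb
      rw [repr_not_dd B hdh hhh hcen _ _ _ (by rintro m' n' ⟨⟨⟩, -⟩), mul_zero]
    rw [hinner, mul_zero]
  | c =>
    have hinner : B.repr ⁅B DHVIdx.c, v⁆ (.d k) = 0 := by
      rw [repr_lie_right B (B DHVIdx.c) v (.d k)]
      apply Finset.sum_eq_zero
      intro b hb
      rw [repr_not_dd B hdh hhh hcen _ _ _ (by rintro m' n' ⟨⟨⟩, -⟩), mul_zero]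
    rw [hinner, mul_zero]

include hdh hhh hcen in
lemma central_of_dfree (x : g) (hx : ∀ m : ℤ, B.repr x (.d m) = 0)
    (hsup : (⨆ lam : ℂ, Module.End.eigenspace (LieAlgebra.ad ℂ g x) lam) = ⊤) :
    ∀ v : g, ⁅x, v⁆ = 0 := by
  have hTT : ∀ v : g, ⁅x, ⁅x, v⁆⁆ = 0 := fun v =>
    bracket_eq_zero_of_d_free B hhh hcen x ⁅x, v⁆ hx
      (fun m => d_coeff_bracket_zero B hdh hhh hcen x v hx m)
  intro v
  have hv : v ∈ (⊤ : Submodule ℂ g) := Submodule.mem_top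
  rw [← hsup] at hv
  refine Submodule.iSup_induction _ (motive := fun v => ⁅x, v⁆ = 0) hv
    (fun lam w hw => ?_) (lie_zero x) (fun y z hy hz => ?_)
  · show ⁅x, w⁆ = 0
    have hw' : ⁅x, w⁆ = lam • w := Module.End.mem_eigenspace_iff.mp hw
    rcases eq_or_ne lam 0 with rfl | hlam
    · rw [hw', zero_smul]
    · have h2 : lam • ⁅x, w⁆ = 0 := by rw [← lie_smul, ← hw', hTT]
      rcases smul_eq_zero.mp h2 with h | h
      · exact absurd h hlam
      · exact h
  · show ⁅x, y + z⁆ = 0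
    rw [lie_add, show ⁅x, y⁆ = 0 from hy, show ⁅x, z⁆ = 0 from hz, add_zero]

include hdd hdh hhh hcen in
/-- Every `ad`-diagonalizable element of `L` is central. -/
lemma central_of_diag (x : g)
    (hsup : (⨆ lam : ℂ, Module.End.eigenspace (LieAlgebra.ad ℂ g x) lam) = ⊤) :
    ∀ v : g, ⁅x, v⁆ = 0 := by
  have h1 := coeff_d_eq_zero_of_ne B hdd hdh hhh hcen x hsup
  have h0 := coeff_d0_eq_zero B hdd hdh hhh hcen x h1 hsup
  refine central_of_dfree B hdh hhh hcen x (fun m => ?_) hsup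
  rcases eq_or_ne m 0 with rfl | hm
  · exact h0
  · exact h1 m hm

end Main

end DHVNoTD

/-- The deformed Heisenberg–Virasoro algebra `L` admits no Moody–Pianzola
triangular decomposition `L = L₋ ⊕ H ⊕ L₊` satisfying (TD1)–(TD3). -/
theorem dhv_no_triangular_decomposition
 {g : Type*} [LieRing g] [LieAlgebra ℂ g]
    (B : Module.Basis DHVIdx ℂ g)
    (hdd : ∀ m n : ℤ, ⁅B (DHVIdx.d m), B (DHVIdx.d n)⁆ =
      ((m - n : ℤ) : ℂ) • B (DHVIdx.d (m + n)) +
      ((m - n : ℤ) : ℂ) • B (DHVIdx.h (m + n)) +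
      (if m + n = 0 then ((m : ℂ) ^ 3 - (m : ℂ)) / 12 else 0) • B DHVIdx.c)
    (hdh : ∀ m n : ℤ, ⁅B (DHVIdx.d m), B (DHVIdx.h n)⁆ =
      ((-n : ℤ) : ℂ) • B (DHVIdx.h (m + n)))
    (hhh : ∀ m n : ℤ, ⁅B (DHVIdx.h m), B (DHVIdx.h n)⁆ = 0)
    (hcen : ∀ x : g, ⁅x, B DHVIdx.c⁆ = 0)
    :
    ¬ ∃ (Lp Lm H : LieSubalgebra ℂ g) (Q : AddSubsemigroup (Module.Dual ℂ H))
        (σ : g →ₗ[ℂ] g),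
      Lp ≠ ⊥ ∧ Lm ≠ ⊥ ∧ H ≠ ⊥ ∧
      (∀ x y : g, x ∈ H → y ∈ H → ⁅x, y⁆ = 0) ∧
      (Lm.toSubmodule ⊔ H.toSubmodule ⊔ Lp.toSubmodule = ⊤) ∧
      (∀ a ∈ Lm, ∀ b ∈ H, ∀ c' ∈ Lp, a + b + c' = (0 : g) →
        a = 0 ∧ b = 0 ∧ c' = 0) ∧
      (Lp.toSubmodule = ⨆ α ∈ (Q : Set (Module.Dual ℂ H)), wtSpace H α) ∧
      (∀ x y : g, σ ⁅x, y⁆ = ⁅σ y, σ x⁆) ∧ (∀ x : g, σ (σ x) = x) ∧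
      (Lp.toSubmodule.map σ = Lm.toSubmodule) ∧ (∀ x ∈ H, σ x = x) ∧
      (∃ J : Set (Module.Dual ℂ H),
        LinearIndependent ℂ ((↑) : J → Module.Dual ℂ H) ∧
        AddSubsemigroup.closure J = Q) := by
  rintro ⟨Lp, Lm, H, Q, σ, hLp, -, -, habel, hsum, -, hLpwt, hσlie, hσinv, hσmap, hσfix,
    J, hJli, hJQ⟩
  classical
  -- Step 1 : every element of `H` is central in `g`.
  have hcentral : ∀ t : H, ∀ v : g, ⁅(t : g), v⁆ = 0 := by
    intro t
    apply DHVNoTD.central_of_diag B hdd hdh hhh hcen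
    rw [eq_top_iff, ← hsum]
    have hwt : ∀ α : Module.Dual ℂ H, wtSpace H α ≤
        Module.End.eigenspace (LieAlgebra.ad ℂ g (t : g)) (α t) := by
      intro α v hv
      exact Module.End.mem_eigenspace_iff.mpr (by rw [LieAlgebra.ad_apply]; exact hv t)
    refine sup_le (sup_le ?_ ?_) ?_
    · -- `L₋ = σ(L₊)` consists of eigenvectors with eigenvalues `-α t`
      rw [← hσmap, hLpwt, Submodule.map_iSup]
      refine iSup_le fun α => ?_
      rw [Submodule.map_iSup]
      refine iSup_le fun hα => ?_
      rintro w ⟨u, hu, rfl⟩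
      refine Submodule.mem_iSup_of_mem (-(α t)) (Module.End.mem_eigenspace_iff.mpr ?_)
      rw [LieAlgebra.ad_apply]
      have h1 : σ ⁅u, (t : g)⁆ = ⁅(t : g), σ u⁆ := by
        rw [hσlie u (t : g), hσfix (t : g) t.2]
      have h2 : ⁅u, (t : g)⁆ = -(α t • u) := by rw [← hu t, ← lie_skew]
      rw [← h1, h2, map_neg, map_smul, ← neg_smul]
    · -- `H` consists of `0`-eigenvectors
      intro v hv
      refine Submodule.mem_iSup_of_mem 0 (Module.End.mem_eigenspace_iff.mpr ?_)
      rw [LieAlgebra.ad_apply, habel (t : g) v t.2 hv, zero_smul]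
    · -- `L₊` consists of eigenvectors with eigenvalues `α t`
      rw [hLpwt]
      exact iSup_le fun α => iSup_le fun hα => le_trans (hwt α)
        (le_iSup (fun lam => Module.End.eigenspace (LieAlgebra.ad ℂ g (t : g)) lam) (α t))
  -- Step 2 : every element of `Q` is a nonzero functional (by (TD3)).
  have hQne : ∀ α ∈ (Q : Set (Module.Dual ℂ H)), α ≠ 0 := by
    intro α hα hα0
    rw [← hJQ] at hα
    have hP : ∃ f : J →₀ ℕ, f ≠ 0 ∧ (f.sum fun j n => n • (j : Module.Dual ℂ H)) = α := by
      refine AddSubsemigroup.closure_induction ?_ ?_ hα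
      · intro β hβ
        refine ⟨Finsupp.single ⟨β, hβ⟩ 1,
          fun hc => one_ne_zero (Finsupp.single_eq_zero.mp hc), ?_⟩
        rw [Finsupp.sum_single_index
          (h := fun (j : J) (n : ℕ) => n • (j : Module.Dual ℂ H)) (zero_smul ℕ _)]
        exact one_smul ℕ β
      · rintro β γ hβ hγ ⟨f, hf, hfs⟩ ⟨f', hf', hfs'⟩
        refine ⟨f + f', ?_, ?_⟩
        · intro hc
          apply hf
          ext j
          have h2 := DFunLike.congr_fun hc j
          simp only [Finsupp.add_apply, Finsupp.coe_zero, Pi.zero_apply,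
            Nat.add_eq_zero] at h2
          simpa using h2.1
        · rw [Finsupp.sum_add_index'
            (h := fun (j : J) (n : ℕ) => n • (j : Module.Dual ℂ H))
            (fun j => zero_smul ℕ _) (fun j n1 n2 => add_smul n1 n2 _), hfs, hfs']
    obtain ⟨f, hf, hfs⟩ := hP
    have hzero : (Finsupp.mapRange (fun n : ℕ => (n : ℂ)) Nat.cast_zero f) = 0 := by
      apply linearIndependent_iff.mp hJli
      rw [Finsupp.linearCombination_apply,
        Finsupp.sum_mapRange_index (fun j => by simp)]
      have hs2 : (f.sum fun j n => ((n : ℕ) : ℂ) • (j : Module.Dual ℂ H)) = α := by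
        rw [← hfs]
        exact Finsupp.sum_congr fun j _ => Nat.cast_smul_eq_nsmul ℂ _ _
      rw [hs2]
      exact hα0
    obtain ⟨j0, hj0⟩ : ∃ j0, f j0 ≠ 0 := by
      by_contra hc
      push_neg at hc
      exact hf (Finsupp.ext fun j => hc j)
    have h3 := DFunLike.congr_fun hzero j0
    simp only [Finsupp.mapRange_apply, Finsupp.coe_zero, Pi.zero_apply,
      Nat.cast_eq_zero] at h3
    exact hj0 h3
  -- Step 3 : conclude `L₊ = ⊥`, contradiction.
  apply hLp
  rw [LieSubalgebra.eq_bot_iff]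
  intro v hv
  have hv' : v ∈ Lp.toSubmodule := hv
  rw [hLpwt] at hv'
  have hle : (⨆ α ∈ (Q : Set (Module.Dual ℂ H)), wtSpace H α) ≤ (⊥ : Submodule ℂ g) := by
    refine iSup_le fun α => iSup_le fun hα => ?_
    intro w hw
    obtain ⟨t, ht⟩ : ∃ t : H, α t ≠ 0 := by
      by_contra hc
      push_neg at hc
      exact hQne α hα (LinearMap.ext fun t => hc t)
    have h1 := hw t
    rw [hcentral t w] at h1
    rcases smul_eq_zero.mp h1.symm with h | h
    · exact absurd h ht
    · rw [Submodule.mem_bot]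
      exact h
  simpa using hle hv'
end

section
/- If (W, H, W_+, Q_+, σ) is a Moody–Pianzola triangular decomposition of the Witt algebra W, then H = ℂL_0, W_+ = ⊕_{n∈ℕ} ℂL_{−n} (up to swapping ±), Q_+ ≅ ℕ, and σ(L_n) = λⁿ L_{−n} for some λ ∈ ℂ*. -/
open Finsupp

namespace WittAux
variable {W : Type*} [LieRing W] [LieAlgebra ℂ W]

/-- The bracket as a bilinear map. -/
def brk : W →ₗ[ℂ] W →ₗ[ℂ] W :=
  LinearMap.mk₂ ℂ (fun x y => ⁅x, y⁆) add_lie smul_lie lie_add lie_smul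

@[simp] lemma brk_apply (x y : W) : brk x y = ⁅x, y⁆ := rfl

lemma lie_expand (L : Module.Basis ℤ ℂ W)
    (hW : ∀ m n : ℤ, ⁅L m, L n⁆ = ((m - n : ℤ) : ℂ) • L (m + n)) (x y : W) :
    ⁅x, y⁆ = (L.repr x).sum fun n cn => (L.repr y).sum fun m am =>
      (cn * (am * ((n - m : ℤ) : ℂ))) • L (n + m) := by
  have hx : ⁅x, y⁆ = (L.repr x).sum fun n cn => cn • ⁅L n, y⁆ := by
    conv_lhs => rw [← L.linearCombination_repr x, Finsupp.linearCombination_apply]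
    rw [show ∀ a b : W, ⁅a, b⁆ = brk.flip b a from fun _ _ => rfl, map_finsuppSum]
    simp
  rw [hx]
  refine Finsupp.sum_congr fun n _ => ?_
  have hy : ⁅L n, y⁆ = (L.repr y).sum fun m am => (am * ((n - m : ℤ) : ℂ)) • L (n + m) := by
    conv_lhs => rw [← L.linearCombination_repr y, Finsupp.linearCombination_apply]
    rw [show ∀ a b : W, ⁅a, b⁆ = brk a b from fun _ _ => rfl, map_finsuppSum]
    refine Finsupp.sum_congr fun m _ => ?_
    rw [map_smul, brk_apply, hW, smul_smul, mul_comm]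
  rw [hy, Finsupp.smul_sum]
  refine Finsupp.sum_congr fun m _ => ?_
  rw [smul_smul]

lemma repr_lie (L : Module.Basis ℤ ℂ W)
    (hW : ∀ m n : ℤ, ⁅L m, L n⁆ = ((m - n : ℤ) : ℂ) • L (m + n)) (x y : W) (k : ℤ) :
    L.repr ⁅x, y⁆ k = (L.repr x).sum fun n cn => (L.repr y).sum fun m am =>
      if n + m = k then cn * (am * ((n - m : ℤ) : ℂ)) else 0 := by
  rw [lie_expand L hW x y, map_finsuppSum, Finsupp.sum_apply]
  refine Finsupp.sum_congr fun n _ => ?_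
  rw [map_finsuppSum, Finsupp.sum_apply]
  refine Finsupp.sum_congr fun m _ => ?_
  rw [map_smul, L.repr_self, Finsupp.smul_apply, Finsupp.single_apply, smul_eq_mul,
    mul_ite, mul_one, mul_zero]

lemma repr_lie_bound (L : Module.Basis ℤ ℂ W)
    (hW : ∀ m n : ℤ, ⁅L m, L n⁆ = ((m - n : ℤ) : ℂ) • L (m + n)) (x y : W) (N M : ℤ)
    (hN : ∀ n ∈ (L.repr x).support, n ≤ N) (hM : ∀ m ∈ (L.repr y).support, m ≤ M) :
    L.repr ⁅x, y⁆ (N + M) = L.repr x N * (L.repr y M * ((N - M : ℤ) : ℂ)) := by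
  rw [repr_lie L hW]
  rw [Finsupp.sum]
  rw [Finset.sum_eq_single N]
  · rw [Finsupp.sum, Finset.sum_eq_single M]
    · rw [if_pos rfl]
    · intro m hm hne
      rw [if_neg]
      have := hM m hm
      omega
    · intro hMs
      rw [Finsupp.notMem_support_iff.mp hMs]
      simp
  · intro n hn hne
    rw [Finsupp.sum]
    refine Finset.sum_eq_zero fun m hm => ?_
    rw [if_neg]
    have h1 := hN n hn
    have h2 := hM m hm
    omega
  · intro hNs
    rw [Finsupp.notMem_support_iff.mp hNs]
    simp

lemma repr_lie_L0 (L : Module.Basis ℤ ℂ W)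
    (hW : ∀ m n : ℤ, ⁅L m, L n⁆ = ((m - n : ℤ) : ℂ) • L (m + n)) (v : W) (m : ℤ) :
    L.repr ⁅L 0, v⁆ m = (-m : ℂ) * L.repr v m := by
  have key : (L.coord m).comp (brk (L 0)) = ((-m : ℂ)) • L.coord m := by
    refine L.ext fun j => ?_
    have : ⁅L 0, L j⁆ = ((0 - j : ℤ) : ℂ) • L (0 + j) := hW 0 j
    rw [zero_add, zero_sub] at this
    simp only [LinearMap.comp_apply, LinearMap.smul_apply, Module.Basis.coord_apply]
    show L.repr ⁅L 0, L j⁆ m = _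
    rw [this, map_smul, L.repr_self]
    rcases eq_or_ne j m with rfl | hne
    · simp
    · simp [Finsupp.single_apply, hne]
  have := LinearMap.congr_fun key v
  simpa using this

lemma eigen_vanish (L : Module.Basis ℤ ℂ W)
    (hW : ∀ m n : ℤ, ⁅L m, L n⁆ = ((m - n : ℤ) : ℂ) • L (m + n)) (v : W) (μ : ℂ)
    (hv : ⁅L 0, v⁆ = μ • v) (m : ℤ) (hm : (m : ℂ) ≠ -μ) : L.repr v m = 0 := by
  have h := congrArg (fun w => L.repr w m) hv
  simp only [map_smul, Finsupp.smul_apply, smul_eq_mul] at h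
  rw [repr_lie_L0 L hW] at h
  have : ((m : ℂ) + μ) * L.repr v m = 0 := by linear_combination -h
  rcases mul_eq_zero.mp this with h' | h'
  · exact absurd (by linear_combination h') hm
  · exact h'

/-- An eigenvector of `ad L 0` with integer eigenvalue `j` is a multiple of `L (-j)`. -/
lemma eigen_int (L : Module.Basis ℤ ℂ W)
    (hW : ∀ m n : ℤ, ⁅L m, L n⁆ = ((m - n : ℤ) : ℂ) • L (m + n)) (v : W) (j : ℤ)
    (hv : ⁅L 0, v⁆ = (j : ℂ) • v) : v = L.repr v (-j) • L (-j) := by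
  have hsupp : ∀ m : ℤ, m ≠ -j → L.repr v m = 0 := by
    intro m hm
    refine eigen_vanish L hW v _ hv m ?_
    simpa using fun h => hm (by exact_mod_cast h)
  apply L.repr.injective
  rw [map_smul, L.repr_self]
  ext m
  rcases eq_or_ne m (-j) with rfl | hne
  · simp
  · rw [hsupp m hne]
    simp [Finsupp.single_apply, Ne.symm hne]

/-- An eigenvector of `ad L 0` is `0` or a nonzero multiple of some `L m`. -/
lemma eigen_cases (L : Module.Basis ℤ ℂ W)
    (hW : ∀ m n : ℤ, ⁅L m, L n⁆ = ((m - n : ℤ) : ℂ) • L (m + n)) (v : W) (μ : ℂ)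
    (hv : ⁅L 0, v⁆ = μ • v) : v = 0 ∨ ∃ (m : ℤ) (c : ℂ), c ≠ 0 ∧ v = c • L m := by
  rcases eq_or_ne v 0 with rfl | hv0
  · exact Or.inl rfl
  · right
    have : L.repr v ≠ 0 := fun h => hv0 (by simpa using congrArg L.repr.symm h)
    obtain ⟨m, hm⟩ := Finsupp.ne_iff.mp this
    simp only [Finsupp.coe_zero, Pi.zero_apply] at hm
    have hmμ : (m : ℂ) = -μ := by
      by_contra h
      exact hm (eigen_vanish L hW v μ hv m h)
    refine ⟨m, L.repr v m, hm, ?_⟩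
    apply L.repr.injective
    rw [map_smul, L.repr_self]
    ext m'
    rcases eq_or_ne m' m with rfl | hne
    · simp
    · rw [eigen_vanish L hW v μ hv m' (fun h => hne (by rw [← hmμ] at h; exact_mod_cast h))]
      simp [Finsupp.single_apply, Ne.symm hne]

/-- If the eigenvectors of `ad h` span `W`, then `h` has no components `L k` with `k > 0`. -/
lemma topBound (L : Module.Basis ℤ ℂ W)
    (hW : ∀ m n : ℤ, ⁅L m, L n⁆ = ((m - n : ℤ) : ℂ) • L (m + n)) (h : W)
    (hspan : (⊤ : Submodule ℂ W) ≤ Submodule.span ℂ {v : W | ∃ μ : ℂ, ⁅h, v⁆ = μ • v})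
    (k : ℤ) (hk : 0 < k) : L.repr h k = 0 := by
  by_contra hc
  have hne : ((L.repr h).support).Nonempty := ⟨k, Finsupp.mem_support_iff.mpr hc⟩
  set N := (L.repr h).support.max' hne with hNdef
  have hNpos : 0 < N := lt_of_lt_of_le hk (Finset.le_max' _ k (Finsupp.mem_support_iff.mpr hc))
  have hNmem : N ∈ (L.repr h).support := Finset.max'_mem _ hne
  -- the submodule of elements supported in degrees ≤ N
  let F : Submodule ℂ W :=
    { carrier := {w | ∀ j : ℤ, N < j → L.repr w j = 0}
      add_mem' := fun ha hb j hj => by rw [map_add, Finsupp.add_apply, ha j hj, hb j hj, add_zero]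
      zero_mem' := fun j hj => by simp
      smul_mem' := fun t w hw j hj => by
        rw [map_smul, Finsupp.smul_apply, hw j hj, smul_zero] }
  have hEF : {v : W | ∃ μ : ℂ, ⁅h, v⁆ = μ • v} ⊆ (F : Set W) := by
    rintro v ⟨μ, hv⟩ j hj
    by_contra hvj
    have hane : ((L.repr v).support).Nonempty := ⟨j, Finsupp.mem_support_iff.mpr hvj⟩
    set M := (L.repr v).support.max' hane with hMdef
    have hMj : j ≤ M := Finset.le_max' _ j (Finsupp.mem_support_iff.mpr hvj)
    have hMN : N < M := lt_of_lt_of_le hj hMj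
    have hb := repr_lie_bound L hW h v N M
      (fun n hn => Finset.le_max' _ n hn) (fun m hm => Finset.le_max' _ m hm)
    rw [hv, map_smul, Finsupp.smul_apply] at hb
    have hout : L.repr v (N + M) = 0 := by
      by_contra hc'
      have := Finset.le_max' _ (N + M) (Finsupp.mem_support_iff.mpr hc')
      omega
    rw [hout, smul_zero] at hb
    have hNne : L.repr h N ≠ 0 := Finsupp.mem_support_iff.mp hNmem
    have hMne : L.repr v M ≠ 0 := Finsupp.mem_support_iff.mp (Finset.max'_mem _ hane)
    have hcast : ((N - M : ℤ) : ℂ) ≠ 0 := by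
      simp only [ne_eq, Int.cast_eq_zero]
      omega
    rcases mul_eq_zero.mp hb.symm with h' | h'
    · exact hNne h'
    · rcases mul_eq_zero.mp h' with h'' | h''
      · exact hMne h''
      · exact hcast h''
  have hF : Submodule.span ℂ {v : W | ∃ μ : ℂ, ⁅h, v⁆ = μ • v} ≤ F := Submodule.span_le.mpr hEF
  have : L (N + 1) ∈ F := hF (hspan trivial)
  have := this (N + 1) (by omega)
  rw [L.repr_self] at this
  simp at this


/-- If `∀ m ≠ n`, the `m`-th coordinate of `v` vanishes, then `v` is a multiple of `L n`. -/
lemma eq_smul_of_supp (L : Module.Basis ℤ ℂ W) (v : W) (n : ℤ)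
    (h : ∀ m : ℤ, m ≠ n → L.repr v m = 0) : v = L.repr v n • L n := by
  apply L.repr.injective
  rw [map_smul, L.repr_self]
  ext m
  rcases eq_or_ne m n with rfl | hne
  · simp
  · rw [h m hne]; simp [Finsupp.single_apply, Ne.symm hne]

/-- The negated basis `j ↦ -L (-j)`, which satisfies the same Witt relations. -/
noncomputable def negBasis (L : Module.Basis ℤ ℂ W) : Module.Basis ℤ ℂ W :=
  (L.reindex (Equiv.neg ℤ)).unitsSMul (fun _ => (-1 : ℂˣ))

lemma negBasis_apply (L : Module.Basis ℤ ℂ W) (j : ℤ) : negBasis L j = -L (-j) := by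
  rw [negBasis, Module.Basis.unitsSMul_apply, Module.Basis.reindex_apply]
  simp

lemma negBasis_repr (L : Module.Basis ℤ ℂ W) (x : W) (k : ℤ) :
    (negBasis L).repr x k = -(L.repr x (-k)) := by
  rw [negBasis, Module.Basis.repr_unitsSMul, Module.Basis.repr_reindex_apply]
  simp

lemma negBasis_hW (L : Module.Basis ℤ ℂ W)
    (hW : ∀ m n : ℤ, ⁅L m, L n⁆ = ((m - n : ℤ) : ℂ) • L (m + n)) (m n : ℤ) :
    ⁅negBasis L m, negBasis L n⁆ = ((m - n : ℤ) : ℂ) • negBasis L (m + n) := by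
  rw [negBasis_apply, negBasis_apply, negBasis_apply, neg_lie, lie_neg, neg_neg, hW]
  rw [show -m + -n = -(m + n) by ring, smul_neg, ← neg_smul]
  congr 1
  push_cast
  ring

/-- If the eigenvectors of `ad h` span `W`, then `h` is a multiple of `L 0`. -/
lemma diag_mem_span (L : Module.Basis ℤ ℂ W)
    (hW : ∀ m n : ℤ, ⁅L m, L n⁆ = ((m - n : ℤ) : ℂ) • L (m + n)) (h : W)
    (hspan : (⊤ : Submodule ℂ W) ≤ Submodule.span ℂ {v : W | ∃ μ : ℂ, ⁅h, v⁆ = μ • v}) :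
    h = L.repr h 0 • L 0 := by
  refine eq_smul_of_supp L h 0 fun k hk => ?_
  rcases lt_or_gt_of_ne hk with hneg | hpos
  · have := topBound (negBasis L) (negBasis_hW L hW) h hspan (-k) (by omega)
    rw [negBasis_repr, neg_neg] at this
    exact neg_eq_zero.mp this
  · exact topBound L hW h hspan k hpos


/-- A subset of `ℤ` with the trichotomy/disjointness/closure properties is the
positives or the negatives. -/
lemma int_sign_set (T : Set ℤ) (htri : ∀ k : ℤ, -k ∈ T ∨ k = 0 ∨ k ∈ T)
    (h0 : (0 : ℤ) ∉ T) (hdisj : ∀ j : ℤ, j ∈ T → -j ∈ T → False)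
    (hadd : ∀ j k : ℤ, j ∈ T → k ∈ T → j ≠ k → j + k ∈ T) :
    T = {j : ℤ | 0 < j} ∨ T = {j : ℤ | j < 0} := by
  have claim : ∀ S : Set ℤ, (0 : ℤ) ∉ S → (∀ j : ℤ, j ∈ S → -j ∈ S → False) →
      (∀ j k : ℤ, j ∈ S → k ∈ S → j ≠ k → j + k ∈ S) →
      (∀ k : ℤ, -k ∈ S ∨ k = 0 ∨ k ∈ S) → (1 : ℤ) ∈ S → S = {j : ℤ | 0 < j} := by
    intro S h0 hdisj hadd htri h1
    have h2 : (2 : ℤ) ∈ S := by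
      rcases htri 2 with h | h | h
      · exfalso
        have hm1 : (-1 : ℤ) ∈ S := by
          have := hadd 1 (-2) h1 h (by decide)
          norm_num at this
          exact this
        exact hdisj 1 h1 hm1
      · exact absurd h (by decide)
      · exact h
    have hn : ∀ n : ℕ, ((n : ℤ) + 1) ∈ S := by
      intro n
      induction n with
      | zero => simpa using h1
      | succ k ih =>
        rcases Nat.eq_zero_or_pos k with rfl | hk
        · simpa using h2
        · have hs := hadd ((k : ℤ) + 1) 1 ih h1 (by omega)
          have hcast : ((k + 1 : ℕ) : ℤ) + 1 = ((k : ℤ) + 1) + 1 := by push_cast; ring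
          rw [hcast]
          exact hs
    ext j
    simp only [Set.mem_setOf_eq]
    constructor
    · intro hj
      by_contra hle
      push_neg at hle
      have hj0 : j ≠ 0 := fun h => h0 (h ▸ hj)
      have : -j ∈ S := by
        have := hn (-j - 1).toNat
        rwa [show ((-j - 1).toNat : ℤ) + 1 = -j by omega] at this
      exact hdisj j hj this
    · intro hj
      have := hn (j - 1).toNat
      rwa [show ((j - 1).toNat : ℤ) + 1 = j by omega] at this
  rcases htri 1 with h | h | h
  · right
    have hS := claim {j : ℤ | -j ∈ T} (by simpa using h0)
      (fun j hj hj' => hdisj (-j) hj (by simpa using hj'))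
      (fun j k hj hk hne => by
        have := hadd (-j) (-k) hj hk (fun hc => hne (by omega))
        simpa [neg_add, add_comm] using this)
      (fun k => by
        rcases htri k with h' | h' | h'
        · right; right; simpa using h'
        · right; left; exact h'
        · left; simpa using h')
      (by simpa using h)
    ext j
    have := Set.ext_iff.mp hS (-j)
    simp only [Set.mem_setOf_eq, neg_neg] at this ⊢
    rw [this]
    omega
  · exact absurd h (by decide)
  · left
    exact claim T h0 hdisj hadd htri h

end WittAux

lemma mem_wtSpace {g : Type*} [LieRing g] [LieAlgebra ℂ g] {H : LieSubalgebra ℂ g}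
    {α : Module.Dual ℂ H} {v : g} :
    v ∈ wtSpace H α ↔ ∀ h : H, ⁅(h : g), v⁆ = α h • v := Iff.rfl

/-- If `(W, H, W₊, Q₊, σ)` is a Moody–Pianzola triangular decomposition of the
Witt algebra, then `H = ℂ L₀`, `W₊` is spanned by the `L_{-n}` (`n ≥ 1`) — up to
swapping `±` —, `Q₊ ≅ ℕ⁺` as additive semigroups, and `σ (L n) = λⁿ • L (-n)`
for some `λ ≠ 0`. -/
theorem witt_triangular_decomposition {W : Type*} [LieRing W] [LieAlgebra ℂ W]
    (L : Module.Basis ℤ ℂ W)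
    (hW : ∀ m n : ℤ, ⁅L m, L n⁆ = ((m - n : ℤ) : ℂ) • L (m + n))
    (Wp Wm H : LieSubalgebra ℂ W) (Q : AddSubsemigroup (Module.Dual ℂ H))
    (σ : W →ₗ[ℂ] W)
    (hp : Wp ≠ ⊥) (hm : Wm ≠ ⊥) (hH : H ≠ ⊥)
    (habel : ∀ x y : W, x ∈ H → y ∈ H → ⁅x, y⁆ = 0)
    (hsup : Wm.toSubmodule ⊔ H.toSubmodule ⊔ Wp.toSubmodule = ⊤)
    (hindep : ∀ a ∈ Wm, ∀ b ∈ H, ∀ c' ∈ Wp, a + b + c' = (0 : W) →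
      a = 0 ∧ b = 0 ∧ c' = 0)
    (htd1 : Wp.toSubmodule = ⨆ α ∈ (Q : Set (Module.Dual ℂ H)), wtSpace H α)
    (hanti : ∀ x y : W, σ ⁅x, y⁆ = ⁅σ y, σ x⁆) (hinv : ∀ x : W, σ (σ x) = x)
    (hmap : Wp.toSubmodule.map σ = Wm.toSubmodule) (hfix : ∀ x ∈ H, σ x = x)
    (htd3 : ∃ J : Set (Module.Dual ℂ H),
      LinearIndependent ℂ ((↑) : J → Module.Dual ℂ H) ∧
      AddSubsemigroup.closure J = Q) :
    H.toSubmodule = Submodule.span ℂ ({L 0} : Set W) ∧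
    ((Wp.toSubmodule = Submodule.span ℂ (Set.range fun n : ℕ => L (-(n + 1 : ℕ))) ∧
      Wm.toSubmodule = Submodule.span ℂ (Set.range fun n : ℕ => L ((n + 1 : ℕ)))) ∨
     (Wp.toSubmodule = Submodule.span ℂ (Set.range fun n : ℕ => L ((n + 1 : ℕ))) ∧
      Wm.toSubmodule = Submodule.span ℂ (Set.range fun n : ℕ => L (-(n + 1 : ℕ))))) ∧
    (∃ e : Q ≃ ℕ+, ∀ a b : Q, e (a + b) = e a + e b) ∧
    (∃ lam : ℂ, lam ≠ 0 ∧ ∀ n : ℤ, σ (L n) = lam ^ n • L (-n)) := by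
  classical
  -- Step A: for every `h ∈ H`, the eigenvectors of `ad h` span `W`.
  have hspanE : ∀ h ∈ H, (⊤ : Submodule ℂ W) ≤
      Submodule.span ℂ {v : W | ∃ μ : ℂ, ⁅h, v⁆ = μ • v} := by
    intro h hh
    rw [← hsup]
    refine sup_le (sup_le ?_ ?_) ?_
    · -- Wm
      rw [← hmap, htd1]
      simp only [Submodule.map_iSup]
      refine iSup₂_le fun α hα => ?_
      rintro _ ⟨v, hv, rfl⟩
      refine Submodule.subset_span ⟨-(α ⟨h, hh⟩), ?_⟩
      have h1 := hanti v h
      rw [hfix h hh] at h1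
      have h2 : ⁅v, h⁆ = -(α ⟨h, hh⟩ • v) := by
        rw [← lie_skew, hv ⟨h, hh⟩]
      rw [h2, map_neg, map_smul] at h1
      rw [← h1, neg_smul]
    · -- H
      intro x hx
      exact Submodule.subset_span ⟨0, by rw [habel h x hh hx, zero_smul]⟩
    · -- Wp
      rw [htd1]
      refine iSup₂_le fun α hα => ?_
      intro v hv
      exact Submodule.subset_span ⟨α ⟨h, hh⟩, hv ⟨h, hh⟩⟩
  have hHsub : ∀ h ∈ H, h = L.repr h 0 • L 0 :=
    fun h hh => WittAux.diag_mem_span L hW h (hspanE h hh)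
  -- L 0 ∈ H
  obtain ⟨h₁, hh₁H, hh₁0⟩ : ∃ h, h ∈ H ∧ h ≠ 0 := by
    by_contra hc
    push_neg at hc
    exact hH ((LieSubalgebra.eq_bot_iff H).mpr hc)
  have hrepr := hHsub h₁ hh₁H
  set c₁ := L.repr h₁ 0 with hc₁def
  have hc₁ : c₁ ≠ 0 := fun hz => hh₁0 (by rw [hrepr, hz, zero_smul])
  have hL0H : L 0 ∈ H := by
    have hkey : L 0 = c₁⁻¹ • h₁ := by
      rw [hrepr, smul_smul, inv_mul_cancel₀ hc₁, one_smul]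
    rw [hkey]
    exact H.smul_mem _ hh₁H
  have goal1 : H.toSubmodule = Submodule.span ℂ ({L 0} : Set W) := by
    apply le_antisymm
    · intro x hx
      have hx' : x ∈ H := hx
      rw [hHsub x hx']
      exact Submodule.smul_mem _ _ (Submodule.mem_span_singleton_self _)
    · rw [Submodule.span_le, Set.singleton_subset_iff]
      exact hL0H
  have hσL0 : σ (L 0) = L 0 := hfix _ hL0H
  -- σ sends L j to a multiple of L (-j)
  have hσL : ∀ j : ℤ, ∃ c : ℂ, c ≠ 0 ∧ σ (L j) = c • L (-j) := by
    intro j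
    have heig : ⁅L 0, σ (L j)⁆ = (j : ℂ) • σ (L j) := by
      have h1 := hanti (L j) (L 0)
      rw [hσL0] at h1
      have h2 : ⁅L j, L 0⁆ = (j : ℂ) • L j := by
        rw [hW j 0, add_zero, sub_zero]
      rw [h2, map_smul] at h1
      exact h1.symm
    have hrep := WittAux.eigen_int L hW (σ (L j)) j heig
    refine ⟨L.repr (σ (L j)) (-j), ?_, hrep⟩
    intro hz
    rw [hz, zero_smul] at hrep
    have : L j = 0 := by rw [← hinv (L j), hrep, map_zero]
    exact L.ne_zero j this
  -- the support set of Wp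
  set T : Set ℤ := {j : ℤ | L j ∈ Wp} with hTdef
  have hwtle : ∀ α ∈ (Q : Set (Module.Dual ℂ H)), wtSpace H α ≤ Wp.toSubmodule := by
    intro α hα
    rw [htd1]
    exact le_iSup₂ (f := fun α (_ : α ∈ (Q : Set (Module.Dual ℂ H))) => wtSpace H α) α hα
  have hWpT : Wp.toSubmodule = Submodule.span ℂ (L '' T) := by
    apply le_antisymm
    · rw [htd1]
      refine iSup₂_le fun α hα => ?_
      intro v hv
      have hv0 : ⁅L 0, v⁆ = (α ⟨L 0, hL0H⟩) • v := hv ⟨L 0, hL0H⟩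
      rcases WittAux.eigen_cases L hW v _ hv0 with rfl | ⟨m, cc, hcc, rfl⟩
      · exact Submodule.zero_mem _
      · have hvWp : cc • L m ∈ Wp.toSubmodule := hwtle α hα hv
        have hLm : L m ∈ Wp := by
          have h3 : cc⁻¹ • (cc • L m) ∈ Wp.toSubmodule := Submodule.smul_mem _ _ hvWp
          rwa [smul_smul, inv_mul_cancel₀ hcc, one_smul] at h3
        exact Submodule.smul_mem _ cc (Submodule.subset_span ⟨m, hLm, rfl⟩)
    · rw [Submodule.span_le]
      rintro _ ⟨j, hj, rfl⟩
      exact hj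
  have hWmT : Wm.toSubmodule = Submodule.span ℂ (L '' {j : ℤ | -j ∈ T}) := by
    rw [← hmap, hWpT, Submodule.map_span]
    apply le_antisymm
    · rw [Submodule.span_le]
      rintro _ ⟨_, ⟨j, hj, rfl⟩, rfl⟩
      obtain ⟨cc, hcc, hcs⟩ := hσL j
      rw [hcs]
      refine Submodule.smul_mem _ cc (Submodule.subset_span ⟨-j, ?_, rfl⟩)
      simpa using hj
    · rw [Submodule.span_le]
      rintro _ ⟨j, hj, rfl⟩
      obtain ⟨cc, hcc, hcs⟩ := hσL (-j)
      rw [neg_neg] at hcs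
      have : L j = cc⁻¹ • σ (L (-j)) := by
        rw [hcs, smul_smul, inv_mul_cancel₀ hcc, one_smul]
      rw [this]
      refine Submodule.smul_mem _ _ (Submodule.subset_span ⟨L (-j), ⟨-j, hj, rfl⟩, rfl⟩)
  have htri : ∀ k : ℤ, -k ∈ T ∨ k = 0 ∨ k ∈ T := by
    intro k
    have hk : L k ∈ (⊤ : Submodule ℂ W) := trivial
    rw [← hsup, hWmT, goal1, hWpT, ← Set.image_singleton, ← Submodule.span_union,
      ← Submodule.span_union, ← Set.image_union, ← Set.image_union] at hk
    have := L.mem_span_image.mp hk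
    have hkmem : k ∈ ({j : ℤ | -j ∈ T} ∪ {0} ∪ T) := by
      apply this
      simp [Finsupp.support_single_ne_zero]
    rcases hkmem with (h' | h') | h'
    · left; exact h'
    · right; left; simpa using h'
    · right; right; exact h'
  have hT0 : (0 : ℤ) ∉ T := by
    intro h0T
    have := hindep 0 (Wm.zero_mem) (L 0) hL0H (-(L 0)) (Wp.neg_mem h0T)
      (by abel)
    exact L.ne_zero 0 this.2.1
  have hdisj : ∀ j : ℤ, j ∈ T → -j ∈ T → False := by
    intro j hj hnj
    have hWmmem : L (-j) ∈ Wm := by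
      have : L (-j) ∈ Wm.toSubmodule := by
        rw [hWmT]
        exact Submodule.subset_span ⟨-j, by simpa using hj, rfl⟩
      exact this
    have := hindep (L (-j)) hWmmem 0 (H.zero_mem) (-(L (-j))) (Wp.neg_mem hnj)
      (by abel)
    exact L.ne_zero (-j) this.1
  have hadd : ∀ j k : ℤ, j ∈ T → k ∈ T → j ≠ k → j + k ∈ T := by
    intro j k hj hk hne
    have hbr : ⁅L j, L k⁆ ∈ Wp := Wp.lie_mem hj hk
    rw [hW j k] at hbr
    have hne0 : ((j - k : ℤ) : ℂ) ≠ 0 := by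
      rw [Int.cast_ne_zero]
      omega
    have h3 : ((j - k : ℤ) : ℂ)⁻¹ • (((j - k : ℤ) : ℂ) • L (j + k)) ∈ Wp :=
      Wp.smul_mem _ hbr
    rwa [smul_smul, inv_mul_cancel₀ hne0, one_smul] at h3
  -- T is the positives or the negatives
  have hsetpos : L '' {j : ℤ | 0 < j} = Set.range (fun n : ℕ => L ((n + 1 : ℕ))) := by
    ext x
    constructor
    · rintro ⟨j, hj, rfl⟩
      have hj' : 0 < j := hj
      refine ⟨(j - 1).toNat, ?_⟩
      show L (((j - 1).toNat + 1 : ℕ) : ℤ) = L j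
      congr 1
      omega
    · rintro ⟨n, rfl⟩
      exact ⟨((n + 1 : ℕ) : ℤ), by simp, rfl⟩
  have hsetneg : L '' {j : ℤ | j < 0} = Set.range (fun n : ℕ => L (-(n + 1 : ℕ))) := by
    ext x
    constructor
    · rintro ⟨j, hj, rfl⟩
      have hj' : j < 0 := hj
      refine ⟨(-j - 1).toNat, ?_⟩
      show L (-(((-j - 1).toNat + 1 : ℕ) : ℤ)) = L j
      congr 1
      omega
    · rintro ⟨n, rfl⟩
      exact ⟨-((n + 1 : ℕ) : ℤ), by simp; omega, rfl⟩
  have goal2 : (Wp.toSubmodule = Submodule.span ℂ (Set.range fun n : ℕ => L (-(n + 1 : ℕ))) ∧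
      Wm.toSubmodule = Submodule.span ℂ (Set.range fun n : ℕ => L ((n + 1 : ℕ)))) ∨
     (Wp.toSubmodule = Submodule.span ℂ (Set.range fun n : ℕ => L ((n + 1 : ℕ))) ∧
      Wm.toSubmodule = Submodule.span ℂ (Set.range fun n : ℕ => L (-(n + 1 : ℕ)))) := by
    rcases WittAux.int_sign_set T htri hT0 hdisj hadd with hTP | hTN
    · right
      constructor
      · rw [hWpT, hTP, hsetpos]
      · rw [hWmT, hTP]
        have : {j : ℤ | -j ∈ {j : ℤ | 0 < j}} = {j : ℤ | j < 0} := by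
          ext j; simp only [Set.mem_setOf_eq]; omega
        rw [this, hsetneg]
    · left
      constructor
      · rw [hWpT, hTN, hsetneg]
      · rw [hWmT, hTN]
        have : {j : ℤ | -j ∈ {j : ℤ | j < 0}} = {j : ℤ | 0 < j} := by
          ext j; simp only [Set.mem_setOf_eq]; omega
        rw [this, hsetpos]
  -- the Q ≃ ℕ+ part
  obtain ⟨J, hJind, hJQ⟩ := htd3
  have h₀ : (⟨L 0, hL0H⟩ : H) = ⟨L 0, hL0H⟩ := rfl
  set h0 : H := ⟨L 0, hL0H⟩ with h0def
  have hGen : ∀ x : H, ∃ cc : ℂ, x = cc • h0 := by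
    intro x
    have hx : (x : W) ∈ H.toSubmodule := x.2
    rw [goal1] at hx
    obtain ⟨cc, hcc⟩ := Submodule.mem_span_singleton.mp hx
    refine ⟨cc, Subtype.ext ?_⟩
    rw [← hcc]
    rfl
  have hval : ∀ α : Module.Dual ℂ H, α h0 = 0 → α = 0 := by
    intro α hα
    ext x
    obtain ⟨cc, rfl⟩ := hGen x
    simp [map_smul, hα]
  have hQne : J.Nonempty := by
    rcases Set.eq_empty_or_nonempty J with rfl | hne
    · exfalso
      rw [AddSubsemigroup.closure_empty] at hJQ
      apply hp
      rw [LieSubalgebra.eq_bot_iff]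
      intro x hx
      have hx' : x ∈ Wp.toSubmodule := hx
      rw [htd1, ← hJQ] at hx'
      have : (((⊥ : AddSubsemigroup (Module.Dual ℂ H))) : Set (Module.Dual ℂ H)) = ∅ := rfl
      rw [this, iSup_emptyset] at hx'
      simpa using hx'
    · exact hne
  obtain ⟨β, hβJ⟩ := hQne
  have hβ0 : β ≠ 0 := hJind.ne_zero ⟨β, hβJ⟩
  have hβh0 : β h0 ≠ 0 := fun hz => hβ0 (hval β hz)
  have hJsingle : ∀ γ ∈ J, γ = β := by
    intro γ hγ
    by_contra hne
    have hrel : γ = (γ h0 * (β h0)⁻¹) • β := by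
      ext x
      obtain ⟨cc, rfl⟩ := hGen x
      simp only [map_smul, LinearMap.smul_apply, smul_eq_mul]
      field_simp
    have hlin := linearIndependent_iff.mp hJind
      (Finsupp.single ⟨γ, hγ⟩ 1 - Finsupp.single ⟨β, hβJ⟩ (γ h0 * (β h0)⁻¹))
    rw [map_sub, Finsupp.linearCombination_single, Finsupp.linearCombination_single,
      one_smul] at hlin
    have hz := hlin (sub_eq_zero_of_eq hrel)
    have := DFunLike.congr_fun hz ⟨γ, hγ⟩
    rw [Finsupp.sub_apply, Finsupp.single_eq_same, Finsupp.single_apply] at this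
    rw [if_neg (fun hc => hne (congrArg Subtype.val hc).symm)] at this
    simp at this
  have hJeq : J = {β} := Set.eq_singleton_iff_unique_mem.mpr ⟨hβJ, hJsingle⟩
  have hQβ : Q = AddSubsemigroup.closure {β} := by rw [← hJQ, hJeq]
  have hmemQ : ∀ x : Module.Dual ℂ H, x ∈ Q ↔ ∃ n : ℕ, 0 < n ∧ n • β = x := by
    intro x
    rw [hQβ]
    constructor
    · intro hx
      refine AddSubsemigroup.closure_induction ?_ ?_ hx
      · rintro y rfl
        exact ⟨1, one_pos, one_smul _ _⟩
      · rintro y z _ _ ⟨n, hn, rfl⟩ ⟨m, hm, rfl⟩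
        exact ⟨n + m, by omega, add_nsmul β n m⟩
    · rintro ⟨n, hn, rfl⟩
      induction n with
      | zero => exact absurd hn (lt_irrefl 0)
      | succ k ih =>
        rcases Nat.eq_zero_or_pos k with rfl | hk
        · rw [one_nsmul]
          exact AddSubsemigroup.subset_closure rfl
        · rw [succ_nsmul]
          exact AddSubsemigroup.add_mem _ (ih hk) (AddSubsemigroup.subset_closure rfl)
  have hβinj : ∀ n m : ℕ, n • β = m • β → n = m := by
    intro n m hnm
    have h1 : ((n : ℂ) • β) h0 = ((m : ℂ) • β) h0 := by
      rw [Nat.cast_smul_eq_nsmul, Nat.cast_smul_eq_nsmul, hnm]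
    simp only [LinearMap.smul_apply, smul_eq_mul] at h1
    have := mul_right_cancel₀ hβh0 h1
    exact_mod_cast this
  have goal3 : ∃ e : Q ≃ ℕ+, ∀ a b : Q, e (a + b) = e a + e b := by
    have fmem : ∀ n : ℕ+, (n : ℕ) • β ∈ Q := fun n => (hmemQ _).mpr ⟨n, n.2, rfl⟩
    set f : ℕ+ → Q := fun n => ⟨(n : ℕ) • β, fmem n⟩ with hfdef
    have finj : Function.Injective f := by
      intro n m hnm
      have := hβinj n m (congrArg Subtype.val hnm)
      exact PNat.coe_injective this
    have fsurj : Function.Surjective f := by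
      rintro ⟨q, hq⟩
      obtain ⟨n, hn, hnq⟩ := (hmemQ q).mp hq
      exact ⟨⟨n, hn⟩, Subtype.ext hnq⟩
    have fadd : ∀ n m : ℕ+, f (n + m) = f n + f m := by
      intro n m
      apply Subtype.ext
      show ((n + m : ℕ+) : ℕ) • β = (n : ℕ) • β + (m : ℕ) • β
      rw [PNat.add_coe, add_nsmul]
    set g := Equiv.ofBijective f ⟨finj, fsurj⟩ with hgdef
    refine ⟨g.symm, fun a b => ?_⟩
    apply g.injective
    rw [Equiv.apply_symm_apply]
    show a + b = f (g.symm a + g.symm b)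
    rw [fadd]
    show a + b = g (g.symm a) + g (g.symm b)
    rw [Equiv.apply_symm_apply, Equiv.apply_symm_apply]
  -- the σ part
  choose μ hμne hμspec using hσL
  have hμun : ∀ (j : ℤ) (cc : ℂ), σ (L j) = cc • L (-j) → cc = μ j := by
    intro j cc hcc
    have h1 : cc • L (-j) = μ j • L (-j) := by rw [← hcc, hμspec j]
    have h2 := congrArg (fun w => L.repr w (-j)) h1
    simpa using h2
  have hμ01 : μ 0 = 1 := by
    have := hμun 0 1 (by rw [hσL0, neg_zero, one_smul])
    exact this.symm
  have hmul : ∀ m n : ℤ, m ≠ n → μ (m + n) = μ m * μ n := by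
    intro m n hmn
    have h1 := hanti (L m) (L n)
    rw [hW m n, map_smul, hμspec (m + n), hμspec m, hμspec n, lie_smul, smul_lie,
      hW (-n) (-m), show -n + -m = -(m + n) by ring] at h1
    have h2 := congrArg (fun w => L.repr w (-(m + n))) h1
    simp only [map_smul, Finsupp.smul_apply, Module.Basis.repr_self, Finsupp.single_eq_same,
      smul_eq_mul, mul_one] at h2
    have hne0 : ((m - n : ℤ) : ℂ) ≠ 0 := by
      rw [Int.cast_ne_zero]; omega
    have h3 : ((m - n : ℤ) : ℂ) * μ (m + n) = ((m - n : ℤ) : ℂ) * (μ m * μ n) := by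
      rw [h2]
      push_cast
      ring
    exact mul_left_cancel₀ hne0 h3
  set lam : ℂ := μ 1 with hlamdef
  have hlam0 : lam ≠ 0 := hμne 1
  have hμm1 : μ (-1) = lam⁻¹ := by
    have h1 := hmul 1 (-1) (by decide)
    norm_num at h1
    rw [hμ01, ← hlamdef] at h1
    field_simp
    linear_combination -h1
  have hz : ∀ n : ℤ, μ n = lam ^ n := by
    intro n
    induction n using Int.induction_on with
    | zero => rw [hμ01, zpow_zero]
    | succ i ih =>
      rcases eq_or_ne (i : ℤ) 1 with hi | hi
      · rw [hi]
        have h1 := hmul 2 (-1) (by decide)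
        norm_num at h1
        rw [hμm1, ← hlamdef] at h1
        -- h1 : lam = μ 2 * lam⁻¹
        have h2 : μ 2 = lam * lam := by
          calc μ 2 = μ 2 * (lam⁻¹ * lam) := by rw [inv_mul_cancel₀ hlam0, mul_one]
            _ = (μ 2 * lam⁻¹) * lam := by ring
            _ = lam * lam := by rw [← h1]
        rw [show (1 : ℤ) + 1 = 2 by norm_num, h2, show (2 : ℤ) = 1 + 1 by norm_num,
          zpow_add_one₀ hlam0, zpow_one]
      · have h1 := hmul i 1 hi
        rw [h1, ih, zpow_add_one₀ hlam0]
    | pred i ih =>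
      rcases eq_or_ne (i : ℤ) 1 with hi | hi
      · rw [hi]
        have h1 := hmul (-2) 1 (by decide)
        norm_num at h1
        rw [hμm1, ← hlamdef] at h1
        -- h1 : lam⁻¹ = μ (-2) * lam
        have h2 : μ (-2) = lam⁻¹ * lam⁻¹ := by
          calc μ (-2) = (μ (-2) * lam) * lam⁻¹ := by
                rw [mul_assoc, mul_inv_cancel₀ hlam0, mul_one]
            _ = lam⁻¹ * lam⁻¹ := by rw [← h1]
        rw [show (-1 : ℤ) - 1 = -2 by norm_num, h2,
          show (-2 : ℤ) = -1 + -1 by norm_num, zpow_add₀ hlam0, zpow_neg, zpow_one]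
      · have h1 := hmul (-i) (-1) (by omega)
        rw [show -(i : ℤ) + -1 = -i - 1 by ring] at h1
        rw [h1, ih, hμm1, zpow_sub_one₀ hlam0]
  exact ⟨goal1, goal2, goal3, lam, hlam0, fun n => by rw [hμspec n, hz n]⟩
end

section
/- Let g be a Lie algebra with basis {x_1, x_2, …} and V a g-module. Suppose there is a nonzero v ∈ V with Σ_{i=1}^∞ ℂ x_i v = Σ_{i=1}^m ℂ x_i v for some m. Then W = Σ_{n_1,…,n_m ∈ ℤ₊} ℂ x_1^{n_1} x_2^{n_2} ⋯ x_m^{n_m} v is a g-submodule of V. -/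
/-- Iterated action of basis elements `x i` of a Lie algebra on a module
element, along a list of indices (leftmost index acts last). -/
def applySeq {g V : Type*} [LieRing g] [LieAlgebra ℂ g] [AddCommGroup V]
    [Module ℂ V] [LieRingModule g V] [LieModule ℂ g V] (x : ℕ → g) :
    List ℕ → V → V
  | [], v => v
  | i :: t, v => ⁅x i, applySeq x t v⁆

/-- Sorted lists with entries `< m`. -/
def okL (m : ℕ) (l : List ℕ) : Prop := l.Pairwise (· ≤ ·) ∧ ∀ a ∈ l, a < m

/-- The canonical sorted list with `n i` copies of `i`. -/
def canonL (m : ℕ) (n : Fin m → ℕ) : List ℕ :=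
  (List.ofFn fun i : Fin m => List.replicate (n i) (i : ℕ)).flatten

lemma canonL_ok (m : ℕ) (n : Fin m → ℕ) : okL m (canonL m n) := by
  constructor
  · rw [canonL, List.pairwise_flatten]
    constructor
    · intro l hl
      rw [List.mem_ofFn] at hl
      obtain ⟨i, rfl⟩ := hl
      exact List.pairwise_replicate.mpr (Or.inr le_rfl)
    · rw [List.pairwise_ofFn]
      intro i j hij a ha b hb
      rw [List.eq_of_mem_replicate ha, List.eq_of_mem_replicate hb]
      exact_mod_cast hij.le
  · intro a ha
    rw [canonL, List.mem_flatten] at ha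
    obtain ⟨l, hl, hal⟩ := ha
    rw [List.mem_ofFn] at hl
    obtain ⟨i, rfl⟩ := hl
    rw [List.eq_of_mem_replicate hal]
    exact i.isLt

lemma count_canonL (m : ℕ) (n : Fin m → ℕ) (a : ℕ) :
    (canonL m n).count a = if h : a < m then n ⟨a, h⟩ else 0 := by
  rw [canonL, List.count_flatten, List.map_ofFn, List.sum_ofFn]
  have : ∀ i : Fin m, (List.count a ∘ fun i : Fin m => List.replicate (n i) (i : ℕ)) i
      = if i = (if h : a < m then (⟨a, h⟩ : Fin m) else i) then
          (if h : a < m then n i else 0) else 0 := by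
    intro i
    simp only [Function.comp_apply, List.count_replicate]
    by_cases h : a < m
    · simp only [h, dif_pos]
      by_cases hi : (i : ℕ) = a
      · have : i = (⟨a, h⟩ : Fin m) := Fin.ext hi
        simp [this, hi]
      · have : ¬ i = (⟨a, h⟩ : Fin m) := fun hh => hi (by rw [hh])
        simp [this, show ¬ ((i : ℕ) == a) = true by simpa using hi]
    · have : ¬ ((i : ℕ) == a) = true := by
        simp only [beq_iff_eq]
        omega
      simp [h, this]
  rw [Finset.sum_congr rfl fun i _ => this i]
  by_cases h : a < m
  · simp only [h, dif_pos]
    rw [Finset.sum_ite_eq']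
    simp
  · simp [h]

lemma exists_canonL {m : ℕ} {l : List ℕ} (hl : okL m l) : ∃ n, canonL m n = l := by
  refine ⟨fun i => l.count (i : ℕ), ?_⟩
  refine List.Perm.eq_of_pairwise' (canonL_ok m _).1 hl.1 ?_
  rw [List.perm_iff_count]
  intro a
  rw [count_canonL]
  by_cases h : a < m
  · simp [h]
  · rw [dif_neg h]
    symm
    rw [List.count_eq_zero]
    intro ha
    exact h (hl.2 a ha)

section Aux

variable {g V : Type*} [LieRing g] [LieAlgebra ℂ g] [AddCommGroup V]
    [Module ℂ V] [LieRingModule g V] [LieModule ℂ g V]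

lemma lie_mem_of_forall_basis (xb : Module.Basis ℕ ℂ g) (p : Submodule ℂ V) (u : V)
    (h : ∀ k, ⁅xb k, u⁆ ∈ p) (z : g) : ⁅z, u⁆ ∈ p := by
  have hz : z ∈ Submodule.span ℂ (Set.range ⇑xb) := by rw [xb.span_eq]; trivial
  induction hz using Submodule.span_induction with
  | mem w hw => obtain ⟨k, rfl⟩ := hw; exact h k
  | zero => rw [zero_lie]; exact p.zero_mem
  | add a b _ _ ha hb => rw [add_lie]; exact p.add_mem ha hb
  | smul c a _ ha => rw [smul_lie]; exact p.smul_mem c ha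

lemma lie_mem_of_mem_span (p : Submodule ℂ V) (z : g) (s : Set V) (u : V)
    (hu : u ∈ Submodule.span ℂ s) (h : ∀ w ∈ s, ⁅z, w⁆ ∈ p) : ⁅z, u⁆ ∈ p := by
  induction hu using Submodule.span_induction with
  | mem w hw => exact h w hw
  | zero => rw [lie_zero]; exact p.zero_mem
  | add a b _ _ ha hb => rw [lie_add]; exact p.add_mem ha hb
  | smul c a _ ha => rw [lie_smul]; exact p.smul_mem c ha

/-- Span of ordered monomials of length at most `N` applied to `v`. -/
def monSpan (x : ℕ → g) (v : V) (m N : ℕ) : Submodule ℂ V :=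
  Submodule.span ℂ ((fun l => applySeq x l v) '' {l | okL m l ∧ l.length ≤ N})

lemma monSpan_mono (x : ℕ → g) (v : V) (m : ℕ) {N N' : ℕ} (h : N ≤ N') :
    monSpan x v m N ≤ monSpan x v m N' :=
  Submodule.span_mono (Set.image_mono fun _ hl => ⟨hl.1, hl.2.trans h⟩)

lemma mem_monSpan (x : ℕ → g) (v : V) {m N : ℕ} {l : List ℕ}
    (hok : okL m l) (hlen : l.length ≤ N) : applySeq x l v ∈ monSpan x v m N :=
  Submodule.subset_span ⟨l, ⟨hok, hlen⟩, rfl⟩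

lemma key_lemma (xb : Module.Basis ℕ ℂ g) (v : V) (m : ℕ)
    (hspan : Submodule.span ℂ (Set.range fun i : ℕ => ⁅xb i, v⁆) =
      Submodule.span ℂ ((fun i : ℕ => ⁅xb i, v⁆) '' Set.Iio m)) :
    ∀ N j l, okL m l → l.length ≤ N →
      ⁅xb j, applySeq (fun i => xb i) l v⁆ ∈ monSpan (fun i => xb i) v m (N + 1) := by
  intro N
  induction N using Nat.strong_induction_on with
  | _ N ihN =>
  intro j
  induction j using Nat.strong_induction_on with
  | _ j ihj =>
  intro l hok hlen
  match l with
  | [] =>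
    have h1 : ⁅xb j, v⁆ ∈ Submodule.span ℂ (Set.range fun i : ℕ => ⁅xb i, v⁆) :=
      Submodule.subset_span ⟨j, rfl⟩
    rw [hspan] at h1
    have h2 : Submodule.span ℂ ((fun i : ℕ => ⁅xb i, v⁆) '' Set.Iio m) ≤
        monSpan (fun i => xb i) v m (N + 1) := by
      rw [Submodule.span_le]
      rintro _ ⟨i, hi, rfl⟩
      exact Submodule.subset_span ⟨[i],
        ⟨⟨List.pairwise_singleton _ i, fun a ha => by rw [List.mem_singleton] at ha; exact ha ▸ hi⟩, by simp⟩, rfl⟩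
    exact h2 h1
  | i0 :: t =>
    have ht : okL m t := ⟨hok.1.of_cons, fun a ha => hok.2 a (List.mem_cons_of_mem _ ha)⟩
    have hi0m : i0 < m := hok.2 i0 (List.mem_cons_self)
    have hi0le : ∀ a ∈ t, i0 ≤ a := (List.pairwise_cons.mp hok.1).1
    have hlt : List.length (i0 :: t) = t.length + 1 := rfl
    have hN1 : 1 ≤ N := by rw [hlt] at hlen; omega
    have htlen : t.length ≤ N - 1 := by rw [hlt] at hlen; omega
    by_cases hj : j ≤ i0
    · show applySeq (fun i => xb i) (j :: i0 :: t) v ∈ _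
      refine mem_monSpan _ _ ⟨?_, fun a ha => ?_⟩ ?_
      · rw [List.pairwise_cons]
        refine ⟨fun b hb => ?_, hok.1⟩
        rcases List.mem_cons.mp hb with rfl | hb
        · exact hj
        · exact hj.trans (hi0le b hb)
      · rcases List.mem_cons.mp ha with rfl | ha
        · exact lt_of_le_of_lt hj hi0m
        · exact hok.2 a ha
      · simp only [List.length_cons]
        rw [hlt] at hlen; omega
    · push_neg at hj
      have heq : ⁅xb j, applySeq (fun i => xb i) (i0 :: t) v⁆ =
          ⁅⁅xb j, xb i0⁆, applySeq (fun i => xb i) t v⁆ +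
          ⁅xb i0, ⁅xb j, applySeq (fun i => xb i) t v⁆⁆ :=
        leibniz_lie _ _ _
      rw [heq]
      refine Submodule.add_mem _ ?_ ?_
      · refine lie_mem_of_forall_basis xb _ _ (fun k => ?_) _
        have := ihN (N - 1) (by omega) k t ht htlen
        exact monSpan_mono _ _ _ (by omega) this
      · have h2 : ⁅xb j, applySeq (fun i => xb i) t v⁆ ∈
            monSpan (fun i => xb i) v m N := by
          have := ihN (N - 1) (by omega) j t ht htlen
          exact monSpan_mono _ _ _ (by omega) this
        refine lie_mem_of_mem_span _ (xb i0) _ _ h2 ?_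
        rintro _ ⟨l', ⟨hok', hlen'⟩, rfl⟩
        exact ihj i0 hj l' hok' hlen'

end Aux

/-- If `g` has basis `x₀, x₁, …`, `V` is a `g`-module and `v ≠ 0` satisfies
`Σᵢ ℂ xᵢ v = Σ_{i<m} ℂ xᵢ v`, then the span of the monomials
`x₀^{n₀} x₁^{n₁} ⋯ x_{m-1}^{n_{m-1}} v` is a `g`-submodule of `V`. -/
theorem span_of_monomials_is_submodule {g V : Type*} [LieRing g]
    [LieAlgebra ℂ g] [AddCommGroup V] [Module ℂ V] [LieRingModule g V]
    [LieModule ℂ g V]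
    (xb : Module.Basis ℕ ℂ g) (v : V) (hv : v ≠ 0) (m : ℕ)
    (hspan : Submodule.span ℂ (Set.range fun i : ℕ => ⁅xb i, v⁆) =
      Submodule.span ℂ ((fun i : ℕ => ⁅xb i, v⁆) '' Set.Iio m))
    (Wsub : Submodule ℂ V)
    (hW : Wsub = Submodule.span ℂ (Set.range fun n : Fin m → ℕ =>
      applySeq (fun i => xb i)
        ((List.ofFn fun i : Fin m => List.replicate (n i) (i : ℕ)).flatten) v)) :
    ∀ z : g, ∀ y ∈ Wsub, ⁅z, y⁆ ∈ Wsub := by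
  have hWeq : Wsub = Submodule.span ℂ
      ((fun l => applySeq (fun i => xb i) l v) '' {l | okL m l}) := by
    rw [hW]
    congr 1
    ext w
    constructor
    · rintro ⟨n, rfl⟩
      exact ⟨canonL m n, canonL_ok m n, rfl⟩
    · rintro ⟨l, hl, rfl⟩
      obtain ⟨n, rfl⟩ := exists_canonL hl
      exact ⟨n, rfl⟩
  intro z y hy
  rw [hWeq] at hy ⊢
  refine lie_mem_of_forall_basis xb _ y (fun k => ?_) z
  refine lie_mem_of_mem_span _ (xb k) _ y hy ?_
  rintro _ ⟨l, hl, rfl⟩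
  have := key_lemma xb v m hspan l.length k l hl le_rfl
  refine Submodule.span_le.mpr ?_ (this)
  rintro _ ⟨l', ⟨hok', _⟩, rfl⟩
  exact Submodule.subset_span ⟨l', hok', rfl⟩
end

section
/- Let ℂv_{λμ} be the one-dimensional L_0-module on which c acts by λ, h_0 by μ, and all d_i (i ≥ 1), h_i (i ≥ 1), and d_0 act by zero (consistently with the one-dimensionality). If μ = 0, then the element h_{−1} ⊗ v_{λμ} of the generalized Verma module Ind_0(ℂv_{λμ}) generates a nonzero proper submodule; in particular, for all m ∈ ℤ₊, d_m(h_{−1} ⊗ v_{λμ}) and h_m(h_{−1} ⊗ v_{λμ}) lie in ℂ(h_{−1} ⊗ v_{λμ}). -/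
universe u

namespace DHVAux

abbrev G : Type := Bool × ℕ

def toIdx : G → DHVIdx
  | (false, k) => DHVIdx.d (-((k : ℤ) + 1))
  | (true, k) => DHVIdx.h (-((k : ℤ) + 1))

noncomputable def brL : DHVIdx → DHVIdx → List (DHVIdx × ℂ)
  | DHVIdx.c, _ => []
  | DHVIdx.d m, DHVIdx.d n =>
      [(DHVIdx.d (m + n), ((m : ℂ) - n)), (DHVIdx.h (m + n), ((m : ℂ) - n)),
        (DHVIdx.c, if m + n = 0 then ((m : ℂ) ^ 3 - (m : ℂ)) / 12 else 0)]
  | DHVIdx.d m, DHVIdx.h n => [(DHVIdx.h (m + n), -(n : ℂ))]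
  | DHVIdx.d _, DHVIdx.c => []
  | DHVIdx.h m, DHVIdx.d n => [(DHVIdx.h (m + n), (m : ℂ))]
  | DHVIdx.h _, DHVIdx.h _ => []
  | DHVIdx.h _, DHVIdx.c => []

abbrev VF : Type := List G →₀ ℂ

noncomputable def A (lam : ℂ) : List G → DHVIdx → VF
  | l, DHVIdx.c => lam • Finsupp.single l 1
  | [], DHVIdx.d m =>
      if m < 0 then Finsupp.single [((false : Bool), (-m - 1).toNat)] 1 else 0
  | gg :: t, DHVIdx.d m =>
      if m < 0 then Finsupp.single (((false : Bool), (-m - 1).toNat) :: gg :: t) 1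
      else ((brL (DHVIdx.d m) (toIdx gg)).map fun p => p.2 • A lam t p.1).sum
        + Finsupp.mapDomain (gg :: ·) (A lam t (DHVIdx.d m))
  | [], DHVIdx.h m =>
      if m < 0 then Finsupp.single [((true : Bool), (-m - 1).toNat)] 1 else 0
  | gg :: t, DHVIdx.h m =>
      if m < 0 then Finsupp.single (((true : Bool), (-m - 1).toNat) :: gg :: t) 1
      else ((brL (DHVIdx.h m) (toIdx gg)).map fun p => p.2 • A lam t p.1).sum
        + Finsupp.mapDomain (gg :: ·) (A lam t (DHVIdx.h m))
  termination_by l _ => l.length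

def NN : DHVIdx → Prop
  | DHVIdx.d m => 0 ≤ m
  | DHVIdx.h m => 0 ≤ m
  | DHVIdx.c => False

lemma A_c (lam : ℂ) (l : List G) : A lam l DHVIdx.c = lam • Finsupp.single l 1 := by
  cases l <;> simp [A]

lemma A_neg (lam : ℂ) (l : List G) (uu : G) :
    A lam l (toIdx uu) = Finsupp.single (uu :: l) 1 := by
  obtain ⟨b, k⟩ := uu
  have h1 : (-(-((k : ℤ) + 1)) - 1).toNat = k := by omega
  have h2 : (-((k : ℤ) + 1)) < 0 := by omega
  cases b <;> cases l <;> simp only [toIdx] <;> rw [A] <;>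
    rw [if_pos h2, h1]

lemma A_nn_nil (lam : ℂ) (x : DHVIdx) (hx : NN x) : A lam [] x = 0 := by
  cases x with
  | d m => rw [A, if_neg (by simp only [NN] at hx; omega)]
  | h m => rw [A, if_neg (by simp only [NN] at hx; omega)]
  | c => exact absurd hx (by simp [NN])

lemma A_nn_cons (lam : ℂ) (x : DHVIdx) (hx : NN x) (gg : G) (t : List G) :
    A lam (gg :: t) x = ((brL x (toIdx gg)).map fun p => p.2 • A lam t p.1).sum
      + Finsupp.mapDomain (gg :: ·) (A lam t x) := by
  cases x with
  | d m => rw [A, if_neg (by simp only [NN] at hx; omega)]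
  | h m => rw [A, if_neg (by simp only [NN] at hx; omega)]
  | c => exact absurd hx (by simp [NN])

lemma idx_cases (x : DHVIdx) : NN x ∨ x = DHVIdx.c ∨ ∃ uu : G, x = toIdx uu := by
  cases x with
  | d m =>
    rcases le_or_gt 0 m with hm | hm
    · exact Or.inl hm
    · refine Or.inr (Or.inr ⟨(false, (-m - 1).toNat), ?_⟩)
      simp only [toIdx]
      congr 1
      omega
  | h m =>
    rcases le_or_gt 0 m with hm | hm
    · exact Or.inl hm
    · refine Or.inr (Or.inr ⟨(true, (-m - 1).toNat), ?_⟩)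
      simp only [toIdx]
      congr 1
      omega
  | c => exact Or.inr (Or.inl rfl)

section

variable {g : Type*} [LieRing g] [LieAlgebra ℂ g] (B : Module.Basis DHVIdx ℂ g) (lam : ℂ)

noncomputable def ev (L : List (DHVIdx × ℂ)) : g := (L.map fun p => p.2 • B p.1).sum

noncomputable def ActL (x : DHVIdx) : VF →ₗ[ℂ] VF :=
  Finsupp.linearCombination ℂ (fun l => A lam l x)

noncomputable def Phi : g →ₗ[ℂ] VF →ₗ[ℂ] VF := B.constr ℂ (ActL lam)

lemma ActL_single (x : DHVIdx) (l : List G) (cc : ℂ) :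
    ActL lam x (Finsupp.single l cc) = cc • A lam l x := by
  simp [ActL]

lemma ActL_neg_full (uu : G) (z : VF) :
    ActL lam (toIdx uu) z = Finsupp.mapDomain (uu :: ·) z := by
  induction z using Finsupp.induction_linear with
  | zero => simp
  | add f h hf hh => rw [map_add, hf, hh, Finsupp.mapDomain_add]
  | single l cc => rw [ActL_single, A_neg, ← Finsupp.mapDomain_single (f := (uu :: ·))]
                   simp [Finsupp.smul_single]

lemma ActL_c_full (z : VF) : ActL lam DHVIdx.c z = lam • z := by
  induction z using Finsupp.induction_linear with
  | zero => simp
  | add f h hf hh => rw [map_add, hf, hh, smul_add]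
  | single l cc => rw [ActL_single, A_c]; rw [smul_comm]; simp [Finsupp.smul_single]

lemma Phi_basis (i : DHVIdx) : Phi B lam (B i) = ActL lam i := B.constr_basis _ _ _

lemma listsum_apply (L : List (VF →ₗ[ℂ] VF)) (z : VF) :
    L.sum z = (L.map fun f => f z).sum := by
  induction L with
  | nil => simp
  | cons f L ih => simp [List.sum_cons, LinearMap.add_apply, ih]

lemma Phi_ev (L : List (DHVIdx × ℂ)) :
    Phi B lam (ev B L) = (L.map fun p => p.2 • ActL lam p.1).sum := by
  induction L with
  | nil => simp [ev]
  | cons p L ih =>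
      simp only [ev, List.map_cons, List.sum_cons] at *
      rw [map_add, map_smul, Phi_basis, ih]

variable (hbr : ∀ i j, ⁅B i, B j⁆ = ev B (brL i j))

lemma mk_hbr
    (hdd : ∀ m n : ℤ, ⁅B (DHVIdx.d m), B (DHVIdx.d n)⁆ =
      ((m - n : ℤ) : ℂ) • B (DHVIdx.d (m + n)) +
      ((m - n : ℤ) : ℂ) • B (DHVIdx.h (m + n)) +
      (if m + n = 0 then ((m : ℂ) ^ 3 - (m : ℂ)) / 12 else 0) • B DHVIdx.c)
    (hdh : ∀ m n : ℤ, ⁅B (DHVIdx.d m), B (DHVIdx.h n)⁆ =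
      ((-n : ℤ) : ℂ) • B (DHVIdx.h (m + n)))
    (hhh : ∀ m n : ℤ, ⁅B (DHVIdx.h m), B (DHVIdx.h n)⁆ = 0)
    (hcen : ∀ x : g, ⁅x, B DHVIdx.c⁆ = 0) :
    ∀ i j, ⁅B i, B j⁆ = ev B (brL i j) := by
  intro i j
  cases i with
  | c => rw [← neg_neg ⁅B DHVIdx.c, B j⁆, ← lie_skew, hcen, neg_zero]; simp [ev, brL]
  | d m =>
    cases j with
    | d n =>
        rw [hdd]
        simp only [ev, brL, List.map_cons, List.map_nil, List.sum_cons, List.sum_nil,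
          add_zero, add_assoc]
        push_cast
        ring_nf
    | h n =>
        rw [hdh]
        simp only [ev, brL, List.map_cons, List.map_nil, List.sum_cons, List.sum_nil, add_zero]
        push_cast
        ring_nf
    | c => rw [hcen]; simp [ev, brL]
  | h m =>
    cases j with
    | d n =>
        rw [← neg_neg ⁅B (DHVIdx.h m), B (DHVIdx.d n)⁆, ← lie_skew, hdh n m]
        simp only [ev, brL, List.map_cons, List.map_nil, List.sum_cons, List.sum_nil, add_zero]
        rw [add_comm n m]
        push_cast
        simp
    | h n => rw [hhh]; simp [ev, brL]
    | c => rw [hcen]; simp [ev, brL]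

noncomputable def Wgen (a b : G) (l₂ : List G) : VF :=
  Finsupp.single (a :: b :: l₂) 1 - Finsupp.single (b :: a :: l₂) 1
    - Phi B lam ⁅B (toIdx a), B (toIdx b)⁆ (Finsupp.single l₂ 1)

noncomputable def RR : Submodule ℂ VF := Submodule.span ℂ
  {z | ∃ l₁ a b l₂, z = Finsupp.mapDomain (l₁ ++ ·) (Wgen B lam a b l₂)}

lemma Wgen_mem (a b : G) (l₂ : List G) : Wgen B lam a b l₂ ∈ RR B lam := by
  apply Submodule.subset_span
  refine ⟨[], a, b, l₂, ?_⟩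
  have : ((· ++ ·) ([] : List G)) = (id : List G → List G) := by funext t; simp
  rw [show ((([] : List G) ++ ·)) = (id : List G → List G) from by funext t; simp,
    Finsupp.mapDomain_id]

lemma mapDomain_RR (gg : G) {z : VF} (hz : z ∈ RR B lam) :
    Finsupp.mapDomain (gg :: ·) z ∈ RR B lam := by
  induction hz using Submodule.span_induction with
  | mem z hzz =>
      obtain ⟨l₁, a, b, l₂, rfl⟩ := hzz
      rw [← Finsupp.mapDomain_comp]
      apply Submodule.subset_span
      exact ⟨gg :: l₁, a, b, l₂, by rw [show ((gg :: ·) ∘ (l₁ ++ ·)) = ((gg :: l₁) ++ ·) from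
        by funext t; simp]⟩
  | zero => rw [Finsupp.mapDomain_zero]; exact zero_mem _
  | add x y _ _ hx hy => rw [Finsupp.mapDomain_add]; exact add_mem hx hy
  | smul cc x _ hx => rw [Finsupp.mapDomain_smul]; exact Submodule.smul_mem _ _ hx

lemma basis_cases {P : g → Prop} (h0 : ∀ i, P (B i)) (hzero : P 0)
    (hadd : ∀ x y, P x → P y → P (x + y))
    (hsmul : ∀ (cc : ℂ) x, P x → P (cc • x)) (x : g) : P x := by
  have hx : x ∈ Submodule.span ℂ (Set.range B) := by rw [Module.Basis.span_eq]; trivial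
  induction hx using Submodule.span_induction with
  | mem z hz => obtain ⟨i, rfl⟩ := hz; exact h0 i
  | zero => exact hzero
  | add a b _ _ ha hb => exact hadd a b ha hb
  | smul cc a _ ha => exact hsmul cc a ha

include hbr in
lemma MF (x : DHVIdx) (gg : G) (z : VF) :
    ActL lam x (Finsupp.mapDomain (gg :: ·) z) - Phi B lam ⁅B x, B (toIdx gg)⁆ z
      - Finsupp.mapDomain (gg :: ·) (ActL lam x z) ∈ RR B lam := by
  induction z using Finsupp.induction_linear with
  | zero => simp only [Finsupp.mapDomain_zero, map_zero, sub_zero]; exact zero_mem _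
  | add f h hf hh =>
      have hm := add_mem hf hh
      convert hm using 1
      simp only [Finsupp.mapDomain_add, map_add]
      abel
  | single l cc =>
      have hone : ActL lam x (Finsupp.mapDomain (gg :: ·) (Finsupp.single l 1))
          - Phi B lam ⁅B x, B (toIdx gg)⁆ (Finsupp.single l 1)
          - Finsupp.mapDomain (gg :: ·) (ActL lam x (Finsupp.single l 1)) ∈ RR B lam := by
        rcases idx_cases x with hx | rfl | ⟨uu, rfl⟩
        · rw [Finsupp.mapDomain_single, ActL_single, ActL_single, one_smul, one_smul,
            A_nn_cons lam x hx gg l, hbr, Phi_ev, listsum_apply]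
          have hmm : (((brL x (toIdx gg)).map fun p => p.2 • ActL lam p.1).map
              fun f => f (Finsupp.single l 1)) = (brL x (toIdx gg)).map fun p => p.2 • A lam l p.1 := by
            rw [List.map_map]
            apply List.map_congr_left
            intro p _
            simp [ActL_single]
          rw [hmm]
          have h0 : ((brL x (toIdx gg)).map fun p => p.2 • A lam l p.1).sum
              + Finsupp.mapDomain (gg :: ·) (A lam l x)
              - ((brL x (toIdx gg)).map fun p => p.2 • A lam l p.1).sum
              - Finsupp.mapDomain (gg :: ·) (A lam l x) = 0 := by abel
          rw [h0]; exact zero_mem _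
        · rw [ActL_c_full, ActL_c_full, hbr]
          rw [show brL DHVIdx.c (toIdx gg) = [] from rfl]
          rw [show ev B ([] : List (DHVIdx × ℂ)) = 0 from by simp [ev], map_zero,
            LinearMap.zero_apply, Finsupp.mapDomain_smul]
          have h0 : lam • Finsupp.mapDomain (gg :: ·) (Finsupp.single l (1:ℂ)) - 0
              - lam • Finsupp.mapDomain (gg :: ·) (Finsupp.single l 1) = 0 := by abel
          rw [h0]; exact zero_mem _
        · rw [ActL_neg_full, ActL_neg_full]
          have h0 : Finsupp.mapDomain (uu :: ·) (Finsupp.mapDomain (gg :: ·) (Finsupp.single l (1:ℂ)))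
              - Phi B lam ⁅B (toIdx uu), B (toIdx gg)⁆ (Finsupp.single l 1)
              - Finsupp.mapDomain (gg :: ·) (Finsupp.mapDomain (uu :: ·) (Finsupp.single l 1))
              = Wgen B lam uu gg l := by
            rw [Wgen, Finsupp.mapDomain_single, Finsupp.mapDomain_single,
              Finsupp.mapDomain_single, Finsupp.mapDomain_single]
            abel
          rw [h0]; exact Wgen_mem B lam uu gg l
      have hsc : Finsupp.single l cc = cc • Finsupp.single l (1:ℂ) := by
        simp [Finsupp.smul_single]
      rw [hsc]
      simp only [Finsupp.mapDomain_smul, map_smul]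
      convert Submodule.smul_mem _ cc hone using 1
      simp only [smul_sub]

include hbr in
lemma PhiMaster (y : g) (gg : G) (z : VF) :
    Phi B lam y (Finsupp.mapDomain (gg :: ·) z) - Phi B lam ⁅y, B (toIdx gg)⁆ z
      - Finsupp.mapDomain (gg :: ·) (Phi B lam y z) ∈ RR B lam := by
  refine basis_cases B (P := fun y => Phi B lam y (Finsupp.mapDomain (gg :: ·) z)
    - Phi B lam ⁅y, B (toIdx gg)⁆ z
    - Finsupp.mapDomain (gg :: ·) (Phi B lam y z) ∈ RR B lam) ?_ ?_ ?_ ?_ y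
  · intro i
    rw [Phi_basis]
    exact MF B lam hbr i gg z
  · simp only [map_zero, zero_lie, LinearMap.zero_apply, sub_zero, Finsupp.mapDomain_zero,
      zero_sub, neg_zero]
    exact zero_mem _
  · intro p q hp hq
    have hm := add_mem hp hq
    convert hm using 1
    simp only [add_lie, map_add, LinearMap.add_apply, Finsupp.mapDomain_add]
    abel
  · intro cc p hp
    have hm := Submodule.smul_mem _ cc hp
    convert hm using 1
    simp only [smul_lie, map_smul, LinearMap.smul_apply, Finsupp.mapDomain_smul, smul_sub]

lemma WgenAll (a b : G) (z : VF) :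
    Finsupp.mapDomain (a :: ·) (Finsupp.mapDomain (b :: ·) z)
      - Finsupp.mapDomain (b :: ·) (Finsupp.mapDomain (a :: ·) z)
      - Phi B lam ⁅B (toIdx a), B (toIdx b)⁆ z ∈ RR B lam := by
  induction z using Finsupp.induction_linear with
  | zero => simp only [Finsupp.mapDomain_zero, map_zero, sub_zero, sub_zero]; exact zero_mem _
  | add f h hf hh =>
      have hm := add_mem hf hh
      convert hm using 1
      simp only [Finsupp.mapDomain_add, map_add]
      abel
  | single l cc =>
      have hsc : Finsupp.single l cc = cc • Finsupp.single l (1:ℂ) := by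
        simp [Finsupp.smul_single]
      rw [hsc]
      simp only [Finsupp.mapDomain_smul, map_smul]
      have hone : Finsupp.mapDomain (a :: ·) (Finsupp.mapDomain (b :: ·) (Finsupp.single l (1:ℂ)))
          - Finsupp.mapDomain (b :: ·) (Finsupp.mapDomain (a :: ·) (Finsupp.single l 1))
          - Phi B lam ⁅B (toIdx a), B (toIdx b)⁆ (Finsupp.single l 1) = Wgen B lam a b l := by
        rw [Wgen, Finsupp.mapDomain_single, Finsupp.mapDomain_single,
          Finsupp.mapDomain_single, Finsupp.mapDomain_single]
      rw [← smul_sub, ← smul_sub, hone]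
      exact Submodule.smul_mem _ cc (Wgen_mem B lam a b l)

lemma mapD_sub (f : List G → List G) (p q : VF) :
    Finsupp.mapDomain f (p - q) = Finsupp.mapDomain f p - Finsupp.mapDomain f q := by
  have h := map_sub (Finsupp.lmapDomain ℂ ℂ f) p q
  simpa [Finsupp.lmapDomain_apply] using h

include hbr in
lemma NegNeg (a b : G) : ∃ (uu vv : G) (s t : ℂ), 1 ≤ uu.2 ∧ 1 ≤ vv.2 ∧
    ⁅B (toIdx a), B (toIdx b)⁆ = s • B (toIdx uu) + t • B (toIdx vv) := by
  obtain ⟨ba, ka⟩ := a; obtain ⟨bb, kb⟩ := b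
  have hidx : -((ka : ℤ) + 1) + -((kb : ℤ) + 1) = -(((ka + kb + 1 : ℕ) : ℤ) + 1) := by
    push_cast; ring
  cases ba <;> cases bb
  · refine ⟨(false, ka + kb + 1), (true, ka + kb + 1), ((kb : ℂ) - ka), ((kb : ℂ) - ka),
      by omega, by omega, ?_⟩
    rw [hbr]
    simp only [toIdx, ev, brL, List.map_cons, List.map_nil, List.sum_cons, List.sum_nil,
      add_zero]
    rw [if_neg (by omega), zero_smul, add_zero, hidx]
    push_cast
    ring_nf
  · refine ⟨(true, ka + kb + 1), (true, 1), ((kb : ℂ) + 1), 0, by omega, by omega, ?_⟩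
    rw [hbr]
    simp only [toIdx, ev, brL, List.map_cons, List.map_nil, List.sum_cons, List.sum_nil,
      add_zero]
    rw [hidx, zero_smul, add_zero]
    push_cast
    ring_nf
  · refine ⟨(true, ka + kb + 1), (true, 1), (-(ka : ℂ) - 1), 0, by omega, by omega, ?_⟩
    rw [hbr]
    simp only [toIdx, ev, brL, List.map_cons, List.map_nil, List.sum_cons, List.sum_nil,
      add_zero]
    rw [hidx, zero_smul, add_zero]
    push_cast
    ring_nf
  · refine ⟨(true, 1), (true, 1), 0, 0, le_refl _, le_refl _, ?_⟩
    rw [hbr]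
    simp [ev, brL, toIdx]

include hbr in
lemma DescGen (l₁ : List G) (x : DHVIdx) (a b : G) (l₂ : List G) :
    ActL lam x (Finsupp.mapDomain (l₁ ++ ·) (Wgen B lam a b l₂)) ∈ RR B lam := by
  induction l₁ generalizing x with
  | nil =>
    rw [show ((([] : List G) ++ ·)) = (id : List G → List G) from by funext t; simp,
      Finsupp.mapDomain_id]
    rcases idx_cases x with hx | rfl | ⟨uu, rfl⟩
    · -- core case : x acts by straightening
      rw [← Phi_basis B lam x]
      obtain ⟨u, v, s, t, -, -, hab⟩ := NegNeg B hbr a b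
      set S0 : VF := Finsupp.single l₂ 1 with hS0
      have hPab : ∀ z : VF, Phi B lam ⁅B (toIdx a), B (toIdx b)⁆ z
          = s • Finsupp.mapDomain (u :: ·) z + t • Finsupp.mapDomain (v :: ·) z := by
        intro z
        rw [hab, map_add, map_smul, map_smul, LinearMap.add_apply, LinearMap.smul_apply,
          LinearMap.smul_apply, Phi_basis, Phi_basis, ActL_neg_full, ActL_neg_full]
      have hWgen : Wgen B lam a b l₂
          = Finsupp.mapDomain (a :: ·) (Finsupp.mapDomain (b :: ·) S0)
            - Finsupp.mapDomain (b :: ·) (Finsupp.mapDomain (a :: ·) S0)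
            - (s • Finsupp.mapDomain (u :: ·) S0 + t • Finsupp.mapDomain (v :: ·) S0) := by
        rw [Wgen, ← hPab, Finsupp.mapDomain_single, Finsupp.mapDomain_single,
          Finsupp.mapDomain_single, Finsupp.mapDomain_single]
      have m1 := PhiMaster B lam hbr (B x) a (Finsupp.mapDomain (b :: ·) S0)
      have m2 := PhiMaster B lam hbr (B x) b (Finsupp.mapDomain (a :: ·) S0)
      have m3 := PhiMaster B lam hbr (B x) b S0
      have m4 := PhiMaster B lam hbr (B x) a S0
      have m5 := PhiMaster B lam hbr ⁅B x, B (toIdx a)⁆ b S0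
      have m6 := PhiMaster B lam hbr ⁅B x, B (toIdx b)⁆ a S0
      have m7 := PhiMaster B lam hbr (B x) u S0
      have m8 := PhiMaster B lam hbr (B x) v S0
      have mW' := WgenAll B lam a b (Phi B lam (B x) S0)
      rw [hPab (Phi B lam (B x) S0)] at mW'
      have m3' := mapDomain_RR B lam a m3
      rw [mapD_sub, mapD_sub] at m3'
      have m4' := mapDomain_RR B lam b m4
      rw [mapD_sub, mapD_sub] at m4'
      have hJ : ⁅⁅B x, B (toIdx a)⁆, B (toIdx b)⁆
          = s • ⁅B x, B (toIdx u)⁆ + t • ⁅B x, B (toIdx v)⁆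
            + ⁅⁅B x, B (toIdx b)⁆, B (toIdx a)⁆ := by
        have e1 : ⁅B x, ⁅B (toIdx a), B (toIdx b)⁆⁆
            = ⁅⁅B x, B (toIdx a)⁆, B (toIdx b)⁆ + ⁅B (toIdx a), ⁅B x, B (toIdx b)⁆⁆ :=
          leibniz_lie _ _ _
        have e2 : ⁅B x, ⁅B (toIdx a), B (toIdx b)⁆⁆
            = s • ⁅B x, B (toIdx u)⁆ + t • ⁅B x, B (toIdx v)⁆ := by
          rw [hab, lie_add, lie_smul, lie_smul]
        have e3 : ⁅B (toIdx a), ⁅B x, B (toIdx b)⁆⁆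
            = -⁅⁅B x, B (toIdx b)⁆, B (toIdx a)⁆ := (lie_skew _ _).symm
        rw [e2, e3] at e1
        rw [e1]
        abel
      have hJP : Phi B lam ⁅⁅B x, B (toIdx a)⁆, B (toIdx b)⁆ S0
          = s • Phi B lam ⁅B x, B (toIdx u)⁆ S0 + t • Phi B lam ⁅B x, B (toIdx v)⁆ S0
            + Phi B lam ⁅⁅B x, B (toIdx b)⁆, B (toIdx a)⁆ S0 := by
        rw [hJ]
        simp only [map_add, map_smul, LinearMap.add_apply, LinearMap.smul_apply]
      rw [hWgen, map_sub, map_sub, map_add, map_smul, map_smul]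
      have comb := add_mem (sub_mem (sub_mem (sub_mem (add_mem (sub_mem (add_mem
        (sub_mem m1 m2) m5) m6) m3') m4')
        (Submodule.smul_mem _ s m7)) (Submodule.smul_mem _ t m8)) mW'
      convert comb using 1
      rw [hJP]
      module
    · rw [ActL_c_full]
      exact Submodule.smul_mem _ _ (Wgen_mem B lam a b l₂)
    · rw [ActL_neg_full]
      exact mapDomain_RR B lam uu (Wgen_mem B lam a b l₂)
  | cons gg l₁ ih =>
    have hsplit : Finsupp.mapDomain ((gg :: l₁) ++ ·) (Wgen B lam a b l₂)
        = Finsupp.mapDomain (gg :: ·) (Finsupp.mapDomain (l₁ ++ ·) (Wgen B lam a b l₂)) := by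
      rw [← Finsupp.mapDomain_comp]
      rfl
    rw [hsplit]
    set z := Finsupp.mapDomain (l₁ ++ ·) (Wgen B lam a b l₂) with hz
    have h1 := MF B lam hbr x gg z
    have h2 : ∀ y : g, Phi B lam y z ∈ RR B lam := by
      intro y
      refine basis_cases B (P := fun y => Phi B lam y z ∈ RR B lam) ?_ ?_ ?_ ?_ y
      · intro i; rw [Phi_basis]; exact ih i
      · simp only [map_zero, LinearMap.zero_apply]; exact zero_mem _
      · intro p q hp hq
        simp only [map_add, LinearMap.add_apply]; exact add_mem hp hq
      · intro cc p hp
        simp only [map_smul, LinearMap.smul_apply]; exact Submodule.smul_mem _ _ hp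
    have h3 : Finsupp.mapDomain (gg :: ·) (ActL lam x z) ∈ RR B lam :=
      mapDomain_RR B lam gg (ih x)
    have hrw : ActL lam x (Finsupp.mapDomain (gg :: ·) z)
        = (ActL lam x (Finsupp.mapDomain (gg :: ·) z) - Phi B lam ⁅B x, B (toIdx gg)⁆ z
            - Finsupp.mapDomain (gg :: ·) (ActL lam x z))
          + Phi B lam ⁅B x, B (toIdx gg)⁆ z + Finsupp.mapDomain (gg :: ·) (ActL lam x z) := by
      abel
    rw [hrw]
    exact add_mem (add_mem h1 (h2 _)) h3

include hbr in
lemma ActL_RR (x : DHVIdx) {z : VF} (hz : z ∈ RR B lam) : ActL lam x z ∈ RR B lam := by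
  induction hz using Submodule.span_induction with
  | mem z hzz =>
      obtain ⟨l₁, a, b, l₂, rfl⟩ := hzz
      exact DescGen B lam hbr l₁ x a b l₂
  | zero => rw [map_zero]; exact zero_mem _
  | add p q _ _ hp hq => rw [map_add]; exact add_mem hp hq
  | smul cc p _ hp => rw [map_smul]; exact Submodule.smul_mem _ _ hp

noncomputable def rho (x : DHVIdx) : (VF ⧸ RR B lam) →ₗ[ℂ] (VF ⧸ RR B lam) :=
  Submodule.mapQ _ _ (ActL lam x) (fun _ hz => ActL_RR B lam hbr x hz)

noncomputable def rhog : g →ₗ[ℂ] (VF ⧸ RR B lam) →ₗ[ℂ] (VF ⧸ RR B lam) :=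
  B.constr ℂ (rho B lam hbr)

lemma rho_mk (x : DHVIdx) (z : VF) :
    rho B lam hbr x (Submodule.Quotient.mk z) = Submodule.Quotient.mk (ActL lam x z) := by
  simp [rho, Submodule.mapQ_apply]

lemma rhog_basis (i : DHVIdx) : rhog B lam hbr (B i) = rho B lam hbr i :=
  B.constr_basis _ _ _

lemma rhog_mk (y : g) (z : VF) :
    rhog B lam hbr y (Submodule.Quotient.mk z) = Submodule.Quotient.mk (Phi B lam y z) := by
  refine basis_cases B (P := fun y => rhog B lam hbr y (Submodule.Quotient.mk z)
    = Submodule.Quotient.mk (Phi B lam y z)) ?_ ?_ ?_ ?_ y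
  · intro i; rw [rhog_basis, rho_mk, Phi_basis]
  · simp only [map_zero, LinearMap.zero_apply, Submodule.Quotient.mk_zero]
  · intro p q hp hq
    simp only [map_add, LinearMap.add_apply, hp, hq, Submodule.Quotient.mk_add]
  · intro cc p hp
    simp only [map_smul, LinearMap.smul_apply, hp, Submodule.Quotient.mk_smul]

lemma rhog_c (v : VF ⧸ RR B lam) : rhog B lam hbr (B DHVIdx.c) v = lam • v := by
  obtain ⟨z, rfl⟩ := Submodule.Quotient.mk_surjective _ v
  rw [rhog_basis, rho_mk, ActL_c_full, Submodule.Quotient.mk_smul]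

include hbr in
lemma br_c_left (j : DHVIdx) : ⁅B DHVIdx.c, B j⁆ = 0 := by
  rw [hbr]; simp [ev, brL]

include hbr in
lemma br_c_right (i : DHVIdx) : ⁅B i, B DHVIdx.c⁆ = 0 := by
  cases i <;> (rw [hbr]; simp [ev, brL])

include hbr in
lemma AnnNil (i j : DHVIdx) (hi : NN i) (hj : NN j) :
    Phi B lam ⁅B i, B j⁆ (Finsupp.single ([] : List G) 1) = 0 := by
  cases i with
  | c => exact absurd hi (by simp [NN])
  | d m =>
    cases j with
    | c => exact absurd hj (by simp [NN])
    | d n =>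
      simp only [NN] at hi hj
      rw [hbr, Phi_ev, listsum_apply]
      simp only [brL, List.map_cons, List.map_nil, List.sum_cons, List.sum_nil, add_zero,
        LinearMap.smul_apply, ActL_single, one_smul]
      rw [A_nn_nil lam (DHVIdx.d (m + n)) (by simp [NN]; omega),
        A_nn_nil lam (DHVIdx.h (m + n)) (by simp [NN]; omega), A_c]
      have hite : (if m + n = 0 then ((m : ℂ) ^ 3 - (m : ℂ)) / 12 else 0) = 0 := by
        split
        · have hm : m = 0 := by omega
          subst hm; norm_num
        · rfl
      rw [hite]
      simp
    | h n =>
      simp only [NN] at hi hj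
      rw [hbr, Phi_ev, listsum_apply]
      simp only [brL, List.map_cons, List.map_nil, List.sum_cons, List.sum_nil, add_zero,
        LinearMap.smul_apply, ActL_single, one_smul]
      rw [A_nn_nil lam (DHVIdx.h (m + n)) (by simp [NN]; omega)]
      simp
  | h m =>
    cases j with
    | c => exact absurd hj (by simp [NN])
    | d n =>
      simp only [NN] at hi hj
      rw [hbr, Phi_ev, listsum_apply]
      simp only [brL, List.map_cons, List.map_nil, List.sum_cons, List.sum_nil, add_zero,
        LinearMap.smul_apply, ActL_single, one_smul]
      rw [A_nn_nil lam (DHVIdx.h (m + n)) (by simp [NN]; omega)]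
      simp
    | h n =>
      rw [hbr, Phi_ev, listsum_apply]
      simp [brL]

lemma dagger (y : g) (uu : G) (v : VF ⧸ RR B lam) :
    rhog B lam hbr y (rhog B lam hbr (B (toIdx uu)) v)
      = rhog B lam hbr ⁅y, B (toIdx uu)⁆ v + rhog B lam hbr (B (toIdx uu)) (rhog B lam hbr y v) := by
  obtain ⟨z, rfl⟩ := Submodule.Quotient.mk_surjective _ v
  rw [rhog_basis, rho_mk, ActL_neg_full, rhog_mk, rhog_mk, rhog_mk, rho_mk, ActL_neg_full,
    ← Submodule.Quotient.mk_add, Submodule.Quotient.eq]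
  have hm := PhiMaster B lam hbr y uu z
  convert hm using 1
  abel

lemma KEY (l : List G) (x y : g) :
    rhog B lam hbr ⁅x, y⁆ (Submodule.Quotient.mk (Finsupp.single l 1))
      = rhog B lam hbr x (rhog B lam hbr y (Submodule.Quotient.mk (Finsupp.single l 1)))
        - rhog B lam hbr y (rhog B lam hbr x (Submodule.Quotient.mk (Finsupp.single l 1))) := by
  induction l generalizing x y with
  | nil =>
    set v : VF ⧸ RR B lam := Submodule.Quotient.mk (Finsupp.single ([] : List G) 1) with hv
    have hb : ∀ i j : DHVIdx, rhog B lam hbr ⁅B i, B j⁆ v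
        = rhog B lam hbr (B i) (rhog B lam hbr (B j) v)
          - rhog B lam hbr (B j) (rhog B lam hbr (B i) v) := by
      intro i j
      rcases idx_cases j with hj | rfl | ⟨uu, rfl⟩
      · rcases idx_cases i with hi | rfl | ⟨ww, rfl⟩
        · have hiv : rhog B lam hbr (B i) v = 0 := by
            rw [hv, rhog_basis, rho_mk, ActL_single, one_smul, A_nn_nil lam i hi,
              Submodule.Quotient.mk_zero]
          have hjv : rhog B lam hbr (B j) v = 0 := by
            rw [hv, rhog_basis, rho_mk, ActL_single, one_smul, A_nn_nil lam j hj,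
              Submodule.Quotient.mk_zero]
          rw [hv, rhog_mk, AnnNil B lam hbr i j hi hj, Submodule.Quotient.mk_zero]
          rw [← hv, hiv, hjv, map_zero, map_zero, sub_zero]
        · rw [br_c_left B hbr j, map_zero, LinearMap.zero_apply]
          simp only [rhog_c B lam hbr, map_smul]
          simp
        · rw [← lie_skew, map_neg, LinearMap.neg_apply, dagger B lam hbr (B j) ww v]
          abel
      · rw [br_c_right B hbr i, map_zero, LinearMap.zero_apply]
        simp only [rhog_c B lam hbr, map_smul]
        simp
      · rw [dagger B lam hbr (B i) uu v]
        abel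
    refine basis_cases B (P := fun x => ∀ y : g, rhog B lam hbr ⁅x, y⁆ v
      = rhog B lam hbr x (rhog B lam hbr y v) - rhog B lam hbr y (rhog B lam hbr x v))
      ?_ ?_ ?_ ?_ x y
    · intro i
      refine basis_cases B (P := fun y => rhog B lam hbr ⁅B i, y⁆ v
        = rhog B lam hbr (B i) (rhog B lam hbr y v)
          - rhog B lam hbr y (rhog B lam hbr (B i) v)) ?_ ?_ ?_ ?_
      · intro j; exact hb i j
      · simp only [lie_zero, map_zero, LinearMap.zero_apply, sub_zero]
      · intro p q hp hq
        simp only [lie_add, map_add, LinearMap.add_apply, hp, hq]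
        abel
      · intro cc p hp
        simp only [lie_smul, map_smul, LinearMap.smul_apply, hp, smul_sub]
    · intro y'
      simp only [zero_lie, map_zero, LinearMap.zero_apply, sub_zero, zero_sub, neg_zero]
    · intro p q hp hq y'
      simp only [add_lie, map_add, LinearMap.add_apply, hp, hq]
      abel
    · intro cc p hp y'
      simp only [smul_lie, map_smul, LinearMap.smul_apply, hp, smul_sub]
  | cons uu tl ih =>
    have hmk : (Submodule.Quotient.mk (Finsupp.single (uu :: tl) 1) : VF ⧸ RR B lam)
        = rhog B lam hbr (B (toIdx uu)) (Submodule.Quotient.mk (Finsupp.single tl 1)) := by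
      rw [rhog_basis, rho_mk, ActL_single, one_smul, A_neg]
    rw [hmk]
    set v : VF ⧸ RR B lam := Submodule.Quotient.mk (Finsupp.single tl 1) with hv
    have hL : ⁅⁅x, y⁆, B (toIdx uu)⁆
        = ⁅x, ⁅y, B (toIdx uu)⁆⁆ - ⁅y, ⁅x, B (toIdx uu)⁆⁆ := by
      rw [leibniz_lie x y (B (toIdx uu))]
      abel
    rw [dagger B lam hbr ⁅x, y⁆ uu v, dagger B lam hbr y uu v, dagger B lam hbr x uu v,
      map_add, map_add, dagger B lam hbr x uu (rhog B lam hbr y v),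
      dagger B lam hbr y uu (rhog B lam hbr x v), hL, map_sub, LinearMap.sub_apply,
      ih x y, ih x ⁅y, B (toIdx uu)⁆, ih y ⁅x, B (toIdx uu)⁆, map_sub]
    abel

lemma KEYall (x y : g) (v : VF ⧸ RR B lam) :
    rhog B lam hbr ⁅x, y⁆ v
      = rhog B lam hbr x (rhog B lam hbr y v) - rhog B lam hbr y (rhog B lam hbr x v) := by
  obtain ⟨z, rfl⟩ := Submodule.Quotient.mk_surjective _ v
  induction z using Finsupp.induction_linear with
  | zero => simp only [Submodule.Quotient.mk_zero, map_zero, sub_zero]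
  | add f h hf hh =>
      rw [show (Submodule.Quotient.mk (f + h) : VF ⧸ RR B lam)
        = Submodule.Quotient.mk f + Submodule.Quotient.mk h from rfl]
      simp only [map_add]
      rw [hf, hh]
      abel
  | single l cc =>
      have hsc : Finsupp.single l cc = cc • Finsupp.single l (1:ℂ) := by
        simp [Finsupp.smul_single]
      rw [hsc, Submodule.Quotient.mk_smul, map_smul, map_smul, map_smul, map_smul, map_smul,
        KEY B lam hbr l x y, smul_sub]

include hbr in
lemma Wgen_singles (a b : G) (l₂ : List G) : ∃ (u v : G) (s t : ℂ), 1 ≤ u.2 ∧ 1 ≤ v.2 ∧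
    Wgen B lam a b l₂ = Finsupp.single (a :: b :: l₂) 1 - Finsupp.single (b :: a :: l₂) 1
      - (s • Finsupp.single (u :: l₂) 1 + t • Finsupp.single (v :: l₂) 1) := by
  obtain ⟨u, v, s, t, hu, hv, hab⟩ := NegNeg B hbr a b
  refine ⟨u, v, s, t, hu, hv, ?_⟩
  rw [Wgen, hab, map_add, map_smul, map_smul, LinearMap.add_apply, LinearMap.smul_apply,
    LinearMap.smul_apply, Phi_basis, Phi_basis, ActL_neg_full, ActL_neg_full,
    Finsupp.mapDomain_single, Finsupp.mapDomain_single]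

include hbr in
lemma Wgen_eval_nil (a b : G) (l₂ : List G) : Wgen B lam a b l₂ [] = 0 := by
  obtain ⟨u, v, s, t, hu, hv, he⟩ := Wgen_singles B lam hbr a b l₂
  rw [he]
  simp [Finsupp.single_apply]

include hbr in
lemma Wgen_eval_h (a b : G) (l₂ : List G) : Wgen B lam a b l₂ [((true : Bool), 0)] = 0 := by
  obtain ⟨u, v, s, t, hu, hv, he⟩ := Wgen_singles B lam hbr a b l₂
  have hune : ¬(u :: l₂ = [((true : Bool), 0)]) := by
    intro hcon
    rw [List.cons_eq_cons] at hcon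
    rw [hcon.1] at hu
    simp at hu
  have hvne : ¬(v :: l₂ = [((true : Bool), 0)]) := by
    intro hcon
    rw [List.cons_eq_cons] at hcon
    rw [hcon.1] at hv
    simp at hv
  rw [he]
  simp [Finsupp.single_apply, hune, hvne]

include hbr in
lemma RR_eval_nil {z : VF} (hz : z ∈ RR B lam) : z [] = 0 := by
  induction hz using Submodule.span_induction with
  | mem r hr =>
      obtain ⟨l₁, a, b, l₂, rfl⟩ := hr
      cases l₁ with
      | nil =>
          rw [show ((([] : List G) ++ ·)) = (id : List G → List G) from by funext t; simp,
            Finsupp.mapDomain_id]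
          exact Wgen_eval_nil B lam hbr a b l₂
      | cons gg l₁ =>
          rw [Finsupp.mapDomain_notin_range]
          simp
  | zero => simp
  | add p q _ _ hp hq => simp [hp, hq]
  | smul cc p _ hp => simp [hp]

include hbr in
lemma RR_eval_h {z : VF} (hz : z ∈ RR B lam) : z [((true : Bool), 0)] = 0 := by
  induction hz using Submodule.span_induction with
  | mem r hr =>
      obtain ⟨l₁, a, b, l₂, rfl⟩ := hr
      match l₁ with
      | [] =>
          rw [show ((([] : List G) ++ ·)) = (id : List G → List G) from by funext t; simp,
            Finsupp.mapDomain_id]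
          exact Wgen_eval_h B lam hbr a b l₂
      | [gg] =>
          by_cases hgg : gg = ((true : Bool), 0)
          · subst hgg
            have hinj : Function.Injective (fun t : List G => [((true : Bool), 0)] ++ t) :=
              fun s t hst => List.append_cancel_left hst
            exact (Finsupp.mapDomain_apply hinj (Wgen B lam a b l₂) []).trans
              (Wgen_eval_nil B lam hbr a b l₂)
          · rw [Finsupp.mapDomain_notin_range]
            rintro ⟨t, ht⟩
            simp only [List.cons_append, List.nil_append] at ht
            rw [List.cons_eq_cons] at ht
            exact hgg ht.1
      | gg :: gg' :: l₁ =>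
          rw [Finsupp.mapDomain_notin_range]
          rintro ⟨t, ht⟩
          simp at ht
  | zero => simp
  | add p q _ _ hp hq => simp [hp, hq]
  | smul cc p _ hp => simp [hp]

noncomputable def spanH : Submodule ℂ VF := Submodule.span ℂ
  {z | ∃ l : List G, (∃ p ∈ l, p.1 = true) ∧ z = Finsupp.single l 1}

lemma singleH_mem (k : ℕ) (t : List G) :
    Finsupp.single ((((true : Bool), k)) :: t) (1 : ℂ) ∈ spanH :=
  Submodule.subset_span ⟨((true, k)) :: t, ⟨((true : Bool), k), List.mem_cons_self, rfl⟩, rfl⟩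

lemma cons_spanH (gg : G) {z : VF} (hz : z ∈ spanH) :
    Finsupp.mapDomain (gg :: ·) z ∈ spanH := by
  induction hz using Submodule.span_induction with
  | mem r hr =>
      obtain ⟨l, ⟨p, hp, hpt⟩, rfl⟩ := hr
      rw [Finsupp.mapDomain_single]
      exact Submodule.subset_span ⟨gg :: l, ⟨p, List.mem_cons_of_mem _ hp, hpt⟩, rfl⟩
  | zero => rw [Finsupp.mapDomain_zero]; exact zero_mem _
  | add p q _ _ hp hq => rw [Finsupp.mapDomain_add]; exact add_mem hp hq
  | smul cc p _ hp => rw [Finsupp.mapDomain_smul]; exact Submodule.smul_mem _ _ hp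

lemma consH_all (k : ℕ) (z : VF) :
    Finsupp.mapDomain ((((true : Bool), k)) :: ·) z ∈ spanH := by
  induction z using Finsupp.induction_linear with
  | zero => rw [Finsupp.mapDomain_zero]; exact zero_mem _
  | add f h hf hh => rw [Finsupp.mapDomain_add]; exact add_mem hf hh
  | single l cc =>
      rw [Finsupp.mapDomain_single,
        show (Finsupp.single ((((true : Bool), k)) :: l) cc : VF)
          = cc • Finsupp.single ((((true : Bool), k)) :: l) 1 from by simp [Finsupp.smul_single]]
      exact Submodule.smul_mem _ _ (singleH_mem k l)

lemma A_neg_h (j : ℤ) (hj : j < 0) (t : List G) :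
    A lam t (DHVIdx.h j) = Finsupp.single (((true : Bool), (-j - 1).toNat) :: t) 1 := by
  have he : DHVIdx.h j = toIdx ((true : Bool), (-j - 1).toNat) := by
    simp only [toIdx]
    congr 1
    omega
  rw [he, A_neg]

lemma Hpos (t : List G) : ∀ m : ℤ, 0 ≤ m → A lam t (DHVIdx.h m) ∈ spanH := by
  induction t with
  | nil =>
      intro m hm
      rw [A_nn_nil lam _ (by simpa [NN] using hm)]
      exact zero_mem _
  | cons gg tt ih =>
      intro m hm
      rw [A_nn_cons lam _ (by simpa [NN] using hm : NN (DHVIdx.h m)) gg tt]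
      refine add_mem ?_ (cons_spanH gg (ih m hm))
      obtain ⟨bg, kg⟩ := gg
      cases bg
      · simp only [toIdx, brL, List.map_cons, List.map_nil, List.sum_cons, List.sum_nil,
          add_zero]
        refine Submodule.smul_mem _ _ ?_
        rcases le_or_gt 0 (m + -((kg : ℤ) + 1)) with hj | hj
        · exact ih _ hj
        · rw [A_neg_h lam _ hj]
          exact singleH_mem _ _
      · simp only [toIdx, brL, List.map_nil, List.sum_nil]
        exact zero_mem _

lemma HH (t : List G) : ∀ x : DHVIdx, (∃ p ∈ t, p.1 = true) → A lam t x ∈ spanH := by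
  induction t with
  | nil => intro x hx; simp at hx
  | cons gg tt ih =>
      intro x hx
      rcases idx_cases x with hxn | rfl | ⟨uu, rfl⟩
      · rw [A_nn_cons lam x hxn gg tt]
        obtain ⟨bg, kg⟩ := gg
        cases bg
        · have htt : ∃ p ∈ tt, p.1 = true := by
            obtain ⟨p, hp, hpt⟩ := hx
            rcases List.mem_cons.1 hp with rfl | hmem
            · simp at hpt
            · exact ⟨p, hmem, hpt⟩
          refine add_mem ?_ (cons_spanH _ (ih x htt))
          apply list_sum_mem
          intro w hw
          simp only [List.mem_map] at hw
          obtain ⟨p, hp, rfl⟩ := hw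
          exact Submodule.smul_mem _ _ (ih p.1 htt)
        · refine add_mem ?_ (consH_all kg _)
          cases x with
          | d m =>
              simp only [toIdx, brL, List.map_cons, List.map_nil, List.sum_cons, List.sum_nil,
                add_zero]
              refine Submodule.smul_mem _ _ ?_
              rcases le_or_gt 0 (m + -((kg : ℤ) + 1)) with hj | hj
              · exact Hpos lam tt _ hj
              · rw [A_neg_h lam _ hj]
                exact singleH_mem _ _
          | h m =>
              simp only [toIdx, brL, List.map_nil, List.sum_nil]
              exact zero_mem _
          | c => exact absurd hxn (by simp [NN])
      · rw [A_c]
        exact Submodule.smul_mem _ _ (Submodule.subset_span ⟨gg :: tt, hx, rfl⟩)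
      · rw [A_neg]
        obtain ⟨p, hp, hpt⟩ := hx
        refine Submodule.subset_span ⟨uu :: gg :: tt, ⟨p, ?_, hpt⟩, rfl⟩
        simp only [List.mem_cons] at hp ⊢
        tauto

lemma ActL_spanH (x : DHVIdx) {z : VF} (hz : z ∈ spanH) : ActL lam x z ∈ spanH := by
  induction hz using Submodule.span_induction with
  | mem r hr =>
      obtain ⟨l, hl, rfl⟩ := hr
      rw [ActL_single, one_smul]
      exact HH lam l x hl
  | zero => rw [map_zero]; exact zero_mem _
  | add p q _ _ hp hq => rw [map_add]; exact add_mem hp hq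
  | smul cc p _ hp => rw [map_smul]; exact Submodule.smul_mem _ _ hp

lemma Phi_spanH (y : g) {z : VF} (hz : z ∈ spanH) : Phi B lam y z ∈ spanH := by
  refine basis_cases B (P := fun y => Phi B lam y z ∈ spanH) ?_ ?_ ?_ ?_ y
  · intro i; rw [Phi_basis]; exact ActL_spanH lam i hz
  · simp only [map_zero, LinearMap.zero_apply]; exact zero_mem _
  · intro p q hp hq; simp only [map_add, LinearMap.add_apply]; exact add_mem hp hq
  · intro cc p hp; simp only [map_smul, LinearMap.smul_apply]; exact Submodule.smul_mem _ _ hp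

end

end DHVAux

namespace DHVAux

section
variable {g : Type*} [LieRing g] [LieAlgebra ℂ g] (B : Module.Basis DHVIdx ℂ g) (lam : ℂ)
variable (hbr : ∀ i j, ⁅B i, B j⁆ = ev B (brL i j))

lemma spanH_eval_nil {z : VF} (hz : z ∈ spanH) : z [] = 0 := by
  induction hz using Submodule.span_induction with
  | mem r hr =>
      obtain ⟨l, ⟨p, hp, -⟩, rfl⟩ := hr
      have hl : l ≠ [] := by rintro rfl; simp at hp
      rw [Finsupp.single_apply_eq_zero.2 (fun hcon => absurd hcon.symm hl)]
  | zero => simp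
  | add p q _ _ hp hq => simp [hp, hq]
  | smul cc p _ hp => simp [hp]

include hbr in
lemma v0_not_SV : (Submodule.Quotient.mk (Finsupp.single ([] : List G) 1) : VF ⧸ RR B lam)
    ∉ Submodule.map (RR B lam).mkQ spanH := by
  rintro ⟨z, hz, hzeq⟩
  rw [Submodule.mkQ_apply] at hzeq
  have hz2 : z - Finsupp.single [] 1 ∈ RR B lam := (Submodule.Quotient.eq _).1 hzeq
  have h1 := RR_eval_nil B lam hbr hz2
  have h2 := spanH_eval_nil hz
  rw [Finsupp.sub_apply, h2, Finsupp.single_eq_same] at h1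
  norm_num at h1

include hbr in
lemma hneg_ne_zero :
    (Submodule.Quotient.mk (Finsupp.single [((true : Bool), 0)] 1) : VF ⧸ RR B lam) ≠ 0 := by
  intro hcon
  rw [Submodule.Quotient.mk_eq_zero] at hcon
  have h1 := RR_eval_h B lam hbr hcon
  rw [Finsupp.single_eq_same] at h1
  norm_num at h1

end

/-- A bundled module over the abstract Lie algebra with a highest-weight-type vector. -/
structure HWRep {g : Type*} [LieRing g] [LieAlgebra ℂ g] (B : Module.Basis DHVIdx ℂ g) (lam : ℂ) where
  carrier : Type
  [instAdd : AddCommGroup carrier]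
  [instMod : Module ℂ carrier]
  [instLRM : LieRingModule g carrier]
  [instLM : LieModule ℂ g carrier]
  vec : carrier
  cond_c : ⁅B DHVIdx.c, vec⁆ = lam • vec
  cond_h0 : ⁅B (DHVIdx.h 0), vec⁆ = 0
  cond_d : ∀ i : ℕ, ⁅B (DHVIdx.d (i : ℤ)), vec⁆ = 0
  cond_h : ∀ i : ℕ, 1 ≤ i → ⁅B (DHVIdx.h (i : ℤ)), vec⁆ = 0

attribute [instance] HWRep.instAdd HWRep.instMod HWRep.instLRM HWRep.instLM

section
variable {g : Type*} [LieRing g] [LieAlgebra ℂ g] (B : Module.Basis DHVIdx ℂ g) (lam : ℂ)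
variable (hbr : ∀ i j, ⁅B i, B j⁆ = ev B (brL i j))

include hbr in
lemma reps_exist : ∃ X Y : HWRep B lam,
    ⁅B (DHVIdx.h (-1)), X.vec⁆ ≠ 0 ∧ Y.vec ≠ 0 ∧ ⁅B (DHVIdx.h (-1)), Y.vec⁆ = 0 := by
  letI : LieRingModule g (VF ⧸ RR B lam) :=
    { bracket := fun x v => rhog B lam hbr x v
      add_lie := fun x y v => by simp only [map_add, LinearMap.add_apply]
      lie_add := fun x u v => by simp only [map_add]
      leibniz_lie := fun x y v => by
        show rhog B lam hbr x (rhog B lam hbr y v)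
          = rhog B lam hbr ⁅x, y⁆ v + rhog B lam hbr y (rhog B lam hbr x v)
        rw [KEYall B lam hbr x y v]
        abel }
  letI : LieModule ℂ g (VF ⧸ RR B lam) :=
    { smul_lie := fun c x v => by
        show rhog B lam hbr (c • x) v = c • rhog B lam hbr x v
        rw [map_smul]
        rfl
      lie_smul := fun c x v => by
        show rhog B lam hbr x (c • v) = c • rhog B lam hbr x v
        rw [map_smul] }
  have hbrk : ∀ (x : g) (v : VF ⧸ RR B lam), ⁅x, v⁆ = rhog B lam hbr x v := fun _ _ => rfl
  set v0 : VF ⧸ RR B lam := Submodule.Quotient.mk (Finsupp.single ([] : List G) 1) with hv0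
  have hc0 : ⁅B DHVIdx.c, v0⁆ = lam • v0 := by
    rw [hbrk, rhog_c B lam hbr]
  have hd0 : ∀ i : ℕ, ⁅B (DHVIdx.d (i : ℤ)), v0⁆ = 0 := by
    intro i
    rw [hbrk, hv0, rhog_basis, rho_mk, ActL_single, one_smul,
      A_nn_nil lam _ (by simp [NN]), Submodule.Quotient.mk_zero]
  have hh0' : ∀ i : ℕ, ⁅B (DHVIdx.h (i : ℤ)), v0⁆ = 0 := by
    intro i
    rw [hbrk, hv0, rhog_basis, rho_mk, ActL_single, one_smul,
      A_nn_nil lam _ (by simp [NN]), Submodule.Quotient.mk_zero]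
  have hy0 : ⁅B (DHVIdx.h (-1)), v0⁆
      = Submodule.Quotient.mk (Finsupp.single [((true : Bool), 0)] 1) := by
    rw [hbrk, hv0, rhog_basis, rho_mk, ActL_single, one_smul,
      A_neg_h lam (-1) (by norm_num)]
    norm_num
  -- the Lie submodule generated by the h-monomials
  have hSVlie : ∀ (x : g) {m : VF ⧸ RR B lam},
      m ∈ Submodule.map (RR B lam).mkQ spanH → ⁅x, m⁆ ∈ Submodule.map (RR B lam).mkQ spanH := by
    intro x m hm
    obtain ⟨z, hz, rfl⟩ := hm
    rw [hbrk, Submodule.mkQ_apply, rhog_mk]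
    exact ⟨_, Phi_spanH B lam x hz, rfl⟩
  letI NSV : LieSubmodule ℂ g (VF ⧸ RR B lam) :=
    { Submodule.map (RR B lam).mkQ spanH with
      lie_mem := fun {x m} hm => hSVlie x hm }
  have hNSVmem : ∀ m : VF ⧸ RR B lam, m ∈ NSV ↔ m ∈ Submodule.map (RR B lam).mkQ spanH :=
    fun m => Iff.rfl
  set f2 := LieSubmodule.Quotient.mk' NSV with hf2
  set u2 := f2 v0 with hu2
  refine ⟨⟨VF ⧸ RR B lam, v0, hc0, by simpa using hh0' 0, hd0, fun i _ => hh0' i⟩,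
    ⟨(VF ⧸ RR B lam) ⧸ NSV, u2, ?_, ?_, ?_, ?_⟩, ?_, ?_, ?_⟩
  · rw [hu2, ← LieModuleHom.map_lie, hc0, map_smul]
  · rw [hu2, ← LieModuleHom.map_lie]
    have := hh0' 0
    simp only [Nat.cast_zero] at this
    rw [this, map_zero]
  · intro i
    rw [hu2, ← LieModuleHom.map_lie, hd0 i, map_zero]
  · intro i _
    rw [hu2, ← LieModuleHom.map_lie, hh0' i, map_zero]
  · show ⁅B (DHVIdx.h (-1)), v0⁆ ≠ 0
    rw [hy0]
    exact hneg_ne_zero B lam hbr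
  · show u2 ≠ 0
    rw [hu2, hf2]
    intro hcon
    rw [LieSubmodule.Quotient.mk_eq_zero] at hcon
    exact v0_not_SV B lam hbr ((hNSVmem v0).1 hcon)
  · show ⁅B (DHVIdx.h (-1)), u2⁆ = 0
    rw [hu2, ← LieModuleHom.map_lie, hy0, hf2, LieSubmodule.Quotient.mk_eq_zero]
    exact (hNSVmem _).2 ⟨_, singleH_mem 0 [], rfl⟩

end



section ULiftHelpers
universe v
variable {g : Type*} [LieRing g] [LieAlgebra ℂ g]
variable (N : Type) [AddCommGroup N] [Module ℂ N] [LieRingModule g N] [LieModule ℂ g N]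

noncomputable def uliftLRM : LieRingModule g (ULift.{v} N) where
  bracket x m := ⟨⁅x, m.down⁆⟩
  add_lie x y m := congrArg ULift.up (add_lie x y m.down)
  lie_add x m n := congrArg ULift.up (lie_add x m.down n.down)
  leibniz_lie x y m := congrArg ULift.up (leibniz_lie x y m.down)

noncomputable def uliftLM :
    @LieModule ℂ g (ULift.{v} N) _ _ _ _ _ (uliftLRM N) :=
  letI := uliftLRM (g := g) N
  { smul_lie := fun c x m => congrArg ULift.up (smul_lie c x m.down)
    lie_smul := fun c x m => congrArg ULift.up (lie_smul c x m.down) }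

end ULiftHelpers

end DHVAux

/-- In the generalized Verma module `Ind₀(ℂ v_{λμ})` (characterised by its
universal property: it is generated by `w` with `c w = λ w`, `h₀ w = μ w`,
`dᵢ w = 0` for `i ≥ 0` and `hᵢ w = 0` for `i ≥ 1`), if `μ = 0`, then
`y = h₋₁ w` satisfies `d_m y, h_m y ∈ ℂ y` for all `m ≥ 0`, and `y` generates
a nonzero proper submodule. -/
theorem dhv_generalized_verma_not_simple
 {g : Type*} [LieRing g] [LieAlgebra ℂ g]
    (B : Module.Basis DHVIdx ℂ g)
    (hdd : ∀ m n : ℤ, ⁅B (DHVIdx.d m), B (DHVIdx.d n)⁆ =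
      ((m - n : ℤ) : ℂ) • B (DHVIdx.d (m + n)) +
      ((m - n : ℤ) : ℂ) • B (DHVIdx.h (m + n)) +
      (if m + n = 0 then ((m : ℂ) ^ 3 - (m : ℂ)) / 12 else 0) • B DHVIdx.c)
    (hdh : ∀ m n : ℤ, ⁅B (DHVIdx.d m), B (DHVIdx.h n)⁆ =
      ((-n : ℤ) : ℂ) • B (DHVIdx.h (m + n)))
    (hhh : ∀ m n : ℤ, ⁅B (DHVIdx.h m), B (DHVIdx.h n)⁆ = 0)
    (hcen : ∀ x : g, ⁅x, B DHVIdx.c⁆ = 0)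
    (lam mu : ℂ)
    (M : Type u) [AddCommGroup M] [Module ℂ M] [LieRingModule g M]
    [LieModule ℂ g M] (w : M)
    (hcw : ⁅B DHVIdx.c, w⁆ = lam • w)
    (hh0w : ⁅B (DHVIdx.h 0), w⁆ = mu • w)
    (hdw : ∀ i : ℕ, ⁅B (DHVIdx.d i), w⁆ = 0)
    (hhw : ∀ i : ℕ, 1 ≤ i → ⁅B (DHVIdx.h i), w⁆ = 0)
    (huniv : ∀ (N : Type u) [AddCommGroup N] [Module ℂ N] [LieRingModule g N]
      [LieModule ℂ g N] (u : N),
      ⁅B DHVIdx.c, u⁆ = lam • u → ⁅B (DHVIdx.h 0), u⁆ = mu • u →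
      (∀ i : ℕ, ⁅B (DHVIdx.d i), u⁆ = 0) →
      (∀ i : ℕ, 1 ≤ i → ⁅B (DHVIdx.h i), u⁆ = 0) →
      ∃! f : M →ₗ⁅ℂ,g⁆ N, f w = u)
    (hmu : mu = 0) :
    (∀ m : ℕ, ∃ a : ℂ, ⁅B (DHVIdx.d m), ⁅B (DHVIdx.h (-1)), w⁆⁆ =
      a • ⁅B (DHVIdx.h (-1)), w⁆) ∧
    (∀ m : ℕ, ∃ b : ℂ, ⁅B (DHVIdx.h m), ⁅B (DHVIdx.h (-1)), w⁆⁆ =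
      b • ⁅B (DHVIdx.h (-1)), w⁆) ∧
    LieSubmodule.lieSpan ℂ g ({⁅B (DHVIdx.h (-1)), w⁆} : Set M) ≠ ⊥ ∧
    LieSubmodule.lieSpan ℂ g ({⁅B (DHVIdx.h (-1)), w⁆} : Set M) ≠ ⊤ := by
  subst hmu
  have hbr := DHVAux.mk_hbr B hdd hdh hhh hcen
  obtain ⟨X, Y, hX, hYne, hY0⟩ := DHVAux.reps_exist B lam hbr
  refine ⟨?_, ?_, ?_, ?_⟩
  · -- action of the d's on h₋₁ w
    intro m
    have hstep : ⁅B (DHVIdx.d (m : ℤ)), ⁅B (DHVIdx.h (-1)), w⁆⁆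
        = ((-(-1) : ℤ) : ℂ) • ⁅B (DHVIdx.h ((m : ℤ) + -1)), w⁆ := by
      rw [leibniz_lie, hdw m, lie_zero, add_zero, hdh, smul_lie]
    rcases Nat.eq_zero_or_pos m with rfl | hm
    · refine ⟨1, ?_⟩
      rw [hstep, show ((0 : ℕ) : ℤ) + -1 = (-1 : ℤ) from by norm_num]
      norm_num
    · refine ⟨0, ?_⟩
      rw [hstep, zero_smul]
      rcases Nat.lt_or_ge m 2 with hm2 | hm2
      · have hm1 : m = 1 := by omega
        subst hm1
        rw [show ((1 : ℕ) : ℤ) + -1 = (0 : ℤ) from by norm_num, hh0w, zero_smul, smul_zero]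
      · rw [show ((m : ℕ) : ℤ) + -1 = ((m - 1 : ℕ) : ℤ) from by push_cast; omega,
          hhw (m - 1) (by omega), smul_zero]
  · -- action of the h's on h₋₁ w
    intro m
    refine ⟨0, ?_⟩
    rw [leibniz_lie, hhh, zero_lie, zero_add, zero_smul]
    rcases Nat.eq_zero_or_pos m with rfl | hm
    · rw [show ((0 : ℕ) : ℤ) = (0 : ℤ) from by norm_num, hh0w, zero_smul, lie_zero]
    · rw [hhw m hm, lie_zero]
  · -- not ⊥
    letI := DHVAux.uliftLRM.{u} (g := g) X.carrier
    letI := DHVAux.uliftLM.{u} (g := g) X.carrier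
    have hcc : ⁅B DHVIdx.c, (⟨X.vec⟩ : ULift.{u} X.carrier)⁆
        = lam • (⟨X.vec⟩ : ULift.{u} X.carrier) := congrArg ULift.up X.cond_c
    have hh0c : ⁅B (DHVIdx.h 0), (⟨X.vec⟩ : ULift.{u} X.carrier)⁆
        = (0 : ℂ) • (⟨X.vec⟩ : ULift.{u} X.carrier) :=
      congrArg ULift.up (by rw [X.cond_h0, zero_smul])
    have hdc : ∀ i : ℕ, ⁅B (DHVIdx.d (i : ℤ)), (⟨X.vec⟩ : ULift.{u} X.carrier)⁆ = 0 :=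
      fun i => congrArg ULift.up (X.cond_d i)
    have hhc : ∀ i : ℕ, 1 ≤ i → ⁅B (DHVIdx.h (i : ℤ)), (⟨X.vec⟩ : ULift.{u} X.carrier)⁆ = 0 :=
      fun i hi => congrArg ULift.up (X.cond_h i hi)
    obtain ⟨f, hfw, -⟩ := huniv (ULift.{u} X.carrier) ⟨X.vec⟩ hcc hh0c hdc hhc
    intro hbot
    have hymem : ⁅B (DHVIdx.h (-1)), w⁆
        ∈ LieSubmodule.lieSpan ℂ g ({⁅B (DHVIdx.h (-1)), w⁆} : Set M) :=
      LieSubmodule.subset_lieSpan rfl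
    rw [hbot, LieSubmodule.mem_bot] at hymem
    have hfy : f ⁅B (DHVIdx.h (-1)), w⁆ = ⟨⁅B (DHVIdx.h (-1)), X.vec⁆⟩ := by
      rw [LieModuleHom.map_lie, hfw]
      rfl
    rw [hymem, map_zero] at hfy
    exact hX (congrArg ULift.down hfy.symm)
  · -- not ⊤
    letI := DHVAux.uliftLRM.{u} (g := g) Y.carrier
    letI := DHVAux.uliftLM.{u} (g := g) Y.carrier
    have hcc : ⁅B DHVIdx.c, (⟨Y.vec⟩ : ULift.{u} Y.carrier)⁆
        = lam • (⟨Y.vec⟩ : ULift.{u} Y.carrier) := congrArg ULift.up Y.cond_c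
    have hh0c : ⁅B (DHVIdx.h 0), (⟨Y.vec⟩ : ULift.{u} Y.carrier)⁆
        = (0 : ℂ) • (⟨Y.vec⟩ : ULift.{u} Y.carrier) :=
      congrArg ULift.up (by rw [Y.cond_h0, zero_smul])
    have hdc : ∀ i : ℕ, ⁅B (DHVIdx.d (i : ℤ)), (⟨Y.vec⟩ : ULift.{u} Y.carrier)⁆ = 0 :=
      fun i => congrArg ULift.up (Y.cond_d i)
    have hhc : ∀ i : ℕ, 1 ≤ i → ⁅B (DHVIdx.h (i : ℤ)), (⟨Y.vec⟩ : ULift.{u} Y.carrier)⁆ = 0 :=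
      fun i hi => congrArg ULift.up (Y.cond_h i hi)
    obtain ⟨f, hfw, -⟩ := huniv (ULift.{u} Y.carrier) ⟨Y.vec⟩ hcc hh0c hdc hhc
    intro htop
    have hfy : f ⁅B (DHVIdx.h (-1)), w⁆ = 0 := by
      rw [LieModuleHom.map_lie, hfw]
      exact congrArg ULift.up hY0
    have hle : LieSubmodule.lieSpan ℂ g ({⁅B (DHVIdx.h (-1)), w⁆} : Set M)
        ≤ LieSubmodule.comap f ⊥ := by
      rw [LieSubmodule.lieSpan_le]
      intro z hz
      rw [Set.mem_singleton_iff] at hz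
      subst hz
      rw [SetLike.mem_coe, LieSubmodule.mem_comap, LieSubmodule.mem_bot]
      exact hfy
    have hwmem : w ∈ LieSubmodule.lieSpan ℂ g ({⁅B (DHVIdx.h (-1)), w⁆} : Set M) := by
      rw [htop]; exact LieSubmodule.mem_top _
    have hwc := hle hwmem
    rw [LieSubmodule.mem_comap, LieSubmodule.mem_bot, hfw] at hwc
    exact hYne (congrArg ULift.down hwc)
end
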